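/- arXiv:1605.08180 — 8 statements merged into one kernel-verified Lean document; each statement's English description precedes it below -/
import Mathlib

section
/- A strongly connected directed signed graph that is structurally unbalanced contains a directed cycle with an odd number of negative edges (a negative cycle). -/
def StronglyConnected {α : Type*} (adj : α → α → Prop) : Prop :=
  ∀ a b, Relation.ReflTransGen adj a b

def StructurallyBalanced {V : Type*} (Ep En : V → V → Prop) : Prop :=
  ∃ f : V → Bool, (∀ i j, Ep i j → f i = f j) ∧ (∀ i j, En i j → f i ≠ f j)

/-- `SignedWalk Ep En i j s` : directed walk from `i` to `j` of sign `s`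
(`false` = odd number of negative edges). -/
inductive SignedWalk {V : Type*} (Ep En : V → V → Prop) : V → V → Bool → Prop
  | refl (i : V) : SignedWalk Ep En i i true
  | pos {i j k : V} {s : Bool} : Ep i j → SignedWalk Ep En j k s →
      SignedWalk Ep En i k s
  | neg {i j k : V} {s : Bool} : En i j → SignedWalk Ep En j k s →
      SignedWalk Ep En i k (!s)

lemma SignedWalk.trans {V : Type*} {Ep En : V → V → Prop} {i j k : V} {s t : Bool}
    (h1 : SignedWalk Ep En i j s) (h2 : SignedWalk Ep En j k t) :
    SignedWalk Ep En i k (s == t) := by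
  induction h1 with
  | refl i => simpa using h2
  | pos e _ ih => exact .pos e (ih h2)
  | @neg _ _ _ s' e _ ih =>
      have h := SignedWalk.neg e (ih h2)
      have hb : (!(s' == t)) = ((!s') == t) := by cases s' <;> cases t <;> rfl
      rwa [hb] at h

lemma exists_signedWalk {V : Type*} {Ep En : V → V → Prop} {a b : V}
    (h : Relation.ReflTransGen (fun i j => Ep i j ∨ En i j) a b) :
    ∃ s, SignedWalk Ep En a b s := by
  induction h with
  | refl => exact ⟨true, .refl a⟩
  | tail _ e ih =>
      obtain ⟨s, hs⟩ := ih
      cases e with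
      | inl ep => exact ⟨s == true, hs.trans (.pos ep (.refl _))⟩
      | inr en => exact ⟨s == false, hs.trans (.neg en (.refl _))⟩

/-- A strongly connected, structurally unbalanced signed digraph contains a
negative cycle (a closed directed walk with an odd number of negative edges). -/
theorem stmt3 {V : Type*} (Ep En : V → V → Prop)
    (hSC : StronglyConnected (fun i j => Ep i j ∨ En i j))
    (hUnbal : ¬ StructurallyBalanced Ep En) :
    ∃ v : V, SignedWalk Ep En v v false := by
  by_contra hcyc
  push_neg at hcyc
  apply hUnbal
  by_cases hV : IsEmpty V
  · exact ⟨fun _ => true, fun i j e => rfl, fun i j e => (hV.false i).elim⟩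
  obtain ⟨v0⟩ := not_isEmpty_iff.mp hV
  have hex : ∀ i, ∃ s, SignedWalk Ep En v0 i s := fun i => exists_signedWalk (hSC v0 i)
  have huniq : ∀ i s s', SignedWalk Ep En v0 i s → SignedWalk Ep En v0 i s' → s = s' := by
    intro i s s' h1 h2
    obtain ⟨t, ht⟩ := exists_signedWalk (hSC i v0)
    have c1 := h1.trans ht
    have c2 := h2.trans ht
    by_contra hne
    have hfalse : SignedWalk Ep En v0 v0 false := by
      cases s <;> cases s' <;> cases t <;> simp_all
    exact hcyc v0 hfalse
  set f : V → Bool := fun i => Classical.choose (hex i) with hf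
  have hspec : ∀ i, SignedWalk Ep En v0 i (f i) := fun i => Classical.choose_spec (hex i)
  refine ⟨f, ?_, ?_⟩
  · intro i j e
    have hw : SignedWalk Ep En v0 j (f i == true) :=
      (hspec i).trans (.pos e (.refl j))
    have := huniq j (f i == true) (f j) hw (hspec j)
    simpa using this
  · intro i j e
    have hw : SignedWalk Ep En v0 j (f i == false) :=
      (hspec i).trans ((SignedWalk.refl j).neg e)
    have hne := huniq j (f i == false) (f j) hw (hspec j)
    have : f j = !(f i) := by cases h : f i <;> simp_all
    simp [this]
end

section
/- Let P be an N×N real matrix such that |P| (the entrywise absolute value of P) is row-stochastic, P has positive diagonal entries, and the signed graph G(P) (with an edge (v_j,v_i) of sign sgn(p_ij) whenever p_ij ≠ 0, i≠j) is strongly connected and structurally balanced with at least one negative edge, with balanced bipartition V₁ = {v₁,...,v_m}, V₂ = {v_{m+1},...,v_N}. Let D = diag(d₁,...,d_N) with dᵢ = 1 for i ≤ m and dᵢ = −1 for i > m. Then DPD is a nonnegative row-stochastic matrix, and for every initial condition x(0), the solution of x(t+1) = P x(t) satisfies: x_i(t) converges to c·dᵢ for all i, where c = ξᵀ D x(0)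 and ξ is the normalized left Perron eigenvector of DPD. -/
open Matrix Filter Finset

namespace Stmt7Aux

variable {n : ℕ} [NeZero n]

noncomputable def mn (v : Fin n → ℝ) : ℝ := Finset.univ.inf' Finset.univ_nonempty v
noncomputable def mx (v : Fin n → ℝ) : ℝ := Finset.univ.sup' Finset.univ_nonempty v

lemma mn_le (v : Fin n → ℝ) (i : Fin n) : mn v ≤ v i := Finset.inf'_le _ (mem_univ i)
lemma le_mx (v : Fin n → ℝ) (i : Fin n) : v i ≤ mx v := Finset.le_sup' _ (mem_univ i)
lemma mn_le_mx (v : Fin n → ℝ) : mn v ≤ mx v :=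
  (mn_le v (Classical.arbitrary _)).trans (le_mx v _)
lemma le_mn (v : Fin n → ℝ) (c : ℝ) (h : ∀ i, c ≤ v i) : c ≤ mn v :=
  Finset.le_inf' _ _ fun i _ => h i
lemma mx_le (v : Fin n → ℝ) (c : ℝ) (h : ∀ i, v i ≤ c) : mx v ≤ c :=
  Finset.sup'_le _ _ fun i _ => h i

variable (Q : Matrix (Fin n) (Fin n) ℝ)

section basic
variable (hQ0 : ∀ i j, 0 ≤ Q i j) (hQ1 : ∀ i, ∑ j, Q i j = 1)
include hQ0 hQ1

lemma mulVec_le_mx (v : Fin n → ℝ) (i : Fin n) : (Q *ᵥ v) i ≤ mx v := by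
  have : ∑ j, Q i j * v j ≤ ∑ j, Q i j * mx v := by
    refine Finset.sum_le_sum fun j _ => ?_
    exact mul_le_mul_of_nonneg_left (le_mx v j) (hQ0 i j)
  simpa [mulVec, dotProduct, ← Finset.sum_mul, hQ1 i] using this

lemma mn_le_mulVec (v : Fin n → ℝ) (i : Fin n) : mn v ≤ (Q *ᵥ v) i := by
  have : ∑ j, Q i j * mn v ≤ ∑ j, Q i j * v j := by
    refine Finset.sum_le_sum fun j _ => ?_
    exact mul_le_mul_of_nonneg_left (mn_le v j) (hQ0 i j)
  simpa [mulVec, dotProduct, ← Finset.sum_mul, hQ1 i] using this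

end basic

/-- contraction of oscillation for a matrix with entries ≥ ε. -/
lemma osc_contract (ε : ℝ) (hε : 0 ≤ ε) (hQε : ∀ i j, ε ≤ Q i j)
    (hQ1 : ∀ i, ∑ j, Q i j = 1) (v : Fin n → ℝ) :
    mx (Q *ᵥ v) - mn (Q *ᵥ v) ≤ (1 - 2 * ε) * (mx v - mn v) := by
  have hQ0 : ∀ i j, 0 ≤ Q i j := fun i j => hε.trans (hQε i j)
  have hosc : 0 ≤ mx v - mn v := sub_nonneg.2 (mn_le_mx v)
  obtain ⟨j0, -, hj0⟩ := Finset.exists_mem_eq_inf' (Finset.univ_nonempty) v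
  obtain ⟨j1, -, hj1⟩ := Finset.exists_mem_eq_sup' (Finset.univ_nonempty) v
  have hub : ∀ i, (Q *ᵥ v) i ≤ mx v - ε * (mx v - mn v) := by
    intro i
    have h1 : ε * (mx v - mn v) ≤ ∑ j, Q i j * (mx v - v j) := by
      calc ε * (mx v - mn v) ≤ Q i j0 * (mx v - v j0) := by
            rw [← hj0]
            exact mul_le_mul (hQε i j0) le_rfl hosc (hQ0 i j0)
        _ ≤ ∑ j, Q i j * (mx v - v j) :=
            Finset.single_le_sum (fun j _ => mul_nonneg (hQ0 i j)
              (sub_nonneg.2 (le_mx v j))) (mem_univ j0)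
    have h2 : ∑ j, Q i j * (mx v - v j) = mx v - (Q *ᵥ v) i := by
      simp [mul_sub, Finset.sum_sub_distrib, ← Finset.sum_mul, hQ1 i, mulVec, dotProduct]
    linarith [h1, h2.symm ▸ h1]
  have hlb : ∀ i, mn v + ε * (mx v - mn v) ≤ (Q *ᵥ v) i := by
    intro i
    have h1 : ε * (mx v - mn v) ≤ ∑ j, Q i j * (v j - mn v) := by
      calc ε * (mx v - mn v) ≤ Q i j1 * (v j1 - mn v) := by
            rw [← hj1]
            exact mul_le_mul (hQε i j1) le_rfl hosc (hQ0 i j1)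
        _ ≤ ∑ j, Q i j * (v j - mn v) :=
            Finset.single_le_sum (fun j _ => mul_nonneg (hQ0 i j)
              (sub_nonneg.2 (mn_le v j))) (mem_univ j1)
    have h2 : ∑ j, Q i j * (v j - mn v) = (Q *ᵥ v) i - mn v := by
      simp [mul_sub, Finset.sum_sub_distrib, ← Finset.sum_mul, hQ1 i, mulVec, dotProduct]
    linarith [h2 ▸ h1]
  have h3 := mx_le _ _ hub
  have h4 := le_mn _ _ hlb
  nlinarith [h3, h4]

section pow
variable (hQ0 : ∀ i j, 0 ≤ Q i j) (hQ1 : ∀ i, ∑ j, Q i j = 1)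
include hQ0

lemma pow_nonneg' : ∀ t i j, 0 ≤ (Q ^ t) i j := by
  intro t
  induction t with
  | zero => intro i j; rw [pow_zero]; by_cases h : i = j <;> simp [one_apply, h]
  | succ t ih =>
    intro i j
    rw [pow_succ, mul_apply]
    exact Finset.sum_nonneg fun k _ => mul_nonneg (ih i k) (hQ0 k j)

include hQ1
lemma pow_rowsum : ∀ t i, ∑ j, (Q ^ t) i j = 1 := by
  intro t
  induction t with
  | zero => intro i; rw [pow_zero]; simp [one_apply]
  | succ t ih =>
    intro i
    rw [pow_succ]
    simp only [mul_apply]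
    rw [Finset.sum_comm]
    simp [← Finset.mul_sum, hQ1, ih i]

/-- Main convergence lemma: all rows of `Q ^ t` converge to a common limit. -/
lemma pow_tendsto (T : ℕ) (ε : ℝ) (hε : 0 < ε) (h2 : 2 * ε ≤ 1)
    (hT : ∀ i j, ε ≤ (Q ^ T) i j) (y : Fin n → ℝ) :
    ∃ c, ∀ i, Tendsto (fun t => (Q ^ t *ᵥ y) i) atTop (nhds c) := by
  set f : ℕ → Fin n → ℝ := fun t => Q ^ t *ᵥ y with hf
  have hstep : ∀ t, f (t + 1) = Q *ᵥ f t := by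
    intro t; rw [hf]; simp only [pow_succ']
    rw [← mulVec_mulVec]
  have hTstep : ∀ t, f (t + T) = Q ^ T *ᵥ f t := by
    intro t; rw [hf]; show Q ^ (t + T) *ᵥ y = _
    rw [add_comm, pow_add, ← mulVec_mulVec]
  have hmono : Monotone (fun t => mn (f t)) := by
    refine monotone_nat_of_le_succ fun t => ?_
    rw [hstep]
    exact le_mn _ _ fun i => mn_le_mulVec Q hQ0 hQ1 (f t) i
  have hanti : Antitone (fun t => mx (f t)) := by
    refine antitone_nat_of_succ_le fun t => ?_
    rw [hstep]
    exact mx_le _ _ fun i => mulVec_le_mx Q hQ0 hQ1 (f t) i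
  have hbdd : ∀ t, mn (f t) ≤ mx (f t) := fun t => mn_le_mx _
  have hbddA : BddAbove (Set.range fun t => mn (f t)) := by
    refine ⟨mx (f 0), ?_⟩
    rintro x ⟨t, rfl⟩
    exact (hbdd t).trans (hanti (Nat.zero_le t))
  have hbddB : BddBelow (Set.range fun t => mx (f t)) := by
    refine ⟨mn (f 0), ?_⟩
    rintro x ⟨t, rfl⟩
    exact (hmono (Nat.zero_le t)).trans (hbdd t)
  set c : ℝ := ⨆ t, mn (f t) with hc
  set c' : ℝ := ⨅ t, mx (f t) with hc'
  have hcm : Tendsto (fun t => mn (f t)) atTop (nhds c) := tendsto_atTop_ciSup hmono hbddA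
  have hcM : Tendsto (fun t => mx (f t)) atTop (nhds c') := tendsto_atTop_ciInf hanti hbddB
  have hcle : ∀ t, mn (f t) ≤ c := fun t => le_ciSup hbddA t
  have hc'le : ∀ t, c' ≤ mx (f t) := fun t => ciInf_le hbddB t
  -- oscillation at multiples of T
  set r : ℝ := 1 - 2 * ε with hr
  have hr0 : 0 ≤ r := by linarith
  have hr1 : r < 1 := by linarith
  have hosc : ∀ s : ℕ, mx (f (T * s)) - mn (f (T * s)) ≤ r ^ s * (mx y - mn y) := by
    intro s
    induction s with
    | zero => simp [hf, Matrix.one_mulVec]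
    | succ s ih =>
      have : T * (s + 1) = T * s + T := by ring
      rw [this, hTstep]
      calc mx (Q ^ T *ᵥ f (T * s)) - mn (Q ^ T *ᵥ f (T * s))
          ≤ r * (mx (f (T * s)) - mn (f (T * s))) :=
            osc_contract (Q ^ T) ε hε.le hT (pow_rowsum Q hQ0 hQ1 T) _
        _ ≤ r * (r ^ s * (mx y - mn y)) := mul_le_mul_of_nonneg_left ih hr0
        _ = r ^ (s + 1) * (mx y - mn y) := by ring
  have hdiff : c' - c ≤ 0 := by
    have hlim : Tendsto (fun s : ℕ => r ^ s * (mx y - mn y)) atTop (nhds 0) := by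
      simpa using (tendsto_pow_atTop_nhds_zero_of_lt_one hr0 hr1).mul_const (mx y - mn y)
    refine ge_of_tendsto hlim (Filter.Eventually.of_forall fun s => ?_)
    calc c' - c ≤ mx (f (T * s)) - mn (f (T * s)) :=
          sub_le_sub (hc'le _) (hcle _)
      _ ≤ r ^ s * (mx y - mn y) := hosc s
  have hle : c ≤ c' := by
    refine ciSup_le fun t => le_ciInf fun s => ?_
    rcases le_total t s with h | h
    · exact (hmono h).trans (hbdd s)
    · exact (hbdd t).trans (hanti h)
  have hcc : c' = c := le_antisymm (by linarith) hle
  refine ⟨c, fun i => ?_⟩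
  refine tendsto_of_tendsto_of_tendsto_of_le_of_le hcm (hcc ▸ hcM) ?_ ?_
  · exact fun t => mn_le _ i
  · exact fun t => le_mx _ i

end pow

lemma exists_pow_pos (hQ0 : ∀ i j, 0 ≤ Q i j) (hdiag : ∀ i, 0 < Q i i)
    (hSC : ∀ a b : Fin n, Relation.ReflTransGen (fun j i => i ≠ j ∧ Q i j ≠ 0) a b) :
    ∃ T, ∀ i j, 0 < (Q ^ T) i j := by
  have hstep : ∀ t i j, 0 < (Q ^ t) i j → 0 < (Q ^ (t + 1)) i j := by
    intro t i j h
    rw [pow_succ', mul_apply]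
    refine Finset.sum_pos' (fun k _ => mul_nonneg (hQ0 i k) (pow_nonneg' Q hQ0 t k j))
      ⟨i, mem_univ i, mul_pos (hdiag i) h⟩
  have hmono : ∀ i j t t', t ≤ t' → 0 < (Q ^ t) i j → 0 < (Q ^ t') i j := by
    intro i j t t' h hp
    induction t', h using Nat.le_induction with
    | base => exact hp
    | succ t' _ ih => exact hstep t' i j ih
  have hreach : ∀ i j : Fin n, ∃ t, 0 < (Q ^ t) i j := by
    intro i j
    induction hSC j i with
    | refl => exact ⟨0, by rw [pow_zero, one_apply_eq]; norm_num⟩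
    | tail hab hr ih =>
      obtain ⟨t, ht⟩ := ih
      refine ⟨t + 1, ?_⟩
      rw [pow_succ', mul_apply]
      refine Finset.sum_pos' (fun k _ => mul_nonneg (hQ0 _ k) (pow_nonneg' Q hQ0 t k j)) ?_
      refine ⟨_, mem_univ _, mul_pos (lt_of_le_of_ne (hQ0 _ _) (Ne.symm hr.2)) ht⟩
  choose f hf using fun p : Fin n × Fin n => hreach p.1 p.2
  refine ⟨Finset.univ.sup f, fun i j => ?_⟩
  exact hmono i j (f (i, j)) _ (Finset.le_sup (mem_univ (i, j))) (hf (i, j))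

end Stmt7Aux

open Stmt7Aux

theorem stmt7 {N m : ℕ} (hm : 0 < m) (hmN : m < N)
    (P : Matrix (Fin N) (Fin N) ℝ)
    -- |P| row-stochastic, positive diagonal
    (habs : ∀ i, ∑ j, |P i j| = 1) (hdiag : ∀ i, 0 < P i i)
    -- G(P) strongly connected (edge (v_j, v_i) whenever p_ij ≠ 0)
    (hSC : StronglyConnected (fun j i : Fin N => i ≠ j ∧ P i j ≠ 0))
    -- structurally balanced with bipartition V₁ = {i < m}, V₂ = {i ≥ m}
    (hbal : ∀ i j, i ≠ j → P i j ≠ 0 → (((i : ℕ) < m ↔ (j : ℕ) < m) ↔ 0 < P i j))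
    -- at least one negative edge
    (hneg : ∃ i j, P i j < 0) :
    (∀ i j, 0 ≤ (Matrix.diagonal (fun i : Fin N => if (i : ℕ) < m then (1 : ℝ) else -1)
        * P * Matrix.diagonal (fun i : Fin N => if (i : ℕ) < m then (1 : ℝ) else -1)) i j) ∧
    (∀ i, ∑ j, (Matrix.diagonal (fun i : Fin N => if (i : ℕ) < m then (1 : ℝ) else -1)
        * P * Matrix.diagonal (fun i : Fin N => if (i : ℕ) < m then (1 : ℝ) else -1)) i j = 1) ∧
    ∃ ξ : Fin N → ℝ, (∀ i, 0 ≤ ξ i) ∧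
      ξ ᵥ* (Matrix.diagonal (fun i : Fin N => if (i : ℕ) < m then (1 : ℝ) else -1)
        * P * Matrix.diagonal (fun i : Fin N => if (i : ℕ) < m then (1 : ℝ) else -1)) = ξ ∧
      ∑ i, ξ i = 1 ∧
      ∀ x0 : Fin N → ℝ, ∀ i : Fin N,
        Tendsto (fun t => (P ^ t *ᵥ x0) i) atTop
          (nhds ((ξ ⬝ᵥ (Matrix.diagonal (fun i : Fin N => if (i : ℕ) < m then (1 : ℝ) else -1) *ᵥ x0))
            * (if (i : ℕ) < m then 1 else -1))) := by
  have hN : 0 < N := hm.trans hmN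
  haveI : NeZero N := ⟨hN.ne'⟩
  set d : Fin N → ℝ := fun i : Fin N => if (i : ℕ) < m then (1 : ℝ) else -1 with hd
  set Q : Matrix (Fin N) (Fin N) ℝ := Matrix.diagonal d * P * Matrix.diagonal d with hQdef
  have hQapp : ∀ i j, Q i j = d i * P i j * d j := by
    intro i j
    rw [hQdef, Matrix.mul_diagonal, Matrix.diagonal_mul]
  have hdsq : ∀ i, d i * d i = 1 := by
    intro i; by_cases h : (i : ℕ) < m <;> simp [hd, h]
  have hQabs : ∀ i j, Q i j = |P i j| := by
    intro i j
    rcases eq_or_ne i j with rfl | hij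
    · rw [hQapp, abs_of_pos (hdiag i), mul_comm, ← mul_assoc, hdsq i, one_mul]
    · by_cases hz : P i j = 0
      · simp [hQapp, hz]
      · have hb := hbal i j hij hz
        rw [hQapp]
        by_cases hi : (i : ℕ) < m <;> by_cases hj : (j : ℕ) < m
        · have hp : 0 < P i j := hb.1 (by simp [hi, hj])
          simp [hd, hi, hj, abs_of_pos hp]
        · have hp : P i j < 0 := by
            have hnp : ¬ 0 < P i j := fun h => by
              have := hb.2 h; simp [hi, hj] at this
            exact lt_of_le_of_ne (not_lt.1 hnp) hz
          simp [hd, hi, hj, abs_of_neg hp]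
        · have hp : P i j < 0 := by
            have hnp : ¬ 0 < P i j := fun h => by
              have := hb.2 h; simp [hi, hj] at this
            exact lt_of_le_of_ne (not_lt.1 hnp) hz
          simp [hd, hi, hj, abs_of_neg hp]
        · have hp : 0 < P i j := hb.1 (by simp [hi, hj])
          simp [hd, hi, hj, abs_of_pos hp]
  have hQ0 : ∀ i j, 0 ≤ Q i j := fun i j => (hQabs i j) ▸ abs_nonneg _
  have hQ1 : ∀ i, ∑ j, Q i j = 1 := by
    intro i; simp only [hQabs]; exact habs i
  have hQdiag : ∀ i, 0 < Q i i := by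
    intro i; rw [hQabs]; exact abs_pos.2 (hdiag i).ne'
  have hSC' : ∀ a b : Fin N, Relation.ReflTransGen (fun j i => i ≠ j ∧ Q i j ≠ 0) a b := by
    intro a b
    refine Relation.ReflTransGen.mono ?_ a b (hSC a b)
    rintro x y ⟨h1, h2⟩
    exact ⟨h1, by rw [hQabs]; simpa [abs_ne_zero] using h2⟩
  obtain ⟨T, hT⟩ := exists_pow_pos Q hQ0 hQdiag hSC'
  have hpairs : (Finset.univ : Finset (Fin N × Fin N)).Nonempty := Finset.univ_nonempty
  set ε := Finset.univ.inf' hpairs (fun p : Fin N × Fin N => (Q ^ T) p.1 p.2) with hεdef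
  have hεpos : 0 < ε := by
    rw [hεdef, Finset.lt_inf'_iff]
    exact fun p _ => hT p.1 p.2
  have hεle : ∀ i j, ε ≤ (Q ^ T) i j := fun i j =>
    Finset.inf'_le _ (mem_univ ((i, j) : Fin N × Fin N))
  -- 2ε ≤ 1
  have i0 : Fin N := ⟨0, hN⟩
  have h2ε : 2 * ε ≤ 1 := by
    have hne : (⟨0, hN⟩ : Fin N) ≠ ⟨m, hmN⟩ := by
      simp only [ne_eq, Fin.mk.injEq]; omega
    have hsub : ({(⟨0, hN⟩ : Fin N), ⟨m, hmN⟩} : Finset (Fin N)) ⊆ Finset.univ :=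
      Finset.subset_univ _
    have hle : ∑ j ∈ ({(⟨0, hN⟩ : Fin N), ⟨m, hmN⟩} : Finset (Fin N)), (Q ^ T) ⟨0, hN⟩ j
        ≤ ∑ j, (Q ^ T) ⟨0, hN⟩ j :=
      Finset.sum_le_sum_of_subset_of_nonneg hsub
        (fun j _ _ => pow_nonneg' Q hQ0 T ⟨0, hN⟩ j)
    rw [Finset.sum_pair hne, pow_rowsum Q hQ0 hQ1 T ⟨0, hN⟩] at hle
    have h1 := hεle ⟨0, hN⟩ ⟨0, hN⟩
    have h2 := hεle ⟨0, hN⟩ ⟨m, hmN⟩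
    linarith
  have hconv : ∀ y : Fin N → ℝ, ∃ c, ∀ i, Tendsto (fun t => (Q ^ t *ᵥ y) i) atTop (nhds c) :=
    pow_tendsto Q hQ0 hQ1 T ε hεpos h2ε hεle
  have hconv' : ∀ j : Fin N, ∃ c, ∀ i, Tendsto (fun t => (Q ^ t) i j) atTop (nhds c) := by
    intro j
    obtain ⟨c, hc⟩ := hconv (Pi.single j 1)
    exact ⟨c, fun i => by simpa [Matrix.mulVec_single] using hc i⟩
  choose ξ hξt using hconv'
  have hgen : ∀ y : Fin N → ℝ, ∀ i,
      Tendsto (fun t => (Q ^ t *ᵥ y) i) atTop (nhds (ξ ⬝ᵥ y)) := by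
    intro y i
    have h : Tendsto (fun t => ∑ j, (Q ^ t) i j * y j) atTop (nhds (∑ j, ξ j * y j)) :=
      tendsto_finset_sum _ fun j _ => (hξt j i).mul_const (y j)
    simpa [Matrix.mulVec, dotProduct] using h
  have hξ0 : ∀ j, 0 ≤ ξ j := fun j =>
    ge_of_tendsto' (hξt j i0) (fun t => pow_nonneg' Q hQ0 t i0 j)
  have hξsum : ∑ j, ξ j = 1 := by
    have h1 : Tendsto (fun t => ∑ j, (Q ^ t) i0 j) atTop (nhds (∑ j, ξ j)) :=
      tendsto_finset_sum _ fun j _ => hξt j i0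
    have h2 : (fun t => ∑ j, (Q ^ t) i0 j) = fun _ => (1 : ℝ) :=
      funext fun t => pow_rowsum Q hQ0 hQ1 t i0
    rw [h2] at h1
    exact (tendsto_nhds_unique h1 tendsto_const_nhds)
  have hfix : ξ ᵥ* Q = ξ := by
    funext j
    have h1 : Tendsto (fun t => (Q ^ (t + 1)) i0 j) atTop (nhds (ξ j)) :=
      (hξt j i0).comp (tendsto_add_atTop_nat 1)
    have h2 : Tendsto (fun t => (Q ^ (t + 1)) i0 j) atTop (nhds (∑ k, ξ k * Q k j)) := by
      have he : ∀ t : ℕ, (Q ^ (t + 1)) i0 j = ∑ k, (Q ^ t) i0 k * Q k j := by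
        intro t; rw [pow_succ, mul_apply]
      simp only [he]
      exact tendsto_finset_sum _ fun k _ => (hξt k i0).mul_const _
    have := tendsto_nhds_unique h2 h1
    simpa [Matrix.vecMul, dotProduct] using this
  have hDD : Matrix.diagonal d * Matrix.diagonal d = (1 : Matrix (Fin N) (Fin N) ℝ) := by
    rw [Matrix.diagonal_mul_diagonal,
      show (fun i => d i * d i) = fun _ => (1 : ℝ) from funext hdsq, Matrix.diagonal_one]
  have hpow : ∀ t, P ^ t = Matrix.diagonal d * Q ^ t * Matrix.diagonal d := by
    intro t
    induction t with
    | zero => rw [pow_zero, pow_zero, Matrix.mul_one, hDD]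
    | succ t ih =>
      rw [pow_succ, pow_succ, ih, hQdef]
      simp only [Matrix.mul_assoc]
      rw [hDD, Matrix.mul_one]
  refine ⟨hQ0, hQ1, ξ, hξ0, hfix, hξsum, ?_⟩
  intro x0 i
  have hy := hgen (Matrix.diagonal d *ᵥ x0) i
  have hPt : ∀ t, (P ^ t *ᵥ x0) i = d i * (Q ^ t *ᵥ (Matrix.diagonal d *ᵥ x0)) i := by
    intro t
    rw [hpow t, ← Matrix.mulVec_mulVec, ← Matrix.mulVec_mulVec, Matrix.mulVec_diagonal]
  have hlim := hy.const_mul (d i)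
  simp only [← hPt] at hlim
  have hdi : (if (i : ℕ) < m then (1 : ℝ) else -1) = d i := rfl
  rw [hdi, mul_comm]
  exact hlim
end

section
/- Let P be an irreducible N×N real matrix with positive diagonal such that |P| is row-stochastic and the signed graph G(P) is strongly connected and structurally unbalanced. Then for every initial condition x(0), the solution of x(t+1) = Px(t) converges to the zero vector. -/
open Matrix Filter

/-- Structural balance of the signed graph of `P` (edge `(v_j, v_i)` of sign
`sgn p_ij` whenever `p_ij ≠ 0`, `i ≠ j`). -/
def MatBalanced {N : ℕ} (P : Matrix (Fin N) (Fin N) ℝ) : Prop :=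
  ∃ f : Fin N → Bool, ∀ i j, i ≠ j → P i j ≠ 0 → (f i = f j ↔ 0 < P i j)

/-- Rigidity: if a row of a (sign-wise) stochastic matrix achieves the maximum
modulus 1 on a vector bounded by 1, every term is extremal and sign-aligned. -/
lemma rigid_aux {N : ℕ} (P : Matrix (Fin N) (Fin N) ℝ)
    (habs : ∀ i, ∑ j, |P i j| = 1) (x : Fin N → ℝ) (hx : ∀ j, |x j| ≤ 1)
    (i : Fin N) (hi : |(P *ᵥ x) i| = 1) :
    ∀ j, (P *ᵥ x) i * (P i j * x j) = |P i j| := by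
  set σ := (P *ᵥ x) i with hσdef
  have hσ2 : σ * σ = 1 := by
    have h := abs_mul_abs_self σ
    rw [hi] at h; linarith
  have hsum : ∑ j, σ * (P i j * x j) = ∑ j, |P i j| := by
    rw [← Finset.mul_sum, habs]
    have h : ∑ j, P i j * x j = σ := by
      rw [hσdef]; simp [Matrix.mulVec, dotProduct]
    rw [h, hσ2]
  have hle : ∀ j ∈ Finset.univ, σ * (P i j * x j) ≤ |P i j| := by
    intro j _
    calc σ * (P i j * x j) ≤ |σ * (P i j * x j)| := le_abs_self _
      _ = |σ| * (|P i j| * |x j|) := by rw [abs_mul, abs_mul]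
      _ = |P i j| * |x j| := by rw [hi, one_mul]
      _ ≤ |P i j| * 1 := mul_le_mul_of_nonneg_left (hx j) (abs_nonneg _)
      _ = |P i j| := mul_one _
  intro j
  exact (Finset.sum_eq_sum_iff_of_le hle).mp hsum j (Finset.mem_univ j)

lemma contract_aux {N : ℕ} (P : Matrix (Fin N) (Fin N) ℝ)
    (habs : ∀ i, ∑ j, |P i j| = 1) (x : Fin N → ℝ) : ‖P *ᵥ x‖ ≤ ‖x‖ := by
  rw [pi_norm_le_iff_of_nonneg (norm_nonneg x)]
  intro i
  rw [Real.norm_eq_abs]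
  calc |(P *ᵥ x) i| = |∑ j, P i j * x j| := by simp [Matrix.mulVec, dotProduct]
    _ ≤ ∑ j, |P i j * x j| := Finset.abs_sum_le_sum_abs _ _
    _ ≤ ∑ j, |P i j| * ‖x‖ := by
        refine Finset.sum_le_sum fun j _ => ?_
        rw [abs_mul]
        exact mul_le_mul_of_nonneg_left
          (by rw [← Real.norm_eq_abs]; exact norm_le_pi_norm x j) (abs_nonneg _)
    _ = ‖x‖ := by rw [← Finset.sum_mul, habs i, one_mul]

theorem stmt8 {N : ℕ} (P : Matrix (Fin N) (Fin N) ℝ)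
    (habs : ∀ i, ∑ j, |P i j| = 1) (hdiag : ∀ i, 0 < P i i)
    (hSC : StronglyConnected (fun j i : Fin N => i ≠ j ∧ P i j ≠ 0))
    (hUnbal : ¬ MatBalanced P) :
    ∀ x0 : Fin N → ℝ, Tendsto (fun t => P ^ t *ᵥ x0) atTop (nhds 0) := by
  intro x0
  set m : ℕ → ℝ := fun t => ‖P ^ t *ᵥ x0‖ with hmdef
  have hstep : ∀ t, m (t + 1) ≤ m t := by
    intro t
    have : P ^ (t + 1) *ᵥ x0 = P *ᵥ (P ^ t *ᵥ x0) := by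
      rw [Matrix.mulVec_mulVec, ← pow_succ']
    rw [hmdef]; simp only [this]
    exact contract_aux P habs _
  have hanti : Antitone m := antitone_nat_of_succ_le hstep
  have hbdd : BddBelow (Set.range m) := ⟨0, by rintro r ⟨t, rfl⟩; exact norm_nonneg _⟩
  set L : ℝ := ⨅ t, m t with hLdef
  have hLten : Tendsto m atTop (nhds L) := tendsto_atTop_ciInf hanti hbdd
  have hL0 : 0 ≤ L := le_ciInf fun t => norm_nonneg _
  rcases hL0.eq_or_lt with hLz | hLpos
  · rw [tendsto_zero_iff_norm_tendsto_zero]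
    rw [← hLz] at hLten; exact hLten
  exfalso
  -- extract a limit point z with ‖P^s *ᵥ z‖ = L for all s
  have hmem : ∀ t, P ^ t *ᵥ x0 ∈ Metric.closedBall (0 : Fin N → ℝ) (m 0) := by
    intro t
    rw [Metric.mem_closedBall, dist_zero_right]
    exact hanti (Nat.zero_le t)
  obtain ⟨z, _, φ, hφ, hconv⟩ := (isCompact_closedBall _ _).tendsto_subseq hmem
  have hznorm : ∀ s, ‖P ^ s *ᵥ z‖ = L := by
    intro s
    have hc : Continuous fun x : Fin N → ℝ => P ^ s *ᵥ x :=
      (Matrix.mulVecLin (P ^ s)).continuous_of_finiteDimensional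
    have h1 : Tendsto (fun k => P ^ s *ᵥ (P ^ φ k *ᵥ x0)) atTop (nhds (P ^ s *ᵥ z)) :=
      (hc.tendsto z).comp hconv
    have h2 := h1.norm
    have h3 : (fun k => ‖P ^ s *ᵥ (P ^ φ k *ᵥ x0)‖) = fun k => m (s + φ k) := by
      funext k
      rw [hmdef]; simp only [Matrix.mulVec_mulVec, ← pow_add]
    have h4 : Tendsto (fun k => m (s + φ k)) atTop (nhds L) :=
      hLten.comp (tendsto_atTop_mono (fun k => Nat.le_add_left (φ k) s) hφ.tendsto_atTop)
    exact tendsto_nhds_unique (h3 ▸ h2) h4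
  -- normalize
  set w : Fin N → ℝ := L⁻¹ • z with hwdef
  set y : ℕ → Fin N → ℝ := fun s => P ^ s *ᵥ w with hydef
  have hyn : ∀ s, ‖y s‖ = 1 := by
    intro s
    rw [hydef]; simp only [hwdef, Matrix.mulVec_smul]
    rw [norm_smul, Real.norm_eq_abs, abs_of_pos (inv_pos.mpr hLpos), hznorm s,
      inv_mul_cancel₀ hLpos.ne']
  have hyle : ∀ s j, |y s j| ≤ 1 := by
    intro s j
    rw [← Real.norm_eq_abs, ← hyn s]
    exact norm_le_pi_norm (y s) j
  have hy1 : ∀ s, y (s + 1) = P *ᵥ y s := by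
    intro s
    rw [hydef]; simp only [Matrix.mulVec_mulVec, ← pow_succ']
  -- nonemptiness
  have hNE : Nonempty (Fin N) := by
    by_contra h
    have : IsEmpty (Fin N) := not_nonempty_iff.mp h
    have h0 : y 0 = 0 := Subsingleton.elim _ _
    have h1 := hyn 0
    rw [h0, norm_zero] at h1
    exact one_ne_zero h1.symm
  -- maximum is attained at every time
  have hatt : ∀ s, ∃ i, |y s i| = 1 := by
    intro s
    obtain ⟨i, _, hi⟩ := Finset.exists_mem_eq_sup' (Finset.univ_nonempty (α := Fin N))
      (fun i => |y s i|)
    refine ⟨i, le_antisymm (hyle s i) ?_⟩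
    rw [← hyn s, pi_norm_le_iff_of_nonneg (abs_nonneg _)]
    intro j
    rw [Real.norm_eq_abs, ← hi]
    exact Finset.le_sup' (fun i => |y s i|) (Finset.mem_univ j)
  -- tightness propagation
  have claimA : ∀ s i, |y (s + 1) i| = 1 → y s i = y (s + 1) i := by
    intro s i hi
    have hi' : |(P *ᵥ y s) i| = 1 := by rw [← hy1 s]; exact hi
    have hrig := rigid_aux P habs (y s) (hyle s) i hi' i
    have hσ2 : (P *ᵥ y s) i * (P *ᵥ y s) i = 1 := by
      have h := abs_mul_abs_self ((P *ᵥ y s) i)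
      rw [hi'] at h; linarith
    rw [abs_of_pos (hdiag i)] at hrig
    have h1 : (P *ᵥ y s) i * y s i = 1 := by
      have := mul_left_cancel₀ (hdiag i).ne'
        (show P i i * ((P *ᵥ y s) i * y s i) = P i i * 1 by rw [mul_one]; linarith [hrig])
      linarith [this]
    have : y s i = (P *ᵥ y s) i := by
      linear_combination (P *ᵥ y s) i * h1 - y s i * hσ2
    rw [this, hy1 s]
  have claimA' : ∀ s i, |y (s + 1) i| = 1 → |y s i| = 1 := by
    intro s i hi
    rw [claimA s i hi]; exact hi
  have claimB : ∀ s i j, |y (s + 1) i| = 1 → P i j ≠ 0 → |y s j| = 1 := by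
    intro s i j hi hne
    have hi' : |(P *ᵥ y s) i| = 1 := by rw [← hy1 s]; exact hi
    have hrig := rigid_aux P habs (y s) (hyle s) i hi' j
    have h := congrArg abs hrig
    rw [abs_mul, abs_mul, hi', abs_abs, one_mul] at h
    have hPa : (0:ℝ) < |P i j| := abs_pos.mpr hne
    nlinarith [h, hPa]
  have hdown : ∀ d s i, |y (s + d) i| = 1 → |y s i| = 1 := by
    intro d
    induction d with
    | zero => intro s i h; exact h
    | succ n ih =>
      intro s i h
      have h' : |y ((s + 1) + n) i| = 1 := by rw [show (s+1)+n = s+(n+1) by omega]; exact h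
      exact claimA' s i (ih (s + 1) i h')
  -- pigeonhole: some index is tight at all times
  choose g hg using hatt
  obtain ⟨i0, hfib⟩ := Finite.exists_infinite_fiber g
  have hi0 : ∀ s, |y s i0| = 1 := by
    intro s
    obtain ⟨t, ht, hts⟩ := (Set.infinite_coe_iff.mp hfib).exists_gt s
    have : |y t i0| = 1 := by
      have : g t = i0 := ht
      rw [← this]; exact hg t
    exact hdown (t - s) s i0 (by rw [show s + (t - s) = t by omega]; exact this)
  -- all indices tight at all times
  have hall : ∀ j, ∀ s, |y s j| = 1 := by
    intro j
    have hrel := hSC j i0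
    induction hrel using Relation.ReflTransGen.head_induction_on with
    | refl => exact hi0
    | head hadj _ ih =>
      rename_i a c _
      intro s
      exact claimB s c a (ih (s + 1)) hadj.2
  -- build a balance, contradiction
  apply hUnbal
  refine ⟨fun k => decide (0 < y 0 k), fun i j hij hne => ?_⟩
  have h1 : |(P *ᵥ y 0) i| = 1 := by rw [← hy1 0]; exact hall i 1
  have hrig := rigid_aux P habs (y 0) (hyle 0) i h1 j
  have hAi : y 0 i = (P *ᵥ y 0) i := by
    rw [claimA 0 i (hall i 1), hy1 0]
  rw [← hAi] at hrig
  -- hrig : y 0 i * (P i j * y 0 j) = |P i j|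
  have hPa : (0:ℝ) < |P i j| := abs_pos.mpr hne
  have hai : |y 0 i| = 1 := hall i 0
  have haj : |y 0 j| = 1 := hall j 0
  rw [decide_eq_decide]
  rcases (abs_eq (by norm_num : (0:ℝ) ≤ 1)).mp hai with hi1 | hi1 <;>
    rcases (abs_eq (by norm_num : (0:ℝ) ≤ 1)).mp haj with hj1 | hj1 <;>
    rw [hi1, hj1] at hrig ⊢ <;>
    norm_num <;> nlinarith [hrig, hPa, le_abs_self (P i j), neg_abs_le (P i j)]
end

section
/- Let P be an irreducible N×N real matrix with positive diagonal, |P| row-stochastic, and G(P) having at least one negative edge. The discrete-time system x(t+1) = Px(t) polarizes (i.e., for almost all initial conditions all |x_i(t)| converge to a common positive limit and the limits of x_i(t) take both signs) if and only if G(P) is structurally balanced. -/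
open Matrix Filter MeasureTheory

/-- The system `x(t+1) = P x(t)` polarizes: for almost all initial conditions,
all `|x_i(t)|` converge to a common positive limit and the limits of the
`x_i(t)` take both signs. -/
def Polarizes {N : ℕ} (P : Matrix (Fin N) (Fin N) ℝ) : Prop :=
  ∀ᵐ x0 : Fin N → ℝ ∂volume, ∃ c : ℝ, 0 < c ∧ ∃ L : Fin N → ℝ,
    (∀ i, |L i| = c) ∧
    (∀ i, Tendsto (fun t => (P ^ t *ᵥ x0) i) atTop (nhds (L i))) ∧
    ∃ i j, i ≠ j ∧ L i = -L j

set_option linter.unusedSectionVars false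

section Aux
variable {σ : Type*} [Fintype σ] [DecidableEq σ]

lemma pow_entry_nonneg (A : Matrix σ σ ℝ) (h : ∀ a b, 0 ≤ A a b) (k : ℕ) :
    ∀ a b, 0 ≤ (A ^ k) a b := by
  induction k with
  | zero =>
    intro a b
    rcases eq_or_ne a b with rfl | hne
    · simp
    · simp [Matrix.one_apply_ne hne]
  | succ k ih =>
    intro a b
    rw [pow_succ, Matrix.mul_apply]
    exact Finset.sum_nonneg fun c _ => mul_nonneg (ih a c) (h c b)

lemma pow_row_sum (A : Matrix σ σ ℝ) (h : ∀ a, ∑ b, A a b = 1) (k : ℕ) :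
    ∀ a, ∑ b, (A ^ k) a b = 1 := by
  induction k with
  | zero => intro a; simp [Matrix.one_apply, Finset.sum_ite_eq]
  | succ k ih =>
    intro a
    simp only [pow_succ, Matrix.mul_apply]
    rw [Finset.sum_comm]
    calc ∑ c, ∑ b, (A ^ k) a c * A c b = ∑ c, (A ^ k) a c * ∑ b, A c b := by
          simp [Finset.mul_sum]
      _ = 1 := by simp only [h, mul_one]; exact ih a

lemma pow_pos_succ (A : Matrix σ σ ℝ) (hnn : ∀ a b, 0 ≤ A a b) (hd : ∀ a, 0 < A a a)
    {k : ℕ} {a b : σ} (h : 0 < (A ^ k) a b) : 0 < (A ^ (k + 1)) a b := by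
  rw [pow_succ, Matrix.mul_apply]
  have hterm : 0 < (A ^ k) a b * A b b := mul_pos h (hd b)
  have h2 : (A ^ k) a b * A b b ≤ ∑ c, (A ^ k) a c * A c b :=
    Finset.single_le_sum (f := fun c => (A ^ k) a c * A c b)
    (fun c _ => mul_nonneg (pow_entry_nonneg A hnn k a c) (hnn c b)) (Finset.mem_univ b)
  linarith

lemma pow_pos_mono (A : Matrix σ σ ℝ) (hnn : ∀ a b, 0 ≤ A a b) (hd : ∀ a, 0 < A a a)
    {k l : ℕ} (hkl : k ≤ l) {a b : σ} (h : 0 < (A ^ k) a b) : 0 < (A ^ l) a b := by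
  induction l, hkl using Nat.le_induction with
  | base => exact h
  | succ n hn ih => exact pow_pos_succ A hnn hd ih

lemma prim (A : Matrix σ σ ℝ) (hnn : ∀ a b, 0 ≤ A a b) (hd : ∀ a, 0 < A a a)
    (hsc : ∀ a b, Relation.ReflTransGen (fun x y => 0 < A y x) a b) :
    ∃ T, ∀ a b, 0 < (A ^ T) a b := by
  have h1 : ∀ a b : σ, ∃ k, 0 < (A ^ k) a b := by
    intro a b
    induction hsc b a with
    | refl => exact ⟨0, by simp⟩
    | @tail c d hreach hstep ih =>
      obtain ⟨k, hk⟩ := ih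
      refine ⟨k + 1, ?_⟩
      rw [pow_succ', Matrix.mul_apply]
      have hterm : 0 < A d c * (A ^ k) c b := mul_pos hstep hk
      have h2 : A d c * (A ^ k) c b ≤ ∑ e, A d e * (A ^ k) e b :=
        Finset.single_le_sum (f := fun e => A d e * (A ^ k) e b)
        (fun e _ => mul_nonneg (hnn d e) (pow_entry_nonneg A hnn k e b)) (Finset.mem_univ c)
      linarith
  choose K hK using fun p : σ × σ => h1 p.1 p.2
  refine ⟨Finset.univ.sup K, fun a b => ?_⟩
  exact pow_pos_mono A hnn hd (Finset.le_sup (Finset.mem_univ (a, b))) (hK (a, b))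
end Aux

section Conv
variable {σ : Type*} [Fintype σ] [DecidableEq σ] [Nonempty σ]

lemma mulVec_le_sup (B : Matrix σ σ ℝ) (hnn : ∀ a b, 0 ≤ B a b)
    (hrow : ∀ a, ∑ b, B a b = 1) (y : σ → ℝ) (i : σ) :
    (B *ᵥ y) i ≤ Finset.univ.sup' Finset.univ_nonempty y := by
  set S := Finset.univ.sup' Finset.univ_nonempty y with hS
  calc (B *ᵥ y) i = ∑ j, B i j * y j := rfl
    _ ≤ ∑ j, B i j * S := Finset.sum_le_sum fun j _ =>
        mul_le_mul_of_nonneg_left (Finset.le_sup' y (Finset.mem_univ j)) (hnn i j)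
    _ = S := by rw [← Finset.sum_mul, hrow, one_mul]

lemma inf_le_mulVec (B : Matrix σ σ ℝ) (hnn : ∀ a b, 0 ≤ B a b)
    (hrow : ∀ a, ∑ b, B a b = 1) (y : σ → ℝ) (i : σ) :
    Finset.univ.inf' Finset.univ_nonempty y ≤ (B *ᵥ y) i := by
  set S := Finset.univ.inf' Finset.univ_nonempty y with hS
  calc S = ∑ j, B i j * S := by rw [← Finset.sum_mul, hrow, one_mul]
    _ ≤ ∑ j, B i j * y j := Finset.sum_le_sum fun j _ =>
        mul_le_mul_of_nonneg_left (Finset.inf'_le y (Finset.mem_univ j)) (hnn i j)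
    _ = (B *ᵥ y) i := rfl

lemma mulVec_le_contract (B : Matrix σ σ ℝ) (hnn : ∀ a b, 0 ≤ B a b)
    (hrow : ∀ a, ∑ b, B a b = 1) (δ : ℝ) (hδ : ∀ a b, δ ≤ B a b) (y : σ → ℝ) (i : σ) :
    (B *ᵥ y) i ≤ Finset.univ.sup' Finset.univ_nonempty y
      - δ * (Finset.univ.sup' Finset.univ_nonempty y - Finset.univ.inf' Finset.univ_nonempty y) := by
  set S := Finset.univ.sup' Finset.univ_nonempty y with hS
  set m := Finset.univ.inf' Finset.univ_nonempty y with hm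
  obtain ⟨j0, _, hj0⟩ := Finset.exists_mem_eq_inf' (Finset.univ_nonempty (α := σ)) y
  have hmS : m ≤ S := le_trans (Finset.inf'_le y (Finset.mem_univ j0))
    (Finset.le_sup' y (Finset.mem_univ j0))
  have hsplit : (B *ᵥ y) i = B i j0 * y j0 + ∑ j ∈ Finset.univ.erase j0, B i j * y j := by
    rw [show (B *ᵥ y) i = ∑ j, B i j * y j from rfl,
      ← Finset.add_sum_erase _ _ (Finset.mem_univ j0)]
  have hrest : ∑ j ∈ Finset.univ.erase j0, B i j * y j
      ≤ ∑ j ∈ Finset.univ.erase j0, B i j * S :=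
    Finset.sum_le_sum fun j _ => mul_le_mul_of_nonneg_left
      (Finset.le_sup' y (Finset.mem_univ j)) (hnn i j)
  have hsum_erase : ∑ j ∈ Finset.univ.erase j0, B i j = 1 - B i j0 := by
    have := Finset.add_sum_erase Finset.univ (B i) (Finset.mem_univ j0)
    have h2 := hrow i
    linarith
  have hb0 : δ ≤ B i j0 := hδ i j0
  have key : (B *ᵥ y) i ≤ B i j0 * m + (1 - B i j0) * S := by
    rw [hsplit]
    have : ∑ j ∈ Finset.univ.erase j0, B i j * S = (1 - B i j0) * S := by
      rw [← Finset.sum_mul, hsum_erase]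
    rw [← hj0] at *
    nlinarith [hrest]
  nlinarith [key, mul_nonneg (sub_nonneg.2 hb0) (sub_nonneg.2 hmS)]

lemma sup'_neg_eq (y : σ → ℝ) :
    Finset.univ.sup' Finset.univ_nonempty (fun j => -(y j))
      = - Finset.univ.inf' Finset.univ_nonempty y := by
  apply le_antisymm
  · apply Finset.sup'_le
    intro j _
    simp only [neg_le_neg_iff]
    exact Finset.inf'_le y (Finset.mem_univ j)
  · obtain ⟨j0, _, hj0⟩ := Finset.exists_mem_eq_inf' (Finset.univ_nonempty (α := σ)) y
    rw [hj0]
    exact Finset.le_sup' (fun j => -(y j)) (Finset.mem_univ j0)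

lemma inf'_neg_eq (y : σ → ℝ) :
    Finset.univ.inf' Finset.univ_nonempty (fun j => -(y j))
      = - Finset.univ.sup' Finset.univ_nonempty y := by
  have h := sup'_neg_eq (fun j => -(y j))
  simp only [neg_neg] at h
  have h2 : Finset.univ.sup' Finset.univ_nonempty y
      = - Finset.univ.inf' Finset.univ_nonempty (fun j => -(y j)) := h
  linarith

lemma contract_le_mulVec (B : Matrix σ σ ℝ) (hnn : ∀ a b, 0 ≤ B a b)
    (hrow : ∀ a, ∑ b, B a b = 1) (δ : ℝ) (hδ : ∀ a b, δ ≤ B a b) (y : σ → ℝ) (i : σ) :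
    Finset.univ.inf' Finset.univ_nonempty y
      + δ * (Finset.univ.sup' Finset.univ_nonempty y - Finset.univ.inf' Finset.univ_nonempty y)
      ≤ (B *ᵥ y) i := by
  have h := mulVec_le_contract (B := B) hnn hrow δ hδ (fun j => -(y j)) i
  have hsup : Finset.univ.sup' Finset.univ_nonempty (fun j => -(y j))
      = - Finset.univ.inf' Finset.univ_nonempty y := sup'_neg_eq y
  have hinf : Finset.univ.inf' Finset.univ_nonempty (fun j => -(y j))
      = - Finset.univ.sup' Finset.univ_nonempty y := inf'_neg_eq y
  have hneg : (B *ᵥ (fun j => -(y j))) i = -((B *ᵥ y) i) := by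
    show ∑ j, B i j * (-(y j)) = -∑ j, B i j * y j
    rw [← Finset.sum_neg_distrib]
    exact Finset.sum_congr rfl fun j _ => by ring
  rw [hsup, hinf, hneg] at h
  linarith

lemma stoch_converge (A : Matrix σ σ ℝ) (hnn : ∀ a b, 0 ≤ A a b)
    (hrow : ∀ a, ∑ b, A a b = 1) (T : ℕ) (δ : ℝ) (hδ : 0 < δ) (hδ2 : 2 * δ ≤ 1)
    (hT : ∀ a b, δ ≤ (A ^ T) a b) (x : σ → ℝ) :
    ∃ c, ∀ i, Tendsto (fun t => (A ^ t *ᵥ x) i) atTop (nhds c) := by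
  set Mx : ℕ → ℝ := fun t => Finset.univ.sup' Finset.univ_nonempty (A ^ t *ᵥ x) with hMx
  set mx : ℕ → ℝ := fun t => Finset.univ.inf' Finset.univ_nonempty (A ^ t *ᵥ x) with hmx
  have hstep : ∀ t, A ^ (t + 1) *ᵥ x = A *ᵥ (A ^ t *ᵥ x) := fun t => by
    rw [mulVec_mulVec, ← pow_succ']
  have hstepT : ∀ t, A ^ (t + T) *ᵥ x = (A ^ T) *ᵥ (A ^ t *ᵥ x) := fun t => by
    rw [mulVec_mulVec, ← pow_add, Nat.add_comm]
  have hTnn : ∀ a b, 0 ≤ (A ^ T) a b := pow_entry_nonneg A hnn T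
  have hTrow : ∀ a, ∑ b, (A ^ T) a b = 1 := pow_row_sum A hrow T
  have hManti : ∀ t, Mx (t + 1) ≤ Mx t := by
    intro t
    apply Finset.sup'_le
    intro i _
    rw [hstep t]
    exact mulVec_le_sup A hnn hrow _ i
  have hmmono : ∀ t, mx t ≤ mx (t + 1) := by
    intro t
    apply Finset.le_inf'
    intro i _
    rw [hstep t]
    exact inf_le_mulVec A hnn hrow _ i
  have hManti' : Antitone Mx := antitone_nat_of_succ_le hManti
  have hmmono' : Monotone mx := monotone_nat_of_le_succ hmmono
  have hmM : ∀ t, mx t ≤ Mx t := fun t =>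
    le_trans (Finset.inf'_le _ (Finset.mem_univ (Classical.arbitrary σ)))
      (Finset.le_sup' _ (Finset.mem_univ (Classical.arbitrary σ)))
  have hcon : ∀ t, Mx (t + T) - mx (t + T) ≤ (1 - 2 * δ) * (Mx t - mx t) := by
    intro t
    have hub : Mx (t + T) ≤ Mx t - δ * (Mx t - mx t) := by
      apply Finset.sup'_le
      intro i _
      rw [hstepT t]
      exact mulVec_le_contract (A ^ T) hTnn hTrow δ hT _ i
    have hlb : mx t + δ * (Mx t - mx t) ≤ mx (t + T) := by
      apply Finset.le_inf'
      intro i _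
      rw [hstepT t]
      exact contract_le_mulVec (A ^ T) hTnn hTrow δ hT _ i
    linarith
  have hgeom : ∀ k, Mx (k * T) - mx (k * T) ≤ (1 - 2 * δ) ^ k * (Mx 0 - mx 0) := by
    intro k
    induction k with
    | zero => simp
    | succ k ih =>
      have h1 : Mx ((k + 1) * T) - mx ((k + 1) * T) ≤ (1 - 2 * δ) * (Mx (k * T) - mx (k * T)) := by
        have := hcon (k * T)
        rwa [show k * T + T = (k + 1) * T by ring] at this
      have hγ : (0 : ℝ) ≤ 1 - 2 * δ := by linarith
      calc Mx ((k + 1) * T) - mx ((k + 1) * T)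
          ≤ (1 - 2 * δ) * (Mx (k * T) - mx (k * T)) := h1
        _ ≤ (1 - 2 * δ) * ((1 - 2 * δ) ^ k * (Mx 0 - mx 0)) :=
            mul_le_mul_of_nonneg_left ih hγ
        _ = (1 - 2 * δ) ^ (k + 1) * (Mx 0 - mx 0) := by ring
  have hMbdd : BddBelow (Set.range Mx) := ⟨mx 0, by
    rintro _ ⟨t, rfl⟩
    exact le_trans (hmmono' (Nat.zero_le t)) (hmM t)⟩
  have hMtend : Tendsto Mx atTop (nhds (⨅ t, Mx t)) := tendsto_atTop_ciInf hManti' hMbdd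
  have hmbdd : BddAbove (Set.range mx) := ⟨Mx 0, by
    rintro _ ⟨t, rfl⟩
    exact le_trans (hmM t) (hManti' (Nat.zero_le t))⟩
  have hmtend : Tendsto mx atTop (nhds (⨆ t, mx t)) := tendsto_atTop_ciSup hmmono' hmbdd
  set cM := ⨅ t, Mx t with hcM
  set cm := ⨆ t, mx t with hcm
  have hle : cm ≤ cM := le_of_tendsto_of_tendsto hmtend hMtend (Eventually.of_forall hmM)
  have hge : cM - cm ≤ 0 := by
    have hbk : ∀ k : ℕ, cM - cm ≤ (1 - 2 * δ) ^ k * (Mx 0 - mx 0) := by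
      intro k
      have h1 : cM ≤ Mx (k * T) := ciInf_le hMbdd _
      have h2 : mx (k * T) ≤ cm := le_ciSup hmbdd _
      linarith [hgeom k]
    have hlim : Tendsto (fun k : ℕ => (1 - 2 * δ) ^ k * (Mx 0 - mx 0)) atTop (nhds 0) := by
      rw [show (0:ℝ) = 0 * (Mx 0 - mx 0) by ring]
      exact (tendsto_pow_atTop_nhds_zero_of_lt_one (by linarith) (by linarith)).mul_const _
    exact ge_of_tendsto hlim (Eventually.of_forall hbk)
  have hcc : cm = cM := le_antisymm hle (by linarith)
  refine ⟨cM, fun i => ?_⟩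
  apply tendsto_of_tendsto_of_tendsto_of_le_of_le (hcc ▸ hmtend) hMtend
  · intro t
    exact Finset.inf'_le _ (Finset.mem_univ i)
  · intro t
    exact Finset.le_sup' _ (Finset.mem_univ i)
end Conv

section Decay
variable {σ : Type*} [Fintype σ] [DecidableEq σ] [Nonempty σ]

lemma absrow_mulVec_bound (B : Matrix σ σ ℝ) (c : ℝ) (hB : ∀ i, ∑ j, |B i j| ≤ c)
    (y : σ → ℝ) (i : σ) :
    |(B *ᵥ y) i| ≤ c * Finset.univ.sup' Finset.univ_nonempty (fun j => |y j|) := by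
  set n := Finset.univ.sup' Finset.univ_nonempty (fun j => |y j|) with hn
  have hn0 : 0 ≤ n := le_trans (abs_nonneg _)
    (Finset.le_sup' (fun j => |y j|) (Finset.mem_univ (Classical.arbitrary σ)))
  calc |(B *ᵥ y) i| = |∑ j, B i j * y j| := rfl
    _ ≤ ∑ j, |B i j * y j| := Finset.abs_sum_le_sum_abs _ _
    _ ≤ ∑ j, |B i j| * n := by
        apply Finset.sum_le_sum
        intro j _
        rw [abs_mul]
        exact mul_le_mul_of_nonneg_left (Finset.le_sup' (fun j => |y j|) (Finset.mem_univ j))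
          (abs_nonneg _)
    _ = (∑ j, |B i j|) * n := by rw [Finset.sum_mul]
    _ ≤ c * n := mul_le_mul_of_nonneg_right (hB i) hn0

lemma decay (P : Matrix σ σ ℝ) (habs : ∀ i, ∑ j, |P i j| = 1)
    (T : ℕ) (γ : ℝ) (hγ0 : 0 ≤ γ) (hγ1 : γ < 1)
    (hrowT : ∀ i, ∑ j, |(P ^ T) i j| ≤ γ) (x : σ → ℝ) (i : σ) :
    Tendsto (fun t => (P ^ t *ᵥ x) i) atTop (nhds 0) := by
  set n : ℕ → ℝ := fun t => Finset.univ.sup' Finset.univ_nonempty (fun j => |(P ^ t *ᵥ x) j|)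
    with hndef
  have hn0 : ∀ t, 0 ≤ n t := fun t => le_trans (abs_nonneg ((P ^ t *ᵥ x) (Classical.arbitrary σ)))
    (Finset.le_sup' (fun j => |(P ^ t *ᵥ x) j|) (Finset.mem_univ (Classical.arbitrary σ)))
  have hstep : ∀ t, P ^ (t + 1) *ᵥ x = P *ᵥ (P ^ t *ᵥ x) := fun t => by
    rw [mulVec_mulVec, ← pow_succ']
  have hstepT : ∀ t, P ^ (t + T) *ᵥ x = (P ^ T) *ᵥ (P ^ t *ᵥ x) := fun t => by
    rw [mulVec_mulVec, ← pow_add, Nat.add_comm]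
  have hanti : Antitone n := by
    apply antitone_nat_of_succ_le
    intro t
    apply Finset.sup'_le
    intro j _
    rw [hstep t]
    have := absrow_mulVec_bound P 1 (fun i => le_of_eq (habs i)) (P ^ t *ᵥ x) j
    rwa [one_mul] at this
  have hcontr : ∀ t, n (t + T) ≤ γ * n t := by
    intro t
    apply Finset.sup'_le
    intro j _
    rw [hstepT t]
    exact absrow_mulVec_bound (P ^ T) γ hrowT (P ^ t *ᵥ x) j
  have hgeom : ∀ k, n (k * T) ≤ γ ^ k * n 0 := by
    intro k
    induction k with
    | zero => simp
    | succ k ih =>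
      have h1 := hcontr (k * T)
      rw [show k * T + T = (k + 1) * T by ring] at h1
      calc n ((k + 1) * T) ≤ γ * n (k * T) := h1
        _ ≤ γ * (γ ^ k * n 0) := mul_le_mul_of_nonneg_left ih hγ0
        _ = γ ^ (k + 1) * n 0 := by ring
  have hbdd : BddBelow (Set.range n) := ⟨0, by rintro _ ⟨t, rfl⟩; exact hn0 t⟩
  have htend : Tendsto n atTop (nhds (⨅ t, n t)) := tendsto_atTop_ciInf hanti hbdd
  have hd0 : (⨅ t, n t) = 0 := by
    have hge : 0 ≤ ⨅ t, n t := le_ciInf hn0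
    have hle : (⨅ t, n t) ≤ 0 := by
      have hbk : ∀ k : ℕ, (⨅ t, n t) ≤ γ ^ k * n 0 := fun k =>
        le_trans (ciInf_le hbdd (k * T)) (hgeom k)
      have hlim : Tendsto (fun k : ℕ => γ ^ k * n 0) atTop (nhds 0) := by
        rw [show (0:ℝ) = 0 * n 0 by ring]
        exact (tendsto_pow_atTop_nhds_zero_of_lt_one hγ0 hγ1).mul_const _
      exact ge_of_tendsto hlim (Eventually.of_forall hbk)
    linarith
  rw [hd0] at htend
  apply squeeze_zero_norm _ htend
  intro t
  exact Finset.le_sup' (fun j => |(P ^ t *ᵥ x) j|) (Finset.mem_univ i)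
end Decay

lemma lift_id {N : ℕ} (P Q : Matrix (Fin N) (Fin N) ℝ)
    (hQ : ∀ i j, Q i j = |P i j|)
    (M : Matrix (Fin N × Bool) (Fin N × Bool) ℝ)
    (hM : ∀ a b : Fin N × Bool,
      M a b = if a.2 = b.2 then max (P a.1 b.1) 0 else max (-P a.1 b.1) 0)
    (k : ℕ) :
    ∀ (i j : Fin N) (s : Bool),
      (M ^ k) (i, s) (j, s) - (M ^ k) (i, s) (j, !s) = (P ^ k) i j ∧
      (M ^ k) (i, s) (j, s) + (M ^ k) (i, s) (j, !s) = (Q ^ k) i j := by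
  induction k with
  | zero =>
    intro i j s
    have h1 : ((M ^ 0) : Matrix (Fin N × Bool) (Fin N × Bool) ℝ) (i, s) (j, s)
        = if i = j then 1 else 0 := by
      rw [pow_zero, Matrix.one_apply]
      simp [Prod.ext_iff]
    have h2 : ((M ^ 0) : Matrix (Fin N × Bool) (Fin N × Bool) ℝ) (i, s) (j, !s) = 0 := by
      rw [pow_zero, Matrix.one_apply_ne]
      simp [Prod.ext_iff]
    have h3 : ((P ^ 0) : Matrix (Fin N) (Fin N) ℝ) i j = if i = j then 1 else 0 :=
      Matrix.one_apply
    have h4 : ((Q ^ 0) : Matrix (Fin N) (Fin N) ℝ) i j = if i = j then 1 else 0 :=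
      Matrix.one_apply
    rw [h1, h2, h3, h4]
    constructor <;> ring
  | succ k ih =>
    have expand : ∀ (s t : Bool) (i j : Fin N), (M ^ (k+1)) (i, s) (j, t)
        = ∑ l, (max (P i l) 0 * (M ^ k) (l, s) (j, t)
            + max (-P i l) 0 * (M ^ k) (l, !s) (j, t)) := by
      intro s t i j
      rw [pow_succ', Matrix.mul_apply, Fintype.sum_prod_type]
      apply Finset.sum_congr rfl
      intro l _
      rw [Fintype.sum_bool]
      cases s <;> simp [hM] <;> ring
    intro i j s
    obtain h := fun l => ih l j s
    obtain h' := fun l => ih l j (!s)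
    constructor
    · rw [expand s s i j, expand s (!s) i j, ← Finset.sum_sub_distrib, pow_succ',
        Matrix.mul_apply]
      apply Finset.sum_congr rfl
      intro l _
      obtain ⟨d1, s1⟩ := h l
      obtain ⟨d2, s2⟩ := h' l
      rw [Bool.not_not] at d2 s2
      have hpm : max (P i l) 0 - max (-P i l) 0 = P i l := by
        rcases le_total (P i l) 0 with hle | hle
        · rw [max_eq_right hle, max_eq_left (by linarith)]; ring
        · rw [max_eq_left hle, max_eq_right (by linarith)]; ring
      linear_combination (max (P i l) 0) * d1 - (max (-P i l) 0) * d2 + ((P ^ k) l j) * hpm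
    · rw [expand s s i j, expand s (!s) i j, ← Finset.sum_add_distrib, pow_succ',
        Matrix.mul_apply]
      apply Finset.sum_congr rfl
      intro l _
      obtain ⟨d1, s1⟩ := h l
      obtain ⟨d2, s2⟩ := h' l
      rw [Bool.not_not] at d2 s2
      have hq : max (P i l) 0 + max (-P i l) 0 = |P i l| :=
        max_zero_add_max_neg_zero_eq_abs_self (P i l)
      linear_combination (max (P i l) 0) * s1 + (max (-P i l) 0) * s2
        + ((Q ^ k) l j) * hq - ((Q ^ k) l j) * (hQ i l)

lemma lift_sc {N : ℕ} (P : Matrix (Fin N) (Fin N) ℝ)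
    (hSC : ∀ a b : Fin N, Relation.ReflTransGen (fun j i => i ≠ j ∧ P i j ≠ 0) a b)
    (i0 : Fin N) (hnb : ¬ MatBalanced P)
    (M : Matrix (Fin N × Bool) (Fin N × Bool) ℝ)
    (hM : ∀ a b : Fin N × Bool,
      M a b = if a.2 = b.2 then max (P a.1 b.1) 0 else max (-P a.1 b.1) 0) :
    ∀ a b : Fin N × Bool, Relation.ReflTransGen (fun x y => 0 < M y x) a b := by
  set r : (Fin N × Bool) → (Fin N × Bool) → Prop := fun x y => 0 < M y x with hr
  have hstep_pos : ∀ (i j : Fin N) (t : Bool), 0 < P i j → r (j, t) (i, t) := by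
    intro i j t h
    show 0 < M (i, t) (j, t)
    rw [hM]
    simp only [if_pos rfl]
    exact lt_max_iff.2 (Or.inl h)
  have hstep_neg : ∀ (i j : Fin N) (t : Bool), P i j < 0 → r (j, t) (i, !t) := by
    intro i j t h
    show 0 < M (i, !t) (j, t)
    rw [hM]
    rw [if_neg (by simp)]
    exact lt_max_iff.2 (Or.inl (by simpa using h))
  have hchar : ∀ (i j : Fin N) (s t : Bool), r (j, t) (i, s) →
      (0 < P i j ∧ s = t) ∨ (P i j < 0 ∧ s = !t) := by
    intro i j s t h
    replace h : 0 < M (i, s) (j, t) := h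
    rw [hM] at h
    by_cases hst : s = t
    · rw [if_pos hst] at h
      exact Or.inl ⟨(lt_max_iff.1 h).resolve_right (lt_irrefl 0), hst⟩
    · rw [if_neg hst] at h
      have h2 := (lt_max_iff.1 h).resolve_right (lt_irrefl 0)
      refine Or.inr ⟨by linarith, ?_⟩
      cases s <;> cases t <;> simp_all
  have F1 : ∀ a b : Fin N × Bool, Relation.ReflTransGen r a b →
      Relation.ReflTransGen r (a.1, !a.2) (b.1, !b.2) := by
    intro a b hab
    induction hab with
    | refl => exact .refl
    | @tail c d hcd hstep ihs =>
      refine Relation.ReflTransGen.tail ihs ?_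
      rcases hchar d.1 c.1 d.2 c.2 hstep with ⟨hp, he⟩ | ⟨hn, he⟩
      · rw [he]
        exact hstep_pos d.1 c.1 (!c.2) hp
      · rw [he]
        exact hstep_neg d.1 c.1 (!c.2) hn
  have F2 : ∀ (a b : Fin N) (t : Bool), ∃ s, Relation.ReflTransGen r (a, t) (b, s) := by
    intro a b t
    induction hSC a b with
    | refl => exact ⟨t, .refl⟩
    | @tail c d hreach hstep ihs =>
      obtain ⟨s, hs⟩ := ihs
      rcases lt_or_gt_of_ne hstep.2 with hneg | hpos
      · exact ⟨!s, hs.tail (hstep_neg d c s hneg)⟩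
      · exact ⟨s, hs.tail (hstep_pos d c s hpos)⟩
  by_cases hA : ∃ (i : Fin N) (t : Bool), Relation.ReflTransGen r (i, t) (i, !t)
  · obtain ⟨i, t, hit⟩ := hA
    have hff : ∀ u : Bool, Relation.ReflTransGen r (i, u) (i, !u) := by
      intro u
      rcases eq_or_ne u t with rfl | hne
      · exact hit
      · have hu : u = !t := Bool.eq_not_iff.mpr hne
        subst hu
        exact F1 (i, t) (i, !t) hit
    intro a b
    obtain ⟨s, h1⟩ := F2 a.1 i a.2
    obtain ⟨w, h2⟩ := F2 i b.1 s
    rcases eq_or_ne w b.2 with rfl | hne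
    · exact Relation.ReflTransGen.trans h1 h2
    · have hwb : (!w) = b.2 := (Bool.eq_not_iff.mpr hne.symm).symm
      have h3 : Relation.ReflTransGen r (i, !s) (b.1, !w) := F1 (i, s) (b.1, w) h2
      have h4 : Relation.ReflTransGen r (a.1, a.2) (b.1, !w) :=
        Relation.ReflTransGen.trans h1 (Relation.ReflTransGen.trans (hff s) h3)
      rw [hwb] at h4
      exact h4
  · exfalso
    apply hnb
    push_neg at hA
    have hex : ∀ i, ∃ s, Relation.ReflTransGen r (i0, true) (i, s) := fun i => F2 i0 i true
    choose f hf using hex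
    have uniq : ∀ (i : Fin N) (s : Bool), Relation.ReflTransGen r (i0, true) (i, s) →
        s = f i := by
      intro i s hs
      by_contra hne
      have hsf : s = !(f i) := Bool.eq_not_iff.mpr hne
      subst hsf
      obtain ⟨w, hw⟩ := F2 i i0 (f i)
      cases w with
      | false =>
        exact hA i0 true (Relation.ReflTransGen.trans (hf i) hw)
      | true =>
        have h3 : Relation.ReflTransGen r (i, !(f i)) (i0, false) := F1 (i, f i) (i0, true) hw
        exact hA i0 true (Relation.ReflTransGen.trans hs h3)
    refine ⟨f, fun i j hij hPij => ?_⟩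
    rcases lt_or_gt_of_ne hPij with hneg2 | hpos2
    · have hu := uniq i (!(f j)) ((hf j).tail (hstep_neg i j (f j) hneg2))
      constructor
      · intro hfij
        exfalso
        rw [hfij] at hu
        exact absurd hu.symm (by cases f j <;> simp)
      · intro h0
        exact absurd h0 (not_lt.2 hneg2.le)
    · have hu := uniq i (f j) ((hf j).tail (hstep_pos i j (f j) hpos2))
      exact ⟨fun _ => hpos2, fun _ => hu.symm⟩

theorem stmt9 {N : ℕ} (P : Matrix (Fin N) (Fin N) ℝ)
    (habs : ∀ i, ∑ j, |P i j| = 1) (hdiag : ∀ i, 0 < P i i)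
    (hSC : StronglyConnected (fun j i : Fin N => i ≠ j ∧ P i j ≠ 0))
    (hneg : ∃ i j, P i j < 0) :
    Polarizes P ↔ MatBalanced P := by
  obtain ⟨ineg, jneg, hPneg⟩ := hneg
  haveI : Nonempty (Fin N) := ⟨ineg⟩
  have hij_ne : ineg ≠ jneg := by
    intro h
    rw [h] at hPneg
    linarith [hdiag jneg]
  constructor
  · -- Polarizes → MatBalanced
    intro hpol
    by_contra hnb
    set M : Matrix (Fin N × Bool) (Fin N × Bool) ℝ :=
      Matrix.of fun a b => if a.2 = b.2 then max (P a.1 b.1) 0 else max (-P a.1 b.1) 0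
      with hMdef
    have hM : ∀ a b : Fin N × Bool,
        M a b = if a.2 = b.2 then max (P a.1 b.1) 0 else max (-P a.1 b.1) 0 :=
      fun a b => rfl
    set Q : Matrix (Fin N) (Fin N) ℝ := Matrix.of fun i j => |P i j| with hQdef
    have hQ : ∀ i j, Q i j = |P i j| := fun i j => rfl
    have hMnn : ∀ a b, 0 ≤ M a b := by
      intro a b
      rw [hM]
      split <;> exact le_max_right _ _
    have hMdiag : ∀ a, 0 < M a a := by
      intro a
      rw [hM, if_pos rfl]
      exact lt_max_iff.2 (Or.inl (hdiag a.1))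
    have hMsc := lift_sc P hSC ineg hnb M hM
    obtain ⟨T, hT⟩ := prim M hMnn hMdiag hMsc
    have hQrow : ∀ i, ∑ j, Q i j = 1 := fun i => habs i
    have hQTrow : ∀ i, ∑ j, (Q ^ T) i j = 1 := pow_row_sum Q hQrow T
    have hstrict : ∀ i, ∑ j, |(P ^ T) i j| < 1 := by
      intro i
      have hlt : ∀ j, |(P ^ T) i j| < (Q ^ T) i j := by
        intro j
        obtain ⟨hd, hs⟩ := lift_id P Q hQ M hM T i j true
        rw [← hd, ← hs]
        have h1 := hT (i, true) (j, true)
        have h2 := hT (i, true) (j, !true)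
        rw [abs_sub_lt_iff]
        constructor <;> linarith
      calc ∑ j, |(P ^ T) i j| < ∑ j, (Q ^ T) i j :=
            Finset.sum_lt_sum_of_nonempty Finset.univ_nonempty (fun j _ => hlt j)
        _ = 1 := hQTrow i
    set γ : ℝ := Finset.univ.sup' Finset.univ_nonempty (fun i => ∑ j, |(P ^ T) i j|)
      with hγdef
    have hγ1 : γ < 1 := by
      rw [hγdef, Finset.sup'_lt_iff]
      intro i _
      exact hstrict i
    have hγ0 : 0 ≤ γ := le_trans (Finset.sum_nonneg fun j _ => abs_nonneg _)
      (Finset.le_sup' (fun i => ∑ j, |(P ^ T) i j|) (Finset.mem_univ (Classical.arbitrary _)))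
    have hγrow : ∀ i, ∑ j, |(P ^ T) i j| ≤ γ := fun i =>
      Finset.le_sup' (fun i => ∑ j, |(P ^ T) i j|) (Finset.mem_univ i)
    have hzero : ∀ (x : Fin N → ℝ) (i : Fin N),
        Tendsto (fun t => (P ^ t *ᵥ x) i) atTop (nhds 0) :=
      fun x i => decay P habs T γ hγ0 hγ1 hγrow x i
    have hvol : (volume : Measure (Fin N → ℝ)) ≠ 0 := by
      have hpos := isOpen_univ.measure_pos (volume : Measure (Fin N → ℝ)) ⟨0, trivial⟩
      intro h
      rw [h] at hpos
      simp at hpos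
    haveI : (ae (volume : Measure (Fin N → ℝ))).NeBot := ae_neBot.2 hvol
    unfold Polarizes at hpol
    obtain ⟨x0, c, hc, L, hLabs, hLtend, -⟩ := hpol.exists
    have hL0 : L ineg = 0 := tendsto_nhds_unique (hLtend ineg) (hzero x0 ineg)
    have := hLabs ineg
    rw [hL0] at this
    simp at this
    linarith
  · -- MatBalanced → Polarizes
    rintro ⟨f, hbal⟩
    set s : Fin N → ℝ := fun i => if f i then 1 else -1 with hsdef
    have hs2 : ∀ i, s i * s i = 1 := by
      intro i
      by_cases h : f i <;> simp [hsdef, h]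
    have hsabs : ∀ i, |s i| = 1 := by
      intro i
      by_cases h : f i <;> simp [hsdef, h]
    set Q : Matrix (Fin N) (Fin N) ℝ := Matrix.of fun i j => |P i j| with hQdef
    have hQ : ∀ i j, Q i j = |P i j| := fun i j => rfl
    have hQnn : ∀ i j, 0 ≤ Q i j := fun i j => abs_nonneg _
    have hQrow : ∀ i, ∑ j, Q i j = 1 := fun i => habs i
    have hQdiag : ∀ i, 0 < Q i i := fun i => abs_pos.2 (hdiag i).ne'
    have hQP : ∀ i j, Q i j = s i * P i j * s j := by
      intro i j
      rcases eq_or_ne i j with rfl | hij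
      · have := hs2 i
        rw [hQ, abs_of_pos (hdiag i)]
        nlinarith [hdiag i]
      · by_cases h0 : P i j = 0
        · rw [hQ, h0]
          simp
        · rcases lt_or_gt_of_ne h0 with hn | hp
          · have hfne : ¬ (f i = f j) := by
              intro hfe
              have := (hbal i j hij h0).1 hfe
              linarith
            rw [hQ, abs_of_neg hn]
            by_cases h1 : f i <;> by_cases h2 : f j <;> simp [hsdef, h1, h2] at hfne ⊢ <;> ring
          · have hfe : f i = f j := (hbal i j hij h0).2 hp
            rw [hQ, abs_of_pos hp]
            by_cases h1 : f i <;> by_cases h2 : f j <;> simp [hsdef, h1, h2, hfe] at hfe ⊢ <;>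
              first | ring | simp_all
    have hPQ : ∀ (x : Fin N → ℝ) (t : ℕ) (i : Fin N),
        (P ^ t *ᵥ x) i = s i * ((Q ^ t *ᵥ fun j => s j * x j) i) := by
      intro x t
      induction t with
      | zero =>
        intro i
        simp only [pow_zero, Matrix.one_mulVec]
        have h1 := hs2 i
        linear_combination (-(x i)) * h1
      | succ t ih =>
        intro i
        have hPstep : P ^ (t + 1) *ᵥ x = P *ᵥ (P ^ t *ᵥ x) := by
          rw [mulVec_mulVec, ← pow_succ']
        have hQstep : Q ^ (t + 1) *ᵥ (fun j => s j * x j)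
            = Q *ᵥ (Q ^ t *ᵥ fun j => s j * x j) := by
          rw [mulVec_mulVec, ← pow_succ']
        rw [hPstep, hQstep]
        show ∑ j, P i j * (P ^ t *ᵥ x) j
          = s i * ∑ j, Q i j * (Q ^ t *ᵥ fun j => s j * x j) j
        rw [Finset.mul_sum]
        apply Finset.sum_congr rfl
        intro j _
        rw [ih j, hQP i j]
        have h1 := hs2 i
        linear_combination (-(P i j * s j * (Q ^ t *ᵥ fun j => s j * x j) j)) * h1
    have hQsc : ∀ a b : Fin N, Relation.ReflTransGen (fun x y => 0 < Q y x) a b := by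
      intro a b
      exact Relation.ReflTransGen.mono (p := fun x y => 0 < Q y x)
        (fun x y (hxy : y ≠ x ∧ P y x ≠ 0) => show 0 < Q y x by rw [hQ]; exact abs_pos.2 hxy.2) a b (hSC a b)
    obtain ⟨T, hT⟩ := prim Q hQnn hQdiag hQsc
    set δ0 : ℝ := Finset.univ.inf' Finset.univ_nonempty
      (fun p : Fin N × Fin N => (Q ^ T) p.1 p.2) with hδ0def
    have hδ0pos : 0 < δ0 := by
      obtain ⟨p, -, hp⟩ := Finset.exists_mem_eq_inf' (Finset.univ_nonempty)
        (fun p : Fin N × Fin N => (Q ^ T) p.1 p.2)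
      rw [hδ0def, hp]
      exact hT p.1 p.2
    set δ : ℝ := min δ0 (1/2) with hδdef
    have hδpos : 0 < δ := lt_min hδ0pos (by norm_num)
    have hδ2 : 2 * δ ≤ 1 := by
      have := min_le_right δ0 (1/2 : ℝ)
      rw [hδdef]
      linarith
    have hδle : ∀ a b, δ ≤ (Q ^ T) a b := fun a b =>
      le_trans (min_le_left _ _)
        (Finset.inf'_le (fun p : Fin N × Fin N => (Q ^ T) p.1 p.2) (Finset.mem_univ (a, b)))
    have hconv := fun x => stoch_converge Q hQnn hQrow T δ hδpos hδ2 hδle x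
    choose ℓ hℓ using hconv
    have i1 : Fin N := Classical.arbitrary _
    have hl_add : ∀ x y, ℓ (x + y) = ℓ x + ℓ y := by
      intro x y
      refine tendsto_nhds_unique (hℓ (x + y) i1) ?_
      have h1 := (hℓ x i1).add (hℓ y i1)
      apply h1.congr
      intro t
      rw [mulVec_add]
      rfl
    have hl_smul : ∀ (c : ℝ) x, ℓ (c • x) = c * ℓ x := by
      intro c x
      refine tendsto_nhds_unique (hℓ (c • x) i1) ?_
      have h1 := (hℓ x i1).const_mul c
      apply h1.congr
      intro t
      rw [mulVec_smul]
      rfl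
    set Lmap : (Fin N → ℝ) →ₗ[ℝ] ℝ :=
      { toFun := fun x => ℓ (fun i => s i * x i)
        map_add' := by
          intro x y
          have h : (fun i => s i * (x + y) i) = (fun i => s i * x i) + (fun i => s i * y i) := by
            funext i
            simp [mul_add]
          show ℓ (fun i => s i * (x + y) i) = ℓ (fun i => s i * x i) + ℓ (fun i => s i * y i)
          rw [h, hl_add]
        map_smul' := by
          intro c x
          have h : (fun i => s i * (c • x) i) = c • (fun i => s i * x i) := by
            funext i
            simp only [Pi.smul_apply, smul_eq_mul]
            ring
          show ℓ (fun i => s i * (c • x) i) = c • ℓ (fun i => s i * x i)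
          rw [h, hl_smul]
          simp [smul_eq_mul] } with hLmapdef
    have hLapp : ∀ x, Lmap x = ℓ (fun i => s i * x i) := fun x => rfl
    have hone : ∀ t : ℕ, (Q ^ t) *ᵥ (fun _ => (1:ℝ)) = fun _ => 1 := by
      intro t
      funext i
      show ∑ j, (Q ^ t) i j * 1 = 1
      simp only [mul_one]
      exact pow_row_sum Q hQrow t i
    have hlone : ℓ (fun _ => (1:ℝ)) = 1 := by
      refine tendsto_nhds_unique (hℓ (fun _ => (1:ℝ)) i1) ?_
      have : ∀ t : ℕ, ((Q ^ t *ᵥ fun _ => (1:ℝ)) i1) = 1 := by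
        intro t
        rw [hone t]
      simp_rw [this]
      exact tendsto_const_nhds
    have hLs : Lmap s = 1 := by
      rw [hLapp]
      rw [show (fun i => s i * s i) = (fun _ : Fin N => (1:ℝ)) from funext hs2]
      exact hlone
    have hker : LinearMap.ker Lmap ≠ ⊤ := by
      intro h
      have hs_mem : s ∈ LinearMap.ker Lmap := h ▸ Submodule.mem_top
      rw [LinearMap.mem_ker, hLs] at hs_mem
      exact one_ne_zero hs_mem
    have hmeas : volume ((LinearMap.ker Lmap : Submodule ℝ (Fin N → ℝ)) : Set (Fin N → ℝ)) = 0 :=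
      Measure.addHaar_submodule _ _ hker
    unfold Polarizes
    rw [ae_iff]
    apply measure_mono_null _ hmeas
    intro x0 hx0
    simp only [Set.mem_setOf_eq] at hx0
    by_contra hxk
    apply hx0
    have hL0 : Lmap x0 ≠ 0 := by
      intro h
      exact hxk (LinearMap.mem_ker.2 h)
    set y : Fin N → ℝ := fun j => s j * x0 j with hydef
    have hcL : Lmap x0 = ℓ y := rfl
    rw [hcL] at hL0
    refine ⟨|ℓ y|, abs_pos.2 hL0, fun i => s i * ℓ y, ?_, ?_, ?_⟩
    · intro i
      rw [abs_mul, hsabs i, one_mul]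
    · intro i
      have h1 := (hℓ y i).const_mul (s i)
      apply h1.congr
      intro t
      exact (hPQ x0 t i).symm
    · refine ⟨ineg, jneg, hij_ne, ?_⟩
      have hfne : ¬ (f ineg = f jneg) := by
        intro hfe
        have := (hbal ineg jneg hij_ne (ne_of_lt hPneg)).1 hfe
        linarith
      have hsne : s ineg = -s jneg := by
        by_cases h1 : f ineg <;> by_cases h2 : f jneg <;>
          simp [hsdef, h1, h2] at hfne ⊢
      show s ineg * ℓ y = -(s jneg * ℓ y)
      rw [hsne]
      ring
end

section
/- Let P = [[P₁₁, 0],[P₂₁, P₂₂]] with P₁₁ ∈ ℝ^{r×r} irreducible, |P| row-stochastic, P having positive diagonal entries, and G(P) containing a directed spanning tree rooted in the vertex set of G(P₁₁). If G(P₁₁) is structurally unbalanced, then the solution of x(t+1) = Px(t) converges to zero for every initial condition. -/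
open Matrix Filter

private lemma sign_iff_aux {a b p : ℝ} (ha : a ≠ 0) (hb : b ≠ 0) (h : 0 < a * b * p) :
    ((0 < a ↔ 0 < b) ↔ 0 < p) := by
  rcases ha.lt_or_gt with ha' | ha' <;> rcases hb.lt_or_gt with hb' | hb'
  · have hp : 0 < p := by nlinarith [mul_pos_of_neg_of_neg ha' hb']
    exact iff_of_true (by constructor <;> intro h' <;> linarith) hp
  · have hp : p < 0 := by nlinarith [mul_neg_of_neg_of_pos ha' hb']
    exact iff_of_false (fun hiff => by have := hiff.mpr hb'; linarith) (by linarith)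
  · have hp : p < 0 := by nlinarith [mul_neg_of_pos_of_neg ha' hb']
    exact iff_of_false (fun hiff => by have := hiff.mp ha'; linarith) (by linarith)
  · have hp : 0 < p := by nlinarith [mul_pos ha' hb']
    exact iff_of_true (iff_of_true ha' hb') hp

theorem stmt10 {r m : ℕ}
    (P : Matrix (Fin r ⊕ Fin m) (Fin r ⊕ Fin m) ℝ)
    -- block lower-triangular form: P₁₂ = 0
    (hblock : ∀ (i : Fin r) (j : Fin m), P (Sum.inl i) (Sum.inr j) = 0)
    -- |P| row-stochastic, positive diagonal
    (habs : ∀ i, ∑ j, |P i j| = 1) (hdiag : ∀ i, 0 < P i i)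
    -- P₁₁ irreducible, i.e. G(P₁₁) strongly connected
    (hirr : StronglyConnected (fun j i : Fin r =>
      i ≠ j ∧ P (Sum.inl i) (Sum.inl j) ≠ 0))
    -- G(P) contains a spanning tree rooted in the vertex set of G(P₁₁)
    (htree : ∃ u : Fin r, ∀ v : Fin r ⊕ Fin m,
      Relation.ReflTransGen (fun j i => i ≠ j ∧ P i j ≠ 0) (Sum.inl u) v)
    -- G(P₁₁) structurally unbalanced
    (hUnbal : ¬ ∃ f : Fin r → Bool, ∀ i j, i ≠ j →
      P (Sum.inl i) (Sum.inl j) ≠ 0 → (f i = f j ↔ 0 < P (Sum.inl i) (Sum.inl j))) :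
    ∀ x0 : Fin r ⊕ Fin m → ℝ, Tendsto (fun t => P ^ t *ᵥ x0) atTop (nhds 0) := by
  -- r ≥ 1
  have hr : Nonempty (Fin r) := by
    rcases Nat.eq_zero_or_pos r with h | h
    · subst h
      exact absurd ⟨Fin.elim0, fun i => i.elim0⟩ hUnbal
    · exact ⟨⟨0, h⟩⟩
  obtain ⟨i₀⟩ := hr
  -- row sums of |P^t|
  set S : ℕ → (Fin r ⊕ Fin m) → ℝ := fun t i => ∑ j, |(P ^ t) i j| with hSdef
  have hS0 : ∀ i, S 0 i = 1 := by
    intro i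
    have habs1 : ∀ j, |(1 : Matrix (Fin r ⊕ Fin m) (Fin r ⊕ Fin m) ℝ) i j|
        = if i = j then 1 else 0 := by
      intro j; rcases eq_or_ne i j with h | h <;> simp [Matrix.one_apply, h]
    simp only [hSdef, pow_zero]
    rw [Finset.sum_congr rfl fun j _ => habs1 j]
    simp
  -- zero block persists
  have hblk : ∀ (t : ℕ) (i : Fin r) (j : Fin m), (P ^ t) (Sum.inl i) (Sum.inr j) = 0 := by
    intro t
    induction t with
    | zero => intro i j; simp [Matrix.one_apply]
    | succ t ih =>
      intro i j
      rw [pow_succ', Matrix.mul_apply]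
      apply Finset.sum_eq_zero
      intro k _
      rcases k with a | b
      · rw [ih a j, mul_zero]
      · rw [hblock i b, zero_mul]
  -- the recursion bound
  have hSrec : ∀ (t : ℕ) (i : Fin r ⊕ Fin m), S (t + 1) i ≤ ∑ k, |P i k| * S t k := by
    intro t i
    calc S (t + 1) i = ∑ j, |∑ k, P i k * (P ^ t) k j| := by
          simp only [hSdef, pow_succ', Matrix.mul_apply]
      _ ≤ ∑ j, ∑ k, |P i k * (P ^ t) k j| :=
          Finset.sum_le_sum fun j _ => Finset.abs_sum_le_sum_abs _ _
      _ = ∑ k, |P i k| * S t k := by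
          rw [Finset.sum_comm]
          exact Finset.sum_congr rfl fun k _ => by
            simp only [hSdef, Finset.mul_sum, abs_mul]
  have hSle : ∀ (t : ℕ) (i : Fin r ⊕ Fin m), S t i ≤ 1 := by
    intro t
    induction t with
    | zero => intro i; rw [hS0]
    | succ t ih =>
      intro i
      refine (hSrec t i).trans ?_
      calc ∑ k, |P i k| * S t k ≤ ∑ k, |P i k| * 1 :=
            Finset.sum_le_sum fun k _ => mul_le_mul_of_nonneg_left (ih k) (abs_nonneg _)
        _ = 1 := by simpa using habs i
  -- deficiency propagation along one edge
  have hprop : ∀ (t : ℕ) (i k : Fin r ⊕ Fin m), P i k ≠ 0 → S t k < 1 → S (t + 1) i < 1 := by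
    intro t i k hk hlt
    refine lt_of_le_of_lt (hSrec t i) ?_
    have : ∑ k', |P i k'| * S t k' < ∑ k', |P i k'| * 1 := by
      refine Finset.sum_lt_sum (fun j _ => mul_le_mul_of_nonneg_left (hSle t j) (abs_nonneg _))
        ⟨k, Finset.mem_univ k, ?_⟩
      exact mul_lt_mul_of_pos_left hlt (abs_pos.mpr hk)
    calc ∑ k', |P i k'| * S t k' < ∑ k', |P i k'| * 1 := this
      _ = 1 := by simpa using habs i
  have hpers : ∀ (t t' : ℕ) (i : Fin r ⊕ Fin m), t ≤ t' → S t i < 1 → S t' i < 1 := by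
    intro t t' i htt
    induction t' , htt using Nat.le_induction with
    | base => exact id
    | succ n hn ih => exact fun h => hprop n i i (ne_of_gt (hdiag i)) (ih h)
  -- propagation along paths
  have hpath : ∀ (a b : Fin r ⊕ Fin m),
      Relation.ReflTransGen (fun j i => i ≠ j ∧ P i j ≠ 0) a b →
      ∀ t, S t a < 1 → ∃ t', S t' b < 1 := by
    intro a b hab
    induction hab with
    | refl => exact fun t h => ⟨t, h⟩
    | tail _ hbc ih =>
      intro t h
      obtain ⟨t', h'⟩ := ih t h
      exact ⟨t' + 1, hprop t' _ _ hbc.2 h'⟩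
  -- THE CORE: some first-block row sum eventually deficient
  have hcore : ∃ (t : ℕ) (u : Fin r), S t (Sum.inl u) < 1 := by
    by_contra hcon
    push_neg at hcon
    have H : ∀ (t : ℕ) (u : Fin r), S t (Sum.inl u) = 1 :=
      fun t u => le_antisymm (hSle t _) (hcon t u)
    -- block entries
    set A : ℕ → Fin r → Fin r → ℝ := fun t i j => (P ^ t) (Sum.inl i) (Sum.inl j) with hAdef
    have hArec : ∀ (t : ℕ) (i j : Fin r),
        A (t + 1) i j = ∑ k, P (Sum.inl i) (Sum.inl k) * A t k j := by
      intro t i j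
      simp only [hAdef, pow_succ', Matrix.mul_apply]
      rw [Fintype.sum_sum_type]
      simp [hblock]
    have hrow : ∀ i : Fin r, ∑ k, |P (Sum.inl i) (Sum.inl k)| = 1 := by
      intro i
      have := habs (Sum.inl i)
      rw [Fintype.sum_sum_type] at this
      simpa [hblock] using this
    have hSA : ∀ (t : ℕ) (i : Fin r), ∑ j, |A t i j| = 1 := by
      intro t i
      have := H t i
      simp only [hSdef] at this
      rw [Fintype.sum_sum_type] at this
      simpa [hblk] using this
    -- no cancellation
    have hEq : ∀ (t : ℕ) (i j : Fin r),
        ∑ k, |P (Sum.inl i) (Sum.inl k) * A t k j| = |A (t + 1) i j| := by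
      intro t i j
      have hnn : ∀ j' ∈ (Finset.univ : Finset (Fin r)),
          0 ≤ (∑ k, |P (Sum.inl i) (Sum.inl k) * A t k j'|) - |A (t + 1) i j'| := by
        intro j' _
        rw [hArec]
        simpa using Finset.abs_sum_le_sum_abs
          (fun k => P (Sum.inl i) (Sum.inl k) * A t k j') Finset.univ
      have hsum0 : ∑ j', ((∑ k, |P (Sum.inl i) (Sum.inl k) * A t k j'|) - |A (t + 1) i j'|)
          = 0 := by
        rw [Finset.sum_sub_distrib]
        have h1 : ∑ j', ∑ k, |P (Sum.inl i) (Sum.inl k) * A t k j'| = 1 := by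
          rw [Finset.sum_comm]
          calc ∑ k, ∑ j', |P (Sum.inl i) (Sum.inl k) * A t k j'|
              = ∑ k, |P (Sum.inl i) (Sum.inl k)| * (∑ j', |A t k j'|) := by
                exact Finset.sum_congr rfl fun k _ => by
                  simp [abs_mul, Finset.mul_sum]
            _ = ∑ k, |P (Sum.inl i) (Sum.inl k)| := by
                exact Finset.sum_congr rfl fun k _ => by rw [hSA t k, mul_one]
            _ = 1 := hrow i
        rw [h1, hSA (t + 1) i, sub_self]
      have := (Finset.sum_eq_zero_iff_of_nonneg hnn).mp hsum0 j (Finset.mem_univ j)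
      linarith [this]
    -- sign coherence
    have hsign : ∀ (t : ℕ) (i j k : Fin r),
        0 ≤ (P (Sum.inl i) (Sum.inl k) * A t k j) * A (t + 1) i j ∧
        ((P (Sum.inl i) (Sum.inl k) * A t k j) ≠ 0 → A (t + 1) i j ≠ 0) := by
      intro t i j k
      set c : Fin r → ℝ := fun k => P (Sum.inl i) (Sum.inl k) * A t k j with hcdef
      have hs : A (t + 1) i j = ∑ k, c k := hArec t i j
      have heq : ∑ k, |c k| = |A (t + 1) i j| := hEq t i j
      rcases eq_or_ne (A (t + 1) i j) 0 with h0 | h0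
      · have : ∀ k' ∈ (Finset.univ : Finset (Fin r)), c k' = 0 := by
          intro k' hk'
          have := (Finset.sum_eq_zero_iff_of_nonneg
            (fun k' _ => abs_nonneg (c k'))).mp (by rw [heq, h0, abs_zero]) k' hk'
          exact abs_eq_zero.mp this
        have hck0 := this k (Finset.mem_univ k)
        simp only [hcdef] at hck0
        constructor
        · rw [hck0]; simp
        · intro hne; exact absurd hck0 hne
      refine ⟨?_, fun _ => h0⟩
      rcases h0.lt_or_gt with hneg | hpos
      · -- all c k ≤ 0
        have hck : c k = -|c k| := by
          have hle : ∀ k' ∈ (Finset.univ : Finset (Fin r)), -|c k'| ≤ c k' :=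
            fun k' _ => neg_abs_le _
          have hsum : ∑ k', -|c k'| = ∑ k', c k' := by
            rw [Finset.sum_neg_distrib, heq, abs_of_neg hneg, ← hs, neg_neg]
          exact ((Finset.sum_eq_sum_iff_of_le hle).mp hsum k (Finset.mem_univ k)).symm
        have hck' : c k ≤ 0 := by rw [hck]; simp [abs_nonneg]
        simp only [hcdef] at hck'
        nlinarith [hck', hneg.le]
      · -- all c k ≥ 0
        have hck : c k = |c k| := by
          have hle : ∀ k' ∈ (Finset.univ : Finset (Fin r)), c k' ≤ |c k'| :=
            fun k' _ => le_abs_self _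
          have hsum : ∑ k', c k' = ∑ k', |c k'| := by
            rw [heq, abs_of_pos hpos, ← hs]
          exact (Finset.sum_eq_sum_iff_of_le hle).mp hsum k (Finset.mem_univ k)
        have hck' : 0 ≤ c k := by rw [hck]; exact abs_nonneg _
        simp only [hcdef] at hck'
        exact mul_nonneg hck' hpos.le
    -- positive diagonal of A
    have hdiagA : ∀ (t : ℕ) (i : Fin r), 0 < A t i i := by
      intro t
      induction t with
      | zero => intro i; simp [hAdef, Matrix.one_apply]
      | succ t ih =>
        intro i
        obtain ⟨h1, h2⟩ := hsign t i i i
        have hc : 0 < P (Sum.inl i) (Sum.inl i) * A t i i :=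
          mul_pos (hdiag (Sum.inl i)) (ih i)
        have hne := h2 (ne_of_gt hc)
        rcases hne.lt_or_gt with h | h
        · nlinarith
        · exact h
    -- nonzero entries spread and persist
    have hNZmono : ∀ (t : ℕ) (i j : Fin r), A t i j ≠ 0 → A (t + 1) i j ≠ 0 := by
      intro t i j h
      exact (hsign t i j i).2 (mul_ne_zero (ne_of_gt (hdiag (Sum.inl i))) h)
    have hNZedge : ∀ (t : ℕ) (i k j : Fin r),
        P (Sum.inl i) (Sum.inl k) ≠ 0 → A t k j ≠ 0 → A (t + 1) i j ≠ 0 := by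
      intro t i k j hp h
      exact (hsign t i j k).2 (mul_ne_zero hp h)
    have hNZ : ∀ i j : Fin r, ∃ t, A t i j ≠ 0 := by
      intro i j
      have hpth := hirr j i
      induction hpth with
      | refl => exact ⟨0, ne_of_gt (hdiagA 0 j)⟩
      | tail _ hbc ih =>
        obtain ⟨t, ht⟩ := ih
        exact ⟨t + 1, hNZedge t _ _ j hbc.2 ht⟩
    choose g hg using hNZ
    set T : ℕ := Finset.univ.sup (fun p : Fin r × Fin r => g p.1 p.2) with hTdef
    have hNZT : ∀ i j : Fin r, A T i j ≠ 0 := by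
      intro i j
      have hle : g i j ≤ T :=
        Finset.le_sup (f := fun p : Fin r × Fin r => g p.1 p.2)
          (Finset.mem_univ (i, j))
      have : ∀ t, g i j ≤ t → A t i j ≠ 0 := by
        intro t ht
        induction t, ht using Nat.le_induction with
        | base => exact hg i j
        | succ n hn ih => exact hNZmono n i j ih
      exact this T hle
    -- build the balanced bipartition
    refine hUnbal ⟨fun i => decide (0 < A T i i₀), ?_⟩
    intro i j hij hp
    have ha := hNZT i i₀
    have hb := hNZT j i₀
    obtain ⟨hsi1, hsi2⟩ := hsign T i i₀ i
    obtain ⟨hsj1, hsj2⟩ := hsign T i i₀ j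
    have hs0 : A (T + 1) i i₀ ≠ 0 := hsj2 (mul_ne_zero hp hb)
    -- sign(s) = sign(a)
    have has : 0 < A T i i₀ * A (T + 1) i i₀ := by
      have hne : P (Sum.inl i) (Sum.inl i) * A T i i₀ * A (T + 1) i i₀ ≠ 0 :=
        mul_ne_zero (mul_ne_zero (ne_of_gt (hdiag (Sum.inl i))) ha) hs0
      have hpos : 0 < P (Sum.inl i) (Sum.inl i) * A T i i₀ * A (T + 1) i i₀ :=
        lt_of_le_of_ne hsi1 (Ne.symm hne)
      nlinarith [hdiag (Sum.inl i)]
    have hpbs : 0 < P (Sum.inl i) (Sum.inl j) * A T j i₀ * A (T + 1) i i₀ := by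
      have hne : P (Sum.inl i) (Sum.inl j) * A T j i₀ * A (T + 1) i i₀ ≠ 0 :=
        mul_ne_zero (mul_ne_zero hp hb) hs0
      exact lt_of_le_of_ne hsj1 (Ne.symm hne)
    have habp : 0 < A T i i₀ * A T j i₀ * P (Sum.inl i) (Sum.inl j) := by
      nlinarith [mul_pos has hpbs, mul_self_nonneg (A (T + 1) i i₀)]
    rw [decide_eq_decide]
    exact sign_iff_aux ha hb habp
  -- spread deficiency to all vertices
  obtain ⟨t₀, u, hu⟩ := hcore
  obtain ⟨u₀, hu₀⟩ := htree
  have hlift : Relation.ReflTransGen (fun j i => i ≠ j ∧ P i j ≠ 0)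
      (Sum.inl u) (Sum.inl u₀) := by
    refine Relation.ReflTransGen.lift Sum.inl ?_ _ _ (hirr u u₀)
    intro a b hab
    exact ⟨fun h => hab.1 (Sum.inl.inj h), hab.2⟩
  have hall : ∀ v : Fin r ⊕ Fin m, ∃ t, S t v < 1 := by
    intro v
    exact hpath (Sum.inl u) v (hlift.trans (hu₀ v)) t₀ hu
  choose g hg using hall
  set N : ℕ := (Finset.univ.sup g) + 1 with hNdef
  have hN1 : 1 ≤ N := Nat.le_add_left 1 _
  have hltN : ∀ v, S N v < 1 := by
    intro v
    refine hpers (g v) N v ?_ (hg v)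
    exact le_trans (Finset.le_sup (Finset.mem_univ v)) (Nat.le_succ _)
  -- the contraction constant
  have hne : (Finset.univ : Finset (Fin r ⊕ Fin m)).Nonempty := ⟨Sum.inl i₀, Finset.mem_univ _⟩
  set c : ℝ := Finset.univ.sup' hne (fun i => S N i) with hcdef
  have hc1 : c < 1 := (Finset.sup'_lt_iff hne).mpr fun i _ => hltN i
  have hc0 : 0 ≤ c := by
    refine le_trans ?_ (Finset.le_sup' (fun i => S N i) (Finset.mem_univ (Sum.inl i₀)))
    exact Finset.sum_nonneg fun j _ => abs_nonneg _
  -- sup-norm machinery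
  intro x0
  set Y : ((Fin r ⊕ Fin m) → ℝ) → ℝ := fun y => Finset.univ.sup' hne (fun j => |y j|)
    with hYdef
  have hYle : ∀ y j, |y j| ≤ Y y := by
    intro y j
    simp only [hYdef]
    exact Finset.le_sup' (fun j => |y j|) (Finset.mem_univ j)
  have hY0 : ∀ y, 0 ≤ Y y := fun y => le_trans (abs_nonneg _) (hYle y (Sum.inl i₀))
  have lemA : ∀ (t : ℕ) (y : (Fin r ⊕ Fin m) → ℝ) (i), |(P ^ t *ᵥ y) i| ≤ S t i * Y y := by
    intro t y i
    calc |(P ^ t *ᵥ y) i| = |∑ j, (P ^ t) i j * y j| := by rw [Matrix.mulVec, dotProduct]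
      _ ≤ ∑ j, |(P ^ t) i j * y j| := Finset.abs_sum_le_sum_abs _ _
      _ ≤ ∑ j, |(P ^ t) i j| * Y y := by
          refine Finset.sum_le_sum fun j _ => ?_
          rw [abs_mul]
          exact mul_le_mul_of_nonneg_left (hYle y j) (abs_nonneg _)
      _ = S t i * Y y := by rw [← Finset.sum_mul]
  have K2 : ∀ y, Y (P ^ N *ᵥ y) ≤ c * Y y := by
    intro y
    refine Finset.sup'_le hne _ fun i _ => ?_
    refine (lemA N y i).trans ?_
    exact mul_le_mul_of_nonneg_right (Finset.le_sup' _ (Finset.mem_univ i)) (hY0 y)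
  have K3 : ∀ (t : ℕ) (y), Y (P ^ t *ᵥ y) ≤ Y y := by
    intro t y
    refine Finset.sup'_le hne _ fun i _ => ?_
    refine (lemA t y i).trans ?_
    calc S t i * Y y ≤ 1 * Y y := mul_le_mul_of_nonneg_right (hSle t i) (hY0 y)
      _ = Y y := one_mul _
  have K4 : ∀ (k : ℕ) (y), Y (P ^ (N * k) *ᵥ y) ≤ c ^ k * Y y := by
    intro k
    induction k with
    | zero => intro y; simp
    | succ k ih =>
      intro y
      have hsplit : P ^ (N * (k + 1)) *ᵥ y = P ^ (N * k) *ᵥ (P ^ N *ᵥ y) := by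
        rw [Matrix.mulVec_mulVec, ← pow_add]
        ring_nf
      rw [hsplit]
      calc Y (P ^ (N * k) *ᵥ (P ^ N *ᵥ y)) ≤ c ^ k * Y (P ^ N *ᵥ y) := ih _
        _ ≤ c ^ k * (c * Y y) :=
            mul_le_mul_of_nonneg_left (K2 y) (pow_nonneg hc0 k)
        _ = c ^ (k + 1) * Y y := by ring
  have K5 : ∀ t : ℕ, Y (P ^ t *ᵥ x0) ≤ c ^ (t / N) * Y x0 := by
    intro t
    have hsplit : P ^ t *ᵥ x0 = P ^ (N * (t / N)) *ᵥ (P ^ (t % N) *ᵥ x0) := by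
      rw [Matrix.mulVec_mulVec, ← pow_add, Nat.div_add_mod]
    rw [hsplit]
    calc Y (P ^ (N * (t / N)) *ᵥ (P ^ (t % N) *ᵥ x0))
        ≤ c ^ (t / N) * Y (P ^ (t % N) *ᵥ x0) := K4 _ _
      _ ≤ c ^ (t / N) * Y x0 :=
          mul_le_mul_of_nonneg_left (K3 _ _) (pow_nonneg hc0 _)
  -- conclude
  rw [tendsto_pi_nhds]
  intro i
  simp only [Pi.zero_apply]
  refine squeeze_zero_norm (a := fun t => c ^ (t / N) * Y x0) (fun t => ?_) ?_
  · rw [Real.norm_eq_abs]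
    exact (hYle (P ^ t *ᵥ x0) i).trans (K5 t)
  · have hdiv : Tendsto (fun t : ℕ => t / N) atTop atTop := by
      refine tendsto_atTop_atTop.mpr fun b => ⟨N * b, fun t ht => ?_⟩
      exact (Nat.le_div_iff_mul_le (Nat.lt_of_lt_of_le Nat.zero_lt_one hN1)).mpr
        (by rw [mul_comm]; exact ht)
    have := ((tendsto_pow_atTop_nhds_zero_of_lt_one hc0 hc1).comp hdiv).mul_const (Y x0)
    simpa using this
end

section
/- Let P = [[P₁₁, 0],[P₂₁, P₂₂]] with P₁₁ ∈ ℝ^{r×r} irreducible, |P| row-stochastic, P with positive diagonal, and G(P) containing a spanning tree rooted in G(P₁₁). If G(P₁₁) is structurally balanced with at least one negative edge, then along solutions of x(t+1) = Px(t): the states of agents 1,...,r converge to values ±C (agents in one part of the bipartition converge to C and the others to −C, with C ≠ 0 for almost all initial conditions), and the states x_i(t), i > r, converge to limits lying in the interval [−|C|, |C|]. -/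
open Matrix Filter MeasureTheory

/-- The limiting behavior asserted in the theorem: along `x(t+1) = P x(t)`
started from `x0`, the first `r` agents converge to `C` or `-C` according to
the bipartition `f`, and every remaining agent's state converges to a limit
lying in `[-|C|, |C|]`. -/
def SeparatesTo {r m : ℕ} (P : Matrix (Fin r ⊕ Fin m) (Fin r ⊕ Fin m) ℝ)
    (f : Fin r → Bool) (x0 : Fin r ⊕ Fin m → ℝ) (C : ℝ) : Prop :=
  (∀ i : Fin r, Tendsto (fun t => (P ^ t *ᵥ x0) (Sum.inl i)) atTop
      (nhds (if f i then C else -C))) ∧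
  (∀ j : Fin m, ∃ L : ℝ, |L| ≤ |C| ∧
      Tendsto (fun t => (P ^ t *ᵥ x0) (Sum.inr j)) atTop (nhds L))

namespace Stmt11Aux
set_option linter.unusedSectionVars false
section Stoch
variable {n : Type*} [Fintype n] [Nonempty n] [DecidableEq n]

def IsStoch (A : Matrix n n ℝ) : Prop := (∀ i j, 0 ≤ A i j) ∧ ∀ i, ∑ j, A i j = 1

lemma IsStoch.mul {A B : Matrix n n ℝ} (hA : IsStoch A) (hB : IsStoch B) : IsStoch (A * B) := by
  refine ⟨fun i j => ?_, fun i => ?_⟩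
  · exact Finset.sum_nonneg fun k _ => mul_nonneg (hA.1 i k) (hB.1 k j)
  · simp_rw [Matrix.mul_apply]
    rw [Finset.sum_comm]
    simp_rw [← Finset.mul_sum, hB.2, mul_one, hA.2]

lemma IsStoch.pow {A : Matrix n n ℝ} (hA : IsStoch A) (t : ℕ) : IsStoch (A ^ t) := by
  induction t with
  | zero => constructor
            · intro i j; by_cases h : i = j <;> simp [pow_zero, Matrix.one_apply, h]
            · intro i; simp [pow_zero, Matrix.one_apply]
  | succ t ih => rw [pow_succ]; exact ih.mul hA

noncomputable def msup (x : n → ℝ) : ℝ := Finset.univ.sup' Finset.univ_nonempty x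
noncomputable def minf (x : n → ℝ) : ℝ := Finset.univ.inf' Finset.univ_nonempty x

lemma minf_le_msup (x : n → ℝ) : minf x ≤ msup x := by
  obtain ⟨i⟩ := ‹Nonempty n›
  exact le_trans (Finset.inf'_le _ (Finset.mem_univ i)) (Finset.le_sup' _ (Finset.mem_univ i))

lemma mulVec_le_msup {A : Matrix n n ℝ} (hA : IsStoch A) (x : n → ℝ) (i : n) :
    (A *ᵥ x) i ≤ msup x := by
  calc (A *ᵥ x) i = ∑ j, A i j * x j := rfl
    _ ≤ ∑ j, A i j * msup x :=
        Finset.sum_le_sum fun j _ => mul_le_mul_of_nonneg_left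
          (Finset.le_sup' _ (Finset.mem_univ j)) (hA.1 i j)
    _ = msup x := by rw [← Finset.sum_mul, hA.2, one_mul]

lemma minf_le_mulVec {A : Matrix n n ℝ} (hA : IsStoch A) (x : n → ℝ) (i : n) :
    minf x ≤ (A *ᵥ x) i := by
  calc minf x = ∑ j, A i j * minf x := by rw [← Finset.sum_mul, hA.2, one_mul]
    _ ≤ ∑ j, A i j * x j :=
        Finset.sum_le_sum fun j _ => mul_le_mul_of_nonneg_left
          (Finset.inf'_le _ (Finset.mem_univ j)) (hA.1 i j)
    _ = (A *ᵥ x) i := rfl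

lemma msup_mulVec_le {A : Matrix n n ℝ} (hA : IsStoch A) (x : n → ℝ) :
    msup (A *ᵥ x) ≤ msup x :=
  Finset.sup'_le _ _ fun i _ => mulVec_le_msup hA x i

lemma minf_le_minf_mulVec {A : Matrix n n ℝ} (hA : IsStoch A) (x : n → ℝ) :
    minf x ≤ minf (A *ᵥ x) :=
  Finset.le_inf' _ _ fun i _ => minf_le_mulVec hA x i

/-- Dobrushin contraction. -/
lemma osc_contract {A : Matrix n n ℝ} (hA : IsStoch A) {δ : ℝ}
    (hδ : ∀ i j, δ ≤ A i j) (x : n → ℝ) :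
    msup (A *ᵥ x) - minf (A *ᵥ x) ≤ (1 - δ) * (msup x - minf x) := by
  obtain ⟨i, -, hi⟩ := Finset.exists_mem_eq_sup' (Finset.univ_nonempty (α := n)) (A *ᵥ x)
  obtain ⟨j, -, hj⟩ := Finset.exists_mem_eq_inf' (Finset.univ_nonempty (α := n)) (A *ᵥ x)
  rw [msup, minf, hi, hj]
  set c : n → ℝ := fun k => min (A i k) (A j k) with hc
  have hS1 : ∑ k, c k ≤ 1 := by
    calc ∑ k, c k ≤ ∑ k, A i k := Finset.sum_le_sum fun k _ => min_le_left _ _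
      _ = 1 := hA.2 i
  have hSδ : δ ≤ ∑ k, c k := by
    obtain ⟨k⟩ := ‹Nonempty n›
    have h1 : ∀ l, (0:ℝ) ≤ c l := fun l => le_min (hA.1 i l) (hA.1 j l)
    calc δ ≤ c k := le_min (hδ i k) (hδ j k)
      _ ≤ ∑ l, c l := Finset.single_le_sum (fun l _ => h1 l) (Finset.mem_univ k)
  have key : (A *ᵥ x) i - (A *ᵥ x) j ≤ (1 - ∑ k, c k) * (msup x - minf x) := by
    have e1 : (A *ᵥ x) i = ∑ k, (A i k - c k) * x k + ∑ k, c k * x k := by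
      simp [mulVec, dotProduct, sub_mul, Finset.sum_sub_distrib]
    have e2 : (A *ᵥ x) j = ∑ k, (A j k - c k) * x k + ∑ k, c k * x k := by
      simp [mulVec, dotProduct, sub_mul, Finset.sum_sub_distrib]
    have b1 : ∑ k, (A i k - c k) * x k ≤ (1 - ∑ k, c k) * msup x := by
      calc ∑ k, (A i k - c k) * x k ≤ ∑ k, (A i k - c k) * msup x :=
            Finset.sum_le_sum fun k _ => mul_le_mul_of_nonneg_left
              (Finset.le_sup' _ (Finset.mem_univ k))
              (sub_nonneg.mpr (min_le_left _ _))
        _ = (1 - ∑ k, c k) * msup x := by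
            rw [← Finset.sum_mul, Finset.sum_sub_distrib, hA.2]
    have b2 : (1 - ∑ k, c k) * minf x ≤ ∑ k, (A j k - c k) * x k := by
      calc (1 - ∑ k, c k) * minf x = ∑ k, (A j k - c k) * minf x := by
            rw [← Finset.sum_mul, Finset.sum_sub_distrib, hA.2]
        _ ≤ ∑ k, (A j k - c k) * x k :=
            Finset.sum_le_sum fun k _ => mul_le_mul_of_nonneg_left
              (Finset.inf'_le _ (Finset.mem_univ k))
              (sub_nonneg.mpr (min_le_right _ _))
    rw [e1, e2]
    have := sub_le_sub b1 b2
    calc ∑ k, (A i k - c k) * x k + ∑ k, c k * x k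
          - (∑ k, (A j k - c k) * x k + ∑ k, c k * x k)
        = ∑ k, (A i k - c k) * x k - ∑ k, (A j k - c k) * x k := by ring
      _ ≤ (1 - ∑ k, c k) * msup x - (1 - ∑ k, c k) * minf x := this
      _ = (1 - ∑ k, c k) * (msup x - minf x) := by ring
  calc (A *ᵥ x) i - (A *ᵥ x) j ≤ (1 - ∑ k, c k) * (msup x - minf x) := key
    _ ≤ (1 - δ) * (msup x - minf x) := by
        apply mul_le_mul_of_nonneg_right (by linarith) (sub_nonneg.mpr (minf_le_msup x))

lemma stoch_tendsto {A : Matrix n n ℝ} (hA : IsStoch A) {N : ℕ} {δ : ℝ} (hδpos : 0 < δ)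
    (hN : ∀ i j, δ ≤ (A ^ N) i j) (x : n → ℝ) :
    ∃ α, minf x ≤ α ∧ α ≤ msup x ∧
      ∀ i, Tendsto (fun t => ((A ^ t) *ᵥ x) i) atTop (nhds α) := by
  have hApow := hA.pow
  have hδ1 : δ ≤ 1 := by
    obtain ⟨i⟩ := ‹Nonempty n›
    calc δ ≤ (A ^ N) i i := hN i i
      _ ≤ ∑ j, (A ^ N) i j :=
        Finset.single_le_sum (fun j _ => (hApow N).1 i j) (Finset.mem_univ i)
      _ = 1 := (hApow N).2 i
  set φ : ℕ → ℝ := fun t => msup ((A ^ t) *ᵥ x) with hφ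
  set ψ : ℕ → ℝ := fun t => minf ((A ^ t) *ᵥ x) with hψ
  have hsucc : ∀ t, (A ^ (t + 1)) *ᵥ x = A *ᵥ ((A ^ t) *ᵥ x) := by
    intro t; rw [mulVec_mulVec, ← pow_succ']
  have hφanti : Antitone φ := antitone_nat_of_succ_le fun t => by
    rw [hφ]; simp only; rw [hsucc]; exact msup_mulVec_le hA _
  have hψmono : Monotone ψ := monotone_nat_of_le_succ fun t => by
    rw [hψ]; simp only; rw [hsucc]; exact minf_le_minf_mulVec hA _
  have hψφ : ∀ t, ψ t ≤ φ t := fun t => minf_le_msup _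
  have hψφ' : ∀ s t, ψ s ≤ φ t := fun s t =>
    le_trans (hψmono (le_max_left s t)) (le_trans (hψφ _) (hφanti (le_max_right s t)))
  have hbddφ : BddBelow (Set.range φ) := ⟨ψ 0, by rintro - ⟨t, rfl⟩; exact hψφ' 0 t⟩
  have hbddψ : BddAbove (Set.range ψ) := ⟨φ 0, by rintro - ⟨t, rfl⟩; exact hψφ' t 0⟩
  have hφlim : Tendsto φ atTop (nhds (⨅ t, φ t)) := tendsto_atTop_ciInf hφanti hbddφ
  have hψlim : Tendsto ψ atTop (nhds (⨆ t, ψ t)) := tendsto_atTop_ciSup hψmono hbddψ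
  set α := ⨅ t, φ t
  set β := ⨆ t, ψ t
  have hosc : ∀ k : ℕ, φ (k * N) - ψ (k * N) ≤ (1 - δ) ^ k * (φ 0 - ψ 0) := by
    intro k
    induction k with
    | zero => simp
    | succ k ih =>
      have hstep : φ ((k + 1) * N) - ψ ((k + 1) * N)
          ≤ (1 - δ) * (φ (k * N) - ψ (k * N)) := by
        have e : (A ^ ((k + 1) * N)) *ᵥ x = (A ^ N) *ᵥ ((A ^ (k * N)) *ᵥ x) := by
          rw [mulVec_mulVec, ← pow_add]; ring_nf
        rw [hφ, hψ]; simp only; rw [e]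
        exact osc_contract (hApow N) hN _
      calc φ ((k + 1) * N) - ψ ((k + 1) * N) ≤ (1 - δ) * (φ (k * N) - ψ (k * N)) := hstep
        _ ≤ (1 - δ) * ((1 - δ) ^ k * (φ 0 - ψ 0)) :=
            mul_le_mul_of_nonneg_left ih (by linarith)
        _ = (1 - δ) ^ (k + 1) * (φ 0 - ψ 0) := by ring
  have hαβ : α = β := by
    have h1 : β ≤ α := le_ciInf fun t => ciSup_le fun s => hψφ' s t
    have h2 : α - β ≤ 0 := by
      have hub : ∀ k : ℕ, α - β ≤ (1 - δ) ^ k * (φ 0 - ψ 0) := fun k =>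
        le_trans (sub_le_sub (ciInf_le hbddφ (k * N)) (le_ciSup hbddψ (k * N))) (hosc k)
      have hlim : Tendsto (fun k : ℕ => (1 - δ) ^ k * (φ 0 - ψ 0)) atTop (nhds 0) := by
        have := tendsto_pow_atTop_nhds_zero_of_lt_one (by linarith : (0:ℝ) ≤ 1 - δ)
          (by linarith : (1:ℝ) - δ < 1)
        simpa using this.mul_const (φ 0 - ψ 0)
      exact ge_of_tendsto hlim (Filter.Eventually.of_forall hub)
    linarith
  refine ⟨α, ?_, ?_, fun i => ?_⟩
  · have : ψ 0 ≤ β := le_ciSup hbddψ 0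
    have h0 : ψ 0 = minf x := by rw [hψ]; simp
    rw [← h0]; rw [hαβ]; exact this
  · have : α ≤ φ 0 := ciInf_le hbddφ 0
    have h0 : φ 0 = msup x := by rw [hφ]; simp
    rw [← h0]; exact this
  · have hg : Tendsto ψ atTop (nhds α) := by rw [hαβ]; exact hψlim
    exact tendsto_of_tendsto_of_tendsto_of_le_of_le hg hφlim
      (fun t => Finset.inf'_le _ (Finset.mem_univ i))
      (fun t => Finset.le_sup' _ (Finset.mem_univ i))

lemma pow_nonneg' {A : Matrix n n ℝ} (h0 : ∀ i j, 0 ≤ A i j) (t : ℕ) :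
    ∀ i j, 0 ≤ (A ^ t) i j := by
  induction t with
  | zero => intro i j; by_cases h : i = j <;> simp [Matrix.one_apply, h]
  | succ t ih =>
    intro i j
    rw [pow_succ', Matrix.mul_apply]
    exact Finset.sum_nonneg fun k _ => mul_nonneg (h0 i k) (ih k j)

lemma pow_pos_succ {A : Matrix n n ℝ} (h0 : ∀ i j, 0 ≤ A i j) (hd : ∀ i, 0 < A i i)
    {t : ℕ} {i j : n} (h : 0 < (A ^ t) i j) : 0 < (A ^ (t + 1)) i j := by
  rw [pow_succ', Matrix.mul_apply]
  have hterm : 0 < A i i * (A ^ t) i j := mul_pos (hd i) h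
  calc (0:ℝ) < A i i * (A ^ t) i j := hterm
    _ ≤ ∑ k, A i k * (A ^ t) k j :=
      Finset.single_le_sum (fun k _ => mul_nonneg (h0 i k) (pow_nonneg' h0 t k j))
        (Finset.mem_univ i)

lemma pow_pos_mono {A : Matrix n n ℝ} (h0 : ∀ i j, 0 ≤ A i j) (hd : ∀ i, 0 < A i i)
    {t t' : ℕ} (h : t ≤ t') {i j : n} (hp : 0 < (A ^ t) i j) : 0 < (A ^ t') i j := by
  induction t', h using Nat.le_induction with
  | base => exact hp
  | succ t' ht' ih => exact pow_pos_succ h0 hd ih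

lemma exists_pow_pos {A : Matrix n n ℝ} (h0 : ∀ i j, 0 ≤ A i j) (hd : ∀ i, 0 < A i i)
    (hirr : ∀ a b : n, Relation.ReflTransGen (fun x y => 0 < A y x) a b) :
    ∃ N δ, 0 < δ ∧ ∀ i j, δ ≤ (A ^ N) i j := by
  have reach : ∀ a b : n, ∃ t, 0 < (A ^ t) b a := by
    intro a b
    induction hirr a b with
    | refl => exact ⟨0, by simp⟩
    | tail hab hbc ih =>
      obtain ⟨t, ht⟩ := ih
      rename_i b' c'
      refine ⟨t + 1, ?_⟩
      rw [pow_succ', Matrix.mul_apply]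
      calc (0:ℝ) < A c' b' * (A ^ t) b' a := mul_pos hbc ht
        _ ≤ ∑ k, A c' k * (A ^ t) k a :=
          Finset.single_le_sum (fun k _ => mul_nonneg (h0 c' k) (pow_nonneg' h0 t k a))
            (Finset.mem_univ b')
  choose tf htf using fun p : n × n => reach p.2 p.1
  set N := Finset.univ.sup tf with hNdef
  have hNpos : ∀ i j, 0 < (A ^ N) i j := fun i j =>
    pow_pos_mono h0 hd (Finset.le_sup (Finset.mem_univ (i, j))) (htf (i, j))
  refine ⟨N, Finset.univ.inf' Finset.univ_nonempty (fun p : n × n => (A ^ N) p.1 p.2), ?_, ?_⟩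
  · obtain ⟨p, -, hp⟩ := Finset.exists_mem_eq_inf' (Finset.univ_nonempty (α := n × n))
      (fun p : n × n => (A ^ N) p.1 p.2)
    rw [hp]; exact hNpos p.1 p.2
  · exact fun i j => Finset.inf'_le _ (Finset.mem_univ (i, j))

lemma stoch_limit_linear {A : Matrix n n ℝ} (hA : IsStoch A) (hd : ∀ i, 0 < A i i)
    (hirr : ∀ a b : n, Relation.ReflTransGen (fun x y => 0 < A y x) a b) :
    ∃ c : (n → ℝ) →ₗ[ℝ] ℝ, c (fun _ => 1) = 1 ∧
      ∀ x i, Tendsto (fun t => ((A ^ t) *ᵥ x) i) atTop (nhds (c x)) := by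
  obtain ⟨N, δ, hδ, hN⟩ := exists_pow_pos hA.1 hd hirr
  have key : ∀ x : n → ℝ, ∃ α, ∀ i, Tendsto (fun t => ((A ^ t) *ᵥ x) i) atTop (nhds α) :=
    fun x => ⟨(stoch_tendsto hA hδ hN x).choose,
      (stoch_tendsto hA hδ hN x).choose_spec.2.2⟩
  choose c0 hc0 using key
  obtain ⟨i0⟩ := ‹Nonempty n›
  have hadd : ∀ x y, c0 (x + y) = c0 x + c0 y := by
    intro x y
    have h1 : Tendsto (fun t => ((A ^ t) *ᵥ (x + y)) i0) atTop (nhds (c0 x + c0 y)) := by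
      have : ∀ t, ((A ^ t) *ᵥ (x + y)) i0 = ((A ^ t) *ᵥ x) i0 + ((A ^ t) *ᵥ y) i0 := by
        intro t; rw [mulVec_add]; rfl
      simp_rw [this]
      exact (hc0 x i0).add (hc0 y i0)
    exact tendsto_nhds_unique (hc0 (x + y) i0) h1
  have hsmul : ∀ (a : ℝ) x, c0 (a • x) = a * c0 x := by
    intro a x
    have h1 : Tendsto (fun t => ((A ^ t) *ᵥ (a • x)) i0) atTop (nhds (a * c0 x)) := by
      have : ∀ t, ((A ^ t) *ᵥ (a • x)) i0 = a * ((A ^ t) *ᵥ x) i0 := by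
        intro t; rw [mulVec_smul]; rfl
      simp_rw [this]
      exact (hc0 x i0).const_mul a
    exact tendsto_nhds_unique (hc0 (a • x) i0) h1
  refine ⟨{ toFun := c0, map_add' := hadd, map_smul' := hsmul }, ?_, fun x i => hc0 x i⟩
  have hone : ∀ t : ℕ, ((A ^ t) *ᵥ (fun _ => (1:ℝ))) i0 = 1 := by
    intro t
    simp only [mulVec, dotProduct, mul_one]
    exact (hA.pow t).2 i0
  have := hc0 (fun _ => (1:ℝ)) i0
  simp_rw [hone] at this
  exact (tendsto_nhds_unique tendsto_const_nhds this).symm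

lemma ae_ne_zero {ι : Type*} [Fintype ι] (ℓ : (ι → ℝ) →ₗ[ℝ] ℝ) (hℓ : ℓ ≠ 0) :
    ∀ᵐ x : ι → ℝ ∂volume, ℓ x ≠ 0 := by
  have h : volume {x : ι → ℝ | ℓ x = 0} = 0 := by
    have : {x : ι → ℝ | ℓ x = 0} = (LinearMap.ker ℓ : Set (ι → ℝ)) := by
      ext x; simp [LinearMap.mem_ker]
    rw [this]
    exact Measure.addHaar_submodule volume _ (by simpa [LinearMap.ker_eq_top] using hℓ)
  filter_upwards [measure_eq_zero_iff_ae_notMem.mp h] with x hx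
  simpa using hx
end Stoch

section Bottom
variable {q : Type*} [Fintype q] [Nonempty q] [DecidableEq q]

lemma affine_iter_tendsto (M : Matrix q q ℝ) (T : ℕ) (ρ : ℝ)
    (hT : 1 ≤ T) (hρ0 : 0 ≤ ρ) (hρ1 : ρ < 1)
    (Hn : ∀ w : q → ℝ, ‖M *ᵥ w‖ ≤ ‖w‖)
    (Hc : ∀ w : q → ℝ, ‖(M ^ T) *ᵥ w‖ ≤ ρ * ‖w‖)
    (u : ℕ → q → ℝ) (uL : q → ℝ)
    (hu : Tendsto (fun t => ‖u t - uL‖) atTop (nhds 0))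
    (z : ℕ → q → ℝ) (hz : ∀ t, z (t + 1) = u t + M *ᵥ z t) :
    ∃ L : q → ℝ, L = uL + M *ᵥ L ∧ Tendsto z atTop (nhds L) := by
  set F : (q → ℝ) → (q → ℝ) := fun w => uL + M *ᵥ w with hF
  have hiter : ∀ (k : ℕ) (w w' : q → ℝ), F^[k] w - F^[k] w' = (M ^ k) *ᵥ (w - w') := by
    intro k
    induction k with
    | zero => intro w w'; simp
    | succ k ih =>
      intro w w'
      rw [Function.iterate_succ_apply', Function.iterate_succ_apply']
      show uL + M *ᵥ F^[k] w - (uL + M *ᵥ F^[k] w') = _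
      rw [show uL + M *ᵥ F^[k] w - (uL + M *ᵥ F^[k] w')
          = M *ᵥ F^[k] w - M *ᵥ F^[k] w' by abel, ← mulVec_sub, ih,
        mulVec_mulVec, ← pow_succ']
  have hlip : LipschitzWith ρ.toNNReal F^[T] := by
    rw [lipschitzWith_iff_dist_le_mul]
    intro w w'
    rw [dist_eq_norm, dist_eq_norm, hiter]
    calc ‖(M ^ T) *ᵥ (w - w')‖ ≤ ρ * ‖w - w'‖ := Hc _
      _ = ρ.toNNReal * ‖w - w'‖ := by rw [Real.coe_toNNReal _ hρ0]
  have hcontr : ContractingWith ρ.toNNReal F^[T] := by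
    constructor
    · exact_mod_cast (Real.toNNReal_lt_one).mpr hρ1
    · exact hlip
  set L := hcontr.fixedPoint F^[T] with hL
  have hfixT : F^[T] L = L := hcontr.fixedPoint_isFixedPt
  have hfix : F L = L := by
    have h1 : F^[T] (F L) = F L := by
      have e : F^[T] (F L) = F (F^[T] L) :=
        (Function.iterate_succ_apply F T L).symm.trans (Function.iterate_succ_apply' F T L)
      rw [e, hfixT]
    exact (hcontr.fixedPoint_unique h1).trans hL.symm
  have hML : uL + M *ᵥ L = L := hfix
  refine ⟨L, hML.symm, ?_⟩
  set w : ℕ → q → ℝ := fun t => z t - L with hw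
  have hwrec : ∀ t, w (t + 1) = (u t - uL) + M *ᵥ w t := by
    intro t
    show z (t + 1) - L = (u t - uL) + M *ᵥ (z t - L)
    calc z (t + 1) - L = u t + M *ᵥ z t - (uL + M *ᵥ L) := by rw [hz t, hML]
      _ = (u t - uL) + (M *ᵥ z t - M *ᵥ L) := by abel
      _ = (u t - uL) + M *ᵥ (z t - L) := by rw [mulVec_sub]
  rw [Metric.tendsto_atTop]
  intro ε hε
  have h1ρ : (0:ℝ) < 1 - ρ := by linarith
  have hTpos : (0:ℝ) < (T : ℝ) := by exact_mod_cast hT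
  set δ := ε * (1 - ρ) / (4 * T) with hδdef
  have hδpos : 0 < δ := div_pos (mul_pos hε h1ρ) (by positivity)
  obtain ⟨t₁, ht₁⟩ : ∃ t₁, ∀ t ≥ t₁, ‖u t - uL‖ ≤ δ := by
    obtain ⟨t₁, h⟩ := (Metric.tendsto_atTop.mp hu) δ hδpos
    refine ⟨t₁, fun t ht => ?_⟩
    have := h t ht
    rw [Real.dist_eq, sub_zero, abs_of_nonneg (norm_nonneg _)] at this
    exact this.le
  set d : ℕ → ℝ := fun t => ‖w t‖ with hd
  have hd0 : ∀ t, 0 ≤ d t := fun t => norm_nonneg _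
  have F1 : ∀ t, t₁ ≤ t → d (t + 1) ≤ d t + δ := by
    intro t ht
    calc d (t + 1) = ‖(u t - uL) + M *ᵥ w t‖ := by rw [hd]; simp only; rw [hwrec]
      _ ≤ ‖u t - uL‖ + ‖M *ᵥ w t‖ := norm_add_le _ _
      _ ≤ δ + d t := add_le_add (ht₁ t ht) (Hn _)
      _ = d t + δ := by ring
  have F2' : ∀ t, t₁ ≤ t → ∀ k, ‖w (t + k) - (M ^ k) *ᵥ w t‖ ≤ k * δ := by
    intro t ht k
    induction k with
    | zero => simp
    | succ k ih =>
      have e : w (t + k + 1) - (M ^ (k + 1)) *ᵥ w t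
          = (u (t + k) - uL) + M *ᵥ (w (t + k) - (M ^ k) *ᵥ w t) := by
        have hMk : (M ^ (k + 1)) *ᵥ w t = M *ᵥ ((M ^ k) *ᵥ w t) := by
          rw [mulVec_mulVec, ← pow_succ']
        have hMs : M *ᵥ (w (t + k) - (M ^ k) *ᵥ w t)
            = M *ᵥ w (t + k) - M *ᵥ ((M ^ k) *ᵥ w t) := mulVec_sub M _ _
        rw [hwrec (t + k), hMk, hMs]
        abel
      have e2 : t + (k + 1) = t + k + 1 := by omega
      calc ‖w (t + (k + 1)) - (M ^ (k + 1)) *ᵥ w t‖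
          = ‖(u (t + k) - uL) + M *ᵥ (w (t + k) - (M ^ k) *ᵥ w t)‖ := by rw [e2, e]
        _ ≤ ‖u (t + k) - uL‖ + ‖M *ᵥ (w (t + k) - (M ^ k) *ᵥ w t)‖ := norm_add_le _ _
        _ ≤ δ + k * δ := add_le_add (ht₁ _ (le_trans ht (Nat.le_add_right _ _)))
            (le_trans (Hn _) ih)
        _ = (k + 1 : ℕ) * δ := by push_cast; ring
  have F2 : ∀ t, t₁ ≤ t → d (t + T) ≤ ρ * d t + T * δ := by
    intro t ht
    calc d (t + T) = ‖(w (t + T) - (M ^ T) *ᵥ w t) + (M ^ T) *ᵥ w t‖ := by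
          rw [hd]; simp only; congr 1; abel
      _ ≤ ‖w (t + T) - (M ^ T) *ᵥ w t‖ + ‖(M ^ T) *ᵥ w t‖ := norm_add_le _ _
      _ ≤ T * δ + ρ * d t := add_le_add (F2' t ht T) (Hc _)
      _ = ρ * d t + T * δ := by ring
  set a : ℕ → ℝ := fun nn => d (t₁ + nn * T) with ha
  have F3 : ∀ nn, a (nn + 1) ≤ ρ * a nn + T * δ := by
    intro nn
    have harith : t₁ + (nn + 1) * T = (t₁ + nn * T) + T := by ring
    rw [ha]; simp only; rw [harith]
    exact F2 _ (Nat.le_add_right _ _)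
  have hcsum : ρ * (T * δ / (1 - ρ)) + T * δ = T * δ / (1 - ρ) := by
    field_simp
    ring
  have F4 : ∀ nn, a nn ≤ ρ ^ nn * a 0 + T * δ / (1 - ρ) := by
    intro nn
    induction nn with
    | zero =>
      simp only [pow_zero, one_mul]
      have : 0 ≤ T * δ / (1 - ρ) := by positivity
      linarith
    | succ nn ih =>
      calc a (nn + 1) ≤ ρ * a nn + T * δ := F3 nn
        _ ≤ ρ * (ρ ^ nn * a 0 + T * δ / (1 - ρ)) + T * δ :=
            add_le_add_left (mul_le_mul_of_nonneg_left ih hρ0) _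
        _ = ρ ^ (nn + 1) * a 0 + (ρ * (T * δ / (1 - ρ)) + T * δ) := by ring
        _ = ρ ^ (nn + 1) * a 0 + T * δ / (1 - ρ) := by rw [hcsum]
  have F5 : ∀ t, t₁ ≤ t → d t ≤ a ((t - t₁) / T) + T * δ := by
    intro t ht
    set Q := (t - t₁) / T with hQdef
    set S := (t - t₁) % T with hSdef
    have hdm : t = t₁ + Q * T + S := by
      have h := Nat.div_add_mod (t - t₁) T
      rw [← hQdef, ← hSdef] at h
      have hcomm : Q * T = T * Q := Nat.mul_comm Q T
      omega
    have hS : S < T := Nat.mod_lt _ (by omega)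
    have sub : ∀ s, d (t₁ + Q * T + s) ≤ a Q + s * δ := by
      intro s
      induction s with
      | zero => simp [ha]
      | succ s ih =>
        have : d (t₁ + Q * T + s + 1) ≤ d (t₁ + Q * T + s) + δ := F1 _ (by omega)
        have e2 : t₁ + Q * T + (s + 1) = t₁ + Q * T + s + 1 := by omega
        rw [e2]
        push_cast
        push_cast at ih
        linarith
    calc d t = d (t₁ + Q * T + S) := by rw [← hdm]
      _ ≤ a Q + S * δ := sub S
      _ ≤ a Q + T * δ := by
          have h1 : (S : ℝ) ≤ (T : ℝ) := by exact_mod_cast hS.le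
          nlinarith [hδpos.le]
  have hρpow : Tendsto (fun nn : ℕ => ρ ^ nn * a 0) atTop (nhds 0) := by
    simpa using (tendsto_pow_atTop_nhds_zero_of_lt_one hρ0 hρ1).mul_const (a 0)
  obtain ⟨n₀, hn₀⟩ : ∃ n₀, ρ ^ n₀ * a 0 < ε / 4 :=
    ((tendsto_order.1 hρpow).2 (ε / 4) (by positivity)).exists
  refine ⟨t₁ + n₀ * T, fun t htt => ?_⟩
  have ht : t₁ ≤ t := by omega
  have hQ : n₀ ≤ (t - t₁) / T := by
    rw [Nat.le_div_iff_mul_le (by omega : 0 < T)]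
    omega
  have hmono : ρ ^ ((t - t₁) / T) * a 0 ≤ ρ ^ n₀ * a 0 :=
    mul_le_mul_of_nonneg_right (pow_le_pow_of_le_one hρ0 hρ1.le hQ) (hd0 _)
  have hc1 : T * δ / (1 - ρ) = ε / 4 := by
    rw [hδdef]
    field_simp
  have hc2 : T * δ ≤ ε / 4 := by
    have : T * δ = T * δ / (1 - ρ) * (1 - ρ) := by field_simp
    rw [this, hc1]
    nlinarith
  have hdist : dist (z t) L = d t := by rw [dist_eq_norm]
  rw [hdist]
  have := F4 ((t - t₁) / T)
  have := F5 t ht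
  linarith

def absM (M : Matrix q q ℝ) : Matrix q q ℝ := fun j k => |M j k|

lemma absM_nonneg (M : Matrix q q ℝ) : ∀ j k, 0 ≤ absM M j k := fun j k => abs_nonneg _

lemma pow_nonneg'' {B : Matrix q q ℝ} (h0 : ∀ i j, 0 ≤ B i j) (t : ℕ) :
    ∀ i j, 0 ≤ (B ^ t) i j := by
  induction t with
  | zero => intro i j; by_cases h : i = j <;> simp [Matrix.one_apply, h]
  | succ t ih =>
    intro i j
    rw [pow_succ', Matrix.mul_apply]
    exact Finset.sum_nonneg fun k _ => mul_nonneg (h0 i k) (ih k j)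

lemma abs_pow_le (M : Matrix q q ℝ) (t : ℕ) :
    ∀ j k, |(M ^ t) j k| ≤ ((absM M) ^ t) j k := by
  induction t with
  | zero => intro j k; by_cases h : j = k <;> simp [Matrix.one_apply, h]
  | succ t ih =>
    intro j k
    rw [pow_succ', pow_succ', Matrix.mul_apply, Matrix.mul_apply]
    calc |∑ l, M j l * (M ^ t) l k| ≤ ∑ l, |M j l * (M ^ t) l k| :=
          Finset.abs_sum_le_sum_abs _ _
      _ ≤ ∑ l, absM M j l * ((absM M) ^ t) l k := by
          apply Finset.sum_le_sum
          intro l _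
          rw [abs_mul]
          exact mul_le_mul_of_nonneg_left (ih l k) (abs_nonneg _)

/-- row sums of powers of a nonnegative substochastic matrix are antitone in the exponent -/
lemma rowsum_pow_anti {B : Matrix q q ℝ} (h0 : ∀ i j, 0 ≤ B i j)
    (h1 : ∀ j, ∑ k, B j k ≤ 1) {t t' : ℕ} (h : t ≤ t') (j : q) :
    ∑ k, (B ^ t') j k ≤ ∑ k, (B ^ t) j k := by
  induction t', h using Nat.le_induction with
  | base => exact le_refl _
  | succ t' ht' ih =>
    refine le_trans ?_ ih
    calc ∑ k, (B ^ (t' + 1)) j k = ∑ k, ∑ l, (B ^ t') j l * B l k := by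
          simp_rw [pow_succ, Matrix.mul_apply]
      _ = ∑ l, (B ^ t') j l * ∑ k, B l k := by
          rw [Finset.sum_comm]; simp_rw [Finset.mul_sum]
      _ ≤ ∑ l, (B ^ t') j l * 1 :=
          Finset.sum_le_sum fun l _ => mul_le_mul_of_nonneg_left (h1 l) (pow_nonneg'' h0 t' j l)
      _ = ∑ l, (B ^ t') j l := by simp

lemma rowsum_pow_succ (B : Matrix q q ℝ) (t : ℕ) (j : q) :
    ∑ k, (B ^ (t + 1)) j k = ∑ l, B j l * ∑ k, (B ^ t) l k := by
  calc ∑ k, (B ^ (t + 1)) j k = ∑ k, ∑ l, B j l * (B ^ t) l k := by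
        simp_rw [pow_succ', Matrix.mul_apply]
    _ = ∑ l, B j l * ∑ k, (B ^ t) l k := by
        rw [Finset.sum_comm]; simp_rw [Finset.mul_sum]

lemma rowsum_pow_factor (B : Matrix q q ℝ) (t : ℕ) (j : q) :
    ∑ k, (B ^ (t + 1)) j k = ∑ l, (B ^ t) j l * ∑ k, B l k := by
  calc ∑ k, (B ^ (t + 1)) j k = ∑ k, ∑ l, (B ^ t) j l * B l k := by
        simp_rw [pow_succ, Matrix.mul_apply]
    _ = ∑ l, (B ^ t) j l * ∑ k, B l k := by
        rw [Finset.sum_comm]; simp_rw [Finset.mul_sum]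

/-- norm bound for mulVec by powers via absolute row sums -/
lemma mulVec_pow_norm_le (M : Matrix q q ℝ) (t : ℕ) {c : ℝ} (hc : 0 ≤ c)
    (h : ∀ j, ∑ k, ((absM M) ^ t) j k ≤ c) (w : q → ℝ) :
    ‖(M ^ t) *ᵥ w‖ ≤ c * ‖w‖ := by
  rw [pi_norm_le_iff_of_nonneg (by positivity)]
  intro j
  rw [Real.norm_eq_abs]
  calc |((M ^ t) *ᵥ w) j| = |∑ k, (M ^ t) j k * w k| := rfl
    _ ≤ ∑ k, |(M ^ t) j k| * |w k| := by
        refine le_trans (Finset.abs_sum_le_sum_abs _ _) ?_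
        simp_rw [abs_mul]; exact le_refl _
    _ ≤ ∑ k, ((absM M) ^ t) j k * ‖w‖ := by
        apply Finset.sum_le_sum
        intro k _
        have h1 : |w k| ≤ ‖w‖ := by
          have := norm_le_pi_norm w k
          rwa [Real.norm_eq_abs] at this
        exact mul_le_mul (abs_pow_le M t j k) h1 (abs_nonneg _)
          (le_trans (abs_nonneg _) (abs_pow_le M t j k))
    _ = (∑ k, ((absM M) ^ t) j k) * ‖w‖ := by rw [Finset.sum_mul]
    _ ≤ c * ‖w‖ := mul_le_mul_of_nonneg_right (h j) (norm_nonneg _)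

/-- the fixed point bound -/
lemma fixed_point_bound {M : Matrix q q ℝ} {u L : q → ℝ} {c : ℝ} (hc : 0 ≤ c)
    (hL : L = u + M *ᵥ L)
    (hu : ∀ j, |u j| ≤ (1 - ∑ k, absM M j k) * c)
    {T : ℕ} {ρ : ℝ} (hρ1 : ρ < 1) (hT : ∀ j, ∑ k, ((absM M) ^ T) j k ≤ ρ) :
    ∀ j, |L j| ≤ c := by
  set B := absM M with hB
  have hB0 : ∀ i j, 0 ≤ B i j := absM_nonneg M
  have base1 : ∀ k, |L k| ≤ (1 - ∑ l, B k l) * c + ∑ l, B k l * |L l| := by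
    intro k
    have e : L k = u k + ∑ l, M k l * L l := by
      conv_lhs => rw [hL]
      simp [mulVec, dotProduct]
    calc |L k| ≤ |u k| + |∑ l, M k l * L l| := by rw [e]; exact abs_add_le _ _
      _ ≤ (1 - ∑ l, B k l) * c + ∑ l, B k l * |L l| := by
          refine add_le_add (hu k) ?_
          refine le_trans (Finset.abs_sum_le_sum_abs _ _) ?_
          apply Finset.sum_le_sum
          intro l _
          rw [abs_mul]
          simp [hB, absM]
  have claim : ∀ nn j, |L j| ≤ (1 - ∑ k, (B ^ nn) j k) * c + ∑ k, (B ^ nn) j k * |L k| := by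
    intro nn
    induction nn with
    | zero =>
      intro j
      have e1 : ∑ k, (B ^ 0) j k = 1 := by simp [Matrix.one_apply]
      have e2 : ∑ k, (B ^ 0) j k * |L k| = |L j| := by
        simp [Matrix.one_apply]
      rw [e1, e2]; simp
    | succ nn ih =>
      intro j
      calc |L j| ≤ (1 - ∑ k, (B ^ nn) j k) * c + ∑ k, (B ^ nn) j k * |L k| := ih j
        _ ≤ (1 - ∑ k, (B ^ nn) j k) * c
            + ∑ k, (B ^ nn) j k * ((1 - ∑ l, B k l) * c + ∑ l, B k l * |L l|) := by
            refine add_le_add_right (Finset.sum_le_sum fun k _ =>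
              mul_le_mul_of_nonneg_left (base1 k) (pow_nonneg'' hB0 nn j k)) _
        _ = (1 - ∑ k, (B ^ (nn + 1)) j k) * c + ∑ k, (B ^ (nn + 1)) j k * |L k| := by
            have e1 : ∑ k, (B ^ nn) j k * ((1 - ∑ l, B k l) * c)
                = (∑ k, (B ^ nn) j k) * c - (∑ k, (B ^ (nn + 1)) j k) * c := by
              rw [rowsum_pow_factor]
              rw [Finset.sum_mul, Finset.sum_mul, ← Finset.sum_sub_distrib]
              exact Finset.sum_congr rfl fun k _ => by ring
            have e2 : ∑ k, (B ^ nn) j k * ∑ l, B k l * |L l|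
                = ∑ l, (B ^ (nn + 1)) j l * |L l| := by
              simp_rw [Finset.mul_sum]
              rw [Finset.sum_comm]
              apply Finset.sum_congr rfl
              intro l _
              rw [pow_succ, Matrix.mul_apply, Finset.sum_mul]
              apply Finset.sum_congr rfl
              intro k _
              ring
            simp_rw [mul_add]
            rw [Finset.sum_add_distrib, e1, e2]
            ring
  intro j
  obtain ⟨j0, -, hj0⟩ := Finset.exists_mem_eq_sup' (Finset.univ_nonempty (α := q))
    (fun k => |L k|)
  have hmax : ∀ k, |L k| ≤ |L j0| := fun k =>
    hj0 ▸ Finset.le_sup' (fun k => |L k|) (Finset.mem_univ k)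
  have hTbound : ∑ k, (B ^ T) j0 k * |L k| ≤ (∑ k, (B ^ T) j0 k) * |L j0| := by
    rw [Finset.sum_mul]
    exact Finset.sum_le_sum fun k _ =>
      mul_le_mul_of_nonneg_left (hmax k) (pow_nonneg'' hB0 T j0 k)
  have hkey := claim T j0
  have hσρ : ∑ k, (B ^ T) j0 k ≤ ρ := hT j0
  have h0L : 0 ≤ |L j0| := abs_nonneg _
  have h1 : |L j0| ≤ (1 - ∑ k, (B ^ T) j0 k) * c + (∑ k, (B ^ T) j0 k) * |L j0| := by
    linarith [hkey, hTbound]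
  have hLj0 : |L j0| ≤ c := by nlinarith [h1, hσρ, hρ1, hc, h0L]
  exact le_trans (hmax j) hLj0

end Bottom
end Stmt11Aux

open Stmt11Aux in
theorem stmt11 {r m : ℕ}
    (P : Matrix (Fin r ⊕ Fin m) (Fin r ⊕ Fin m) ℝ)
    (hblock : ∀ (i : Fin r) (j : Fin m), P (Sum.inl i) (Sum.inr j) = 0)
    (habs : ∀ i, ∑ j, |P i j| = 1) (hdiag : ∀ i, 0 < P i i)
    (hirr : StronglyConnected (fun j i : Fin r =>
      i ≠ j ∧ P (Sum.inl i) (Sum.inl j) ≠ 0))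
    (htree : ∃ u : Fin r, ∀ v : Fin r ⊕ Fin m,
      Relation.ReflTransGen (fun j i => i ≠ j ∧ P i j ≠ 0) (Sum.inl u) v)
    -- G(P₁₁) structurally balanced with bipartition f
    (f : Fin r → Bool)
    (hbal : ∀ i j, i ≠ j → P (Sum.inl i) (Sum.inl j) ≠ 0 →
      (f i = f j ↔ 0 < P (Sum.inl i) (Sum.inl j)))
    -- with at least one negative edge
    (hneg : ∃ i j, P (Sum.inl i) (Sum.inl j) < 0) :
    (∀ x0 : Fin r ⊕ Fin m → ℝ, ∃ C : ℝ, SeparatesTo P f x0 C) ∧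
    (∀ᵐ x0 : Fin r ⊕ Fin m → ℝ ∂volume, ∃ C : ℝ, C ≠ 0 ∧ SeparatesTo P f x0 C) := by
  classical
  obtain ⟨i₀, j₀, hij0⟩ := hneg
  haveI hner : Nonempty (Fin r) := ⟨i₀⟩
  set s : Fin r → ℝ := fun i => if f i then 1 else -1 with hs
  have hs2 : ∀ i, s i * s i = 1 := by intro i; by_cases h : f i <;> simp [hs, h]
  have hsabs : ∀ i, |s i| = 1 := by intro i; by_cases h : f i <;> simp [hs, h]
  have hss1 : ∀ i j, f i = f j → s i * s j = 1 := by
    intro i j h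
    by_cases hi : f i <;> simp [hs, hi, ← h]
  have hss2 : ∀ i j, f i ≠ f j → s i * s j = -1 := by
    intro i j h
    by_cases hi : f i <;> by_cases hj : f j
    · exact absurd (hi.trans hj.symm) h
    · simp [hs, hi, hj]
    · simp [hs, hi, hj]
    · have hfi : f i = false := Bool.not_eq_true _ ▸ hi
      have hfj : f j = false := Bool.not_eq_true _ ▸ hj
      exact absurd (hfi.trans hfj.symm) h
  set P11 : Matrix (Fin r) (Fin r) ℝ := fun i j => P (Sum.inl i) (Sum.inl j) with hP11
  set A : Matrix (Fin r) (Fin r) ℝ := fun i j => s i * s j * P11 i j with hA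
  have hAabs : ∀ i j, A i j = |P11 i j| := by
    intro i j
    by_cases heq : i = j
    · subst heq
      have h1 : 0 < P11 i i := hdiag (Sum.inl i)
      show s i * s i * P11 i i = |P11 i i|
      rw [hs2, one_mul, abs_of_pos h1]
    · by_cases h0 : P11 i j = 0
      · show s i * s j * P11 i j = |P11 i j|
        rw [h0]; simp
      · have hb := hbal i j heq h0
        show s i * s j * P11 i j = |P11 i j|
        by_cases hf : f i = f j
        · have hpos : 0 < P11 i j := hb.mp hf
          rw [hss1 i j hf, one_mul, abs_of_pos hpos]
        · have hneg' : P11 i j < 0 :=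
            lt_of_le_of_ne (not_lt.mp fun hp => hf (hb.mpr hp)) h0
          rw [hss2 i j hf, abs_of_neg hneg']
          ring
  have hArow : ∀ i, ∑ j, A i j = 1 := by
    intro i
    have h1 := habs (Sum.inl i)
    rw [Fintype.sum_sum_type] at h1
    have h2 : ∑ b : Fin m, |P (Sum.inl i) (Sum.inr b)| = 0 := by simp [hblock]
    rw [h2, add_zero] at h1
    calc ∑ j, A i j = ∑ j, |P11 i j| := Finset.sum_congr rfl fun j _ => hAabs i j
      _ = 1 := h1
  have hAstoch : IsStoch A := ⟨fun i j => (hAabs i j) ▸ abs_nonneg _, hArow⟩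
  have hAdiag : ∀ i, 0 < A i i := fun i => by
    rw [hAabs]; exact abs_pos.mpr (ne_of_gt (hdiag (Sum.inl i)))
  have hAirr : ∀ a b : Fin r, Relation.ReflTransGen (fun x y => 0 < A y x) a b := by
    intro a b
    refine Relation.ReflTransGen.mono ?_ a b (hirr a b)
    intro x y hxy
    show 0 < A y x
    rw [hAabs]
    exact abs_pos.mpr hxy.2
  obtain ⟨c, hc1, hctend⟩ := stoch_limit_linear hAstoch hAdiag hAirr
  set π : ((Fin r ⊕ Fin m) → ℝ) →ₗ[ℝ] (Fin r → ℝ) :=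
    { toFun := fun x0 i => s i * x0 (Sum.inl i),
      map_add' := fun x y => by funext i; simp [mul_add],
      map_smul' := fun a x => by funext i; simp [smul_eq_mul]; ring } with hπ
  set ℓ : ((Fin r ⊕ Fin m) → ℝ) →ₗ[ℝ] ℝ := c.comp π with hℓdef
  have hℓapp : ∀ x0, ℓ x0 = c (fun i => s i * x0 (Sum.inl i)) := fun x0 => rfl
  have hℓne : ℓ ≠ 0 := by
    intro h
    have h1 : ℓ (Sum.elim s 0) = 1 := by
      rw [hℓapp]
      have e : (fun i => s i * Sum.elim s (0 : Fin m → ℝ) (Sum.inl i)) = fun _ => (1:ℝ) :=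
        funext fun i => hs2 i
      rw [e]; exact hc1
    rw [h] at h1
    simp at h1
  -- block power identity
  have hblockpow : ∀ (x0 : (Fin r ⊕ Fin m) → ℝ) (t : ℕ) (i : Fin r),
      (P ^ t *ᵥ x0) (Sum.inl i) = ((P11 ^ t) *ᵥ fun j => x0 (Sum.inl j)) i := by
    intro x0 t
    induction t with
    | zero => intro i; simp
    | succ t ih =>
      intro i
      rw [pow_succ' P t, ← Matrix.mulVec_mulVec]
      show ∑ jj, P (Sum.inl i) jj * (P ^ t *ᵥ x0) jj = _
      rw [Fintype.sum_sum_type]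
      have h2 : ∑ b : Fin m, P (Sum.inl i) (Sum.inr b) * (P ^ t *ᵥ x0) (Sum.inr b) = 0 := by
        simp [hblock]
      rw [h2, add_zero]
      have hRr : ((P11 ^ (t+1)) *ᵥ fun j => x0 (Sum.inl j)) i
          = ∑ j, P11 i j * ((P11 ^ t) *ᵥ fun j' => x0 (Sum.inl j')) j := by
        rw [pow_succ' P11 t, ← Matrix.mulVec_mulVec]
        rfl
      rw [hRr]
      exact Finset.sum_congr rfl fun j _ => by rw [ih j]
  have hpowrel : ∀ (t : ℕ) (i j : Fin r), (A ^ t) i j = s i * s j * (P11 ^ t) i j := by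
    intro t
    induction t with
    | zero =>
      intro i j
      by_cases h : i = j
      · subst h; simp [Matrix.one_apply, hs2]
      · simp [Matrix.one_apply, h]
    | succ t ih =>
      intro i j
      rw [pow_succ' A t, pow_succ' P11 t, Matrix.mul_apply, Matrix.mul_apply]
      rw [Finset.mul_sum]
      apply Finset.sum_congr rfl
      intro k _
      rw [ih k j]
      show s i * s k * P11 i k * (s k * s j * (P11 ^ t) k j) = _
      calc s i * s k * P11 i k * (s k * s j * (P11 ^ t) k j)
          = s i * s j * (P11 i k * (P11 ^ t) k j) * (s k * s k) := by ring
        _ = s i * s j * (P11 i k * (P11 ^ t) k j) := by rw [hs2 k, mul_one]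
  -- the main per-initial-condition statement
  have main : ∀ x0, SeparatesTo P f x0 (ℓ x0) := by
    intro x0
    set C := ℓ x0 with hC
    have htop : ∀ i, Tendsto (fun t => (P ^ t *ᵥ x0) (Sum.inl i)) atTop (nhds (s i * C)) := by
      intro i
      have h1 : ∀ t, (P ^ t *ᵥ x0) (Sum.inl i)
          = s i * ((A ^ t) *ᵥ fun j => s j * x0 (Sum.inl j)) i := by
        intro t
        rw [hblockpow x0 t i]
        have h2 : ((A ^ t) *ᵥ fun j => s j * x0 (Sum.inl j)) i
            = s i * ((P11 ^ t) *ᵥ fun j => x0 (Sum.inl j)) i := by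
          show ∑ j, (A ^ t) i j * (s j * x0 (Sum.inl j)) = _
          have h3 : ((P11 ^ t) *ᵥ fun j => x0 (Sum.inl j)) i
              = ∑ j, (P11 ^ t) i j * x0 (Sum.inl j) := rfl
          rw [h3, Finset.mul_sum]
          apply Finset.sum_congr rfl
          intro j _
          rw [hpowrel t i j]
          calc s i * s j * (P11 ^ t) i j * (s j * x0 (Sum.inl j))
              = s i * ((P11 ^ t) i j * x0 (Sum.inl j)) * (s j * s j) := by ring
            _ = s i * ((P11 ^ t) i j * x0 (Sum.inl j)) := by rw [hs2 j, mul_one]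
        rw [h2, ← mul_assoc, hs2 i, one_mul]
      simp_rw [h1]
      have hcv : c (fun j => s j * x0 (Sum.inl j)) = C := (hℓapp x0).symm
      have := (hctend (fun j => s j * x0 (Sum.inl j)) i).const_mul (s i)
      rwa [hcv] at this
    constructor
    · intro i
      have := htop i
      by_cases hfi : f i
      · have e : s i * C = C := by simp [hs, hfi]
        rw [e] at this
        simpa [hfi] using this
      · have e : s i * C = -C := by simp [hs, hfi]
        rw [e] at this
        simpa [hfi] using this
    · intro j
      haveI : Nonempty (Fin m) := ⟨j⟩
      set R : Matrix (Fin m) (Fin r) ℝ := fun k i => P (Sum.inr k) (Sum.inl i) with hR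
      set M : Matrix (Fin m) (Fin m) ℝ := fun k l => P (Sum.inr k) (Sum.inr l) with hM
      have hrow : ∀ k, (∑ i, |R k i|) + ∑ l, absM M k l = 1 := by
        intro k
        have h1 := habs (Sum.inr k)
        rw [Fintype.sum_sum_type] at h1
        exact h1
      have hB0 : ∀ k l, 0 ≤ absM M k l := absM_nonneg M
      have hrow1 : ∀ k, ∑ l, absM M k l ≤ 1 := by
        intro k
        have h1 := hrow k
        have h0 : 0 ≤ ∑ i, |R k i| := Finset.sum_nonneg fun _ _ => abs_nonneg _
        linarith
      obtain ⟨u, hu⟩ := htree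
      have reach2 : ∀ v, Relation.ReflTransGen (fun jj ii => ii ≠ jj ∧ P ii jj ≠ 0) (Sum.inl u) v →
          ∀ jj : Fin m, v = Sum.inr jj → ∃ t, ∑ k, ((absM M) ^ t) jj k < 1 := by
        intro v hv
        induction hv with
        | refl => intro jj h; exact absurd h (by simp)
        | tail hab hstep ih =>
          rename_i b c'
          intro jj hc'
          subst hc'
          obtain ⟨hne', hP0⟩ := hstep
          cases b with
          | inl i =>
            refine ⟨1, ?_⟩
            rw [pow_one]
            have hri : 0 < |R jj i| := abs_pos.mpr hP0
            have h1 := hrow jj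
            have h0 : |R jj i| ≤ ∑ i', |R jj i'| :=
              Finset.single_le_sum (f := fun i' => |R jj i'|)
                (fun _ _ => abs_nonneg _) (Finset.mem_univ i)
            linarith
          | inr kk =>
            obtain ⟨t, ht⟩ := ih kk rfl
            refine ⟨t + 1, ?_⟩
            rw [rowsum_pow_succ]
            have hbpos : 0 < absM M jj kk := abs_pos.mpr hP0
            have hrsle : ∀ l, ∑ k, ((absM M) ^ t) l k ≤ 1 := by
              intro l
              have h1 := rowsum_pow_anti hB0 hrow1 (Nat.zero_le t) l
              simpa [Matrix.one_apply] using h1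
            calc ∑ l, absM M jj l * ∑ k, ((absM M) ^ t) l k
                < ∑ l, absM M jj l * 1 := by
                  apply Finset.sum_lt_sum
                  · intro l _
                    exact mul_le_mul_of_nonneg_left (hrsle l) (hB0 jj l)
                  · exact ⟨kk, Finset.mem_univ kk, mul_lt_mul_of_pos_left ht hbpos⟩
              _ = ∑ l, absM M jj l := by simp
              _ ≤ 1 := hrow1 jj
      have hreach : ∀ k : Fin m, ∃ t, ∑ l, ((absM M) ^ t) k l < 1 := fun k =>
        reach2 _ (hu (Sum.inr k)) k rfl
      choose tf htf using hreach
      set T := max 1 (Finset.univ.sup tf) with hTdef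
      have hT1 : 1 ≤ T := le_max_left _ _
      have hrsT : ∀ k, ∑ l, ((absM M) ^ T) k l < 1 := by
        intro k
        have h1 : tf k ≤ T := le_trans (Finset.le_sup (Finset.mem_univ k)) (le_max_right _ _)
        exact lt_of_le_of_lt (rowsum_pow_anti hB0 hrow1 h1 k) (htf k)
      set ρ := Finset.univ.sup' Finset.univ_nonempty (fun k => ∑ l, ((absM M) ^ T) k l) with hρdef
      have hρ1 : ρ < 1 := by
        obtain ⟨k, -, hk⟩ := Finset.exists_mem_eq_sup' (Finset.univ_nonempty (α := Fin m))
          (fun k => ∑ l, ((absM M) ^ T) k l)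
        rw [hρdef, hk]
        exact hrsT k
      have hρub : ∀ k, ∑ l, ((absM M) ^ T) k l ≤ ρ := fun k =>
        Finset.le_sup' (fun k' => ∑ l, ((absM M) ^ T) k' l) (Finset.mem_univ k)
      have hρ0 : 0 ≤ ρ :=
        le_trans (Finset.sum_nonneg fun l _ => pow_nonneg'' hB0 T j l) (hρub j)
      have Hn : ∀ w : Fin m → ℝ, ‖M *ᵥ w‖ ≤ ‖w‖ := by
        intro w
        have h1 := mulVec_pow_norm_le M 1 zero_le_one
          (fun k => by rw [pow_one]; exact hrow1 k) w
        simpa [pow_one] using h1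
      have Hc : ∀ w : Fin m → ℝ, ‖(M ^ T) *ᵥ w‖ ≤ ρ * ‖w‖ :=
        mulVec_pow_norm_le M T hρ0 hρub
      have hz : ∀ t, (fun k => (P ^ (t+1) *ᵥ x0) (Sum.inr k))
          = (fun k => ∑ i, R k i * (P ^ t *ᵥ x0) (Sum.inl i))
            + M *ᵥ (fun k => (P ^ t *ᵥ x0) (Sum.inr k)) := by
        intro t
        funext k
        show (P ^ (t+1) *ᵥ x0) (Sum.inr k) = _
        rw [pow_succ' P t, ← Matrix.mulVec_mulVec]
        show ∑ jj, P (Sum.inr k) jj * (P ^ t *ᵥ x0) jj = _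
        rw [Fintype.sum_sum_type]
        rfl
      have hul : Tendsto
          (fun t => ‖(fun k => ∑ i, R k i * (P ^ t *ᵥ x0) (Sum.inl i))
            - R *ᵥ (fun i => s i * C)‖) atTop (nhds 0) := by
        have h1 : Tendsto (fun t => (fun k => ∑ i, R k i * (P ^ t *ᵥ x0) (Sum.inl i)))
            atTop (nhds (R *ᵥ fun i => s i * C)) := by
          rw [tendsto_pi_nhds]
          intro k
          have h2 : ∀ i : Fin r, Tendsto (fun t => R k i * (P ^ t *ᵥ x0) (Sum.inl i))
              atTop (nhds (R k i * (s i * C))) := fun i => (htop i).const_mul (R k i)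
          have h3 := tendsto_finset_sum Finset.univ (fun i _ => h2 i)
          simpa [Matrix.mulVec, dotProduct] using h3
        exact tendsto_iff_norm_sub_tendsto_zero.mp h1
      obtain ⟨L, hfixL, hzL⟩ := affine_iter_tendsto M T ρ hT1 hρ0 hρ1 Hn Hc
        (fun t => fun k => ∑ i, R k i * (P ^ t *ᵥ x0) (Sum.inl i))
        (R *ᵥ fun i => s i * C) hul
        (fun t => fun k => (P ^ t *ᵥ x0) (Sum.inr k)) hz
      have habsC : ∀ k, |(R *ᵥ fun i => s i * C) k| ≤ (1 - ∑ l, absM M k l) * |C| := by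
        intro k
        have e1 : ∑ i, |R k i| = 1 - ∑ l, absM M k l := by
          have := hrow k; linarith
        calc |(R *ᵥ fun i => s i * C) k| = |∑ i, R k i * (s i * C)| := rfl
          _ ≤ ∑ i, |R k i * (s i * C)| := Finset.abs_sum_le_sum_abs _ _
          _ = ∑ i, |R k i| * |C| := by
              apply Finset.sum_congr rfl
              intro i _
              rw [abs_mul, abs_mul, hsabs i, one_mul]
          _ = (∑ i, |R k i|) * |C| := by rw [Finset.sum_mul]
          _ = (1 - ∑ l, absM M k l) * |C| := by rw [e1]
      have hLb : ∀ k, |L k| ≤ |C| :=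
        fixed_point_bound (abs_nonneg C) hfixL habsC hρ1 hρub
      refine ⟨L j, hLb j, ?_⟩
      exact (tendsto_pi_nhds.mp hzL) j
  constructor
  · exact fun x0 => ⟨ℓ x0, main x0⟩
  · filter_upwards [ae_ne_zero ℓ hℓne] with x0 hx0
    exact ⟨ℓ x0, hx0, main x0⟩
end

section
/- Let (P(t))_{t≥0} be a sequence of N×N matrices with positive diagonals such that each |P(t)| is row-stochastic and all nonzero entries satisfy |(P(t))_{ij}| ≥ γ for a fixed γ ∈ (0,1). Suppose there is a fixed bipartition of {1,...,N} into two nonempty sets such that in every graph G(P(t)) all edges between the sets are negative and all edges within each set are positive, and suppose there is an infinite sequence of uniformly bounded intervals [t_i, t_{i+1}) such that the union of graphs G(P(t)) over each interval is strongly connected. Then the system x(t+1) = P(t)x(t) polarizes. -/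
open Matrix Filter MeasureTheory

/-- The trajectory of the time-varying system `x(t+1) = P(t) x(t)`. -/
def traj {N : ℕ} (P : ℕ → Matrix (Fin N) (Fin N) ℝ) (x0 : Fin N → ℝ) :
    ℕ → Fin N → ℝ
  | 0 => x0
  | t + 1 => P t *ᵥ traj P x0 t

lemma cross {α : Type*} {adj : α → α → Prop} {S : α → Prop} {a b : α}
    (h : Relation.ReflTransGen adj a b) (ha : S a) (hb : ¬ S b) :
    ∃ k, S k ∧ ∃ i, ¬ S i ∧ adj k i := by
  induction h with
  | refl => exact absurd ha hb
  | tail hpath hadj ih =>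
    rename_i c d
    by_cases hc : S c
    · exact ⟨c, hc, d, hb, hadj⟩
    · exact ih hc

open scoped Classical in
noncomputable def Dset {N : ℕ} (A : ℕ → Matrix (Fin N) (Fin N) ℝ) (t1 : ℕ)
    (j0 : Fin N) : ℕ → Finset (Fin N)
  | 0 => {j0}
  | n+1 => Dset A t1 j0 n ∪
      Finset.univ.filter (fun i => ∃ k ∈ Dset A t1 j0 n, A (t1+n) i k ≠ 0)

lemma Dset_mono {N : ℕ} (A : ℕ → Matrix (Fin N) (Fin N) ℝ) (t1 : ℕ)
    (j0 : Fin N) : Monotone (Dset A t1 j0) := by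
  apply monotone_nat_of_le_succ
  intro n
  exact Finset.subset_union_left

lemma Dset_step {N : ℕ} {A : ℕ → Matrix (Fin N) (Fin N) ℝ} {t1 : ℕ}
    {j0 : Fin N} {n : ℕ} {i k : Fin N} (hk : k ∈ Dset A t1 j0 n)
    (hA : A (t1+n) i k ≠ 0) : i ∈ Dset A t1 j0 (n+1) := by
  classical
  apply Finset.mem_union_right
  simp only [Finset.mem_filter, Finset.mem_univ, true_and]
  exact ⟨k, hk, hA⟩

lemma consensus {N : ℕ} (hN : 2 ≤ N) (A : ℕ → Matrix (Fin N) (Fin N) ℝ)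
    (γ : ℝ) (hγ0 : 0 < γ) (hγ1 : γ ≤ 1)
    (h0 : ∀ t i j, 0 ≤ A t i j) (h1 : ∀ t i, ∑ j, A t i j = 1)
    (hd : ∀ t i, γ ≤ A t i i)
    (hlowA : ∀ t i j, A t i j ≠ 0 → γ ≤ A t i j)
    (ts : ℕ → ℕ) (B : ℕ) (hmono : ∀ k, ts k < ts (k+1))
    (hbdd : ∀ k, ts (k+1) - ts k ≤ B)
    (hjoint : ∀ k, StronglyConnected (fun j i : Fin N =>
      ∃ s, ts k ≤ s ∧ s < ts (k+1) ∧ i ≠ j ∧ A s i j ≠ 0))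
    (y : ℕ → Fin N → ℝ) (hy : ∀ t, y (t+1) = A t *ᵥ y t) :
    ∃ c, ∀ i, Tendsto (fun t => y t i) atTop (nhds c) := by
  have hNpos : 0 < N := by omega
  have hne : (Finset.univ : Finset (Fin N)).Nonempty := ⟨⟨0, hNpos⟩, Finset.mem_univ _⟩
  set Mt : ℕ → ℝ := fun t => Finset.univ.sup' hne (y t) with hMt
  set mt : ℕ → ℝ := fun t => Finset.univ.inf' hne (y t) with hmtd
  have hleM : ∀ t i, y t i ≤ Mt t := fun t i => Finset.le_sup' _ (Finset.mem_univ i)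
  have hgem : ∀ t i, mt t ≤ y t i := fun t i => Finset.inf'_le _ (Finset.mem_univ i)
  have hmM : ∀ t, mt t ≤ Mt t := fun t => le_trans (hgem t ⟨0, hNpos⟩) (hleM t _)
  have hstepM : ∀ t i, y (t+1) i ≤ Mt t := by
    intro t i
    rw [hy t]
    calc (A t *ᵥ y t) i = ∑ j, A t i j * y t j := rfl
    _ ≤ ∑ j, A t i j * Mt t := by
        apply Finset.sum_le_sum
        intro j _
        exact mul_le_mul_of_nonneg_left (hleM t j) (h0 t i j)
    _ = Mt t := by rw [← Finset.sum_mul, h1 t i, one_mul]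
  have hstepm : ∀ t i, mt t ≤ y (t+1) i := by
    intro t i
    rw [hy t]
    calc mt t = ∑ j, A t i j * mt t := by rw [← Finset.sum_mul, h1 t i, one_mul]
    _ ≤ ∑ j, A t i j * y t j := by
        apply Finset.sum_le_sum
        intro j _
        exact mul_le_mul_of_nonneg_left (hgem t j) (h0 t i j)
    _ = (A t *ᵥ y t) i := rfl
  have hManti : Antitone Mt := by
    apply antitone_nat_of_succ_le
    intro t
    exact Finset.sup'_le _ _ fun i _ => hstepM t i
  have hmmono : Monotone mt := by
    apply monotone_nat_of_le_succ
    intro t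
    exact Finset.le_inf' _ _ fun i _ => hstepm t i
  have htsmono : StrictMono ts := strictMono_nat_of_lt_succ hmono
  have htslin : ∀ k m, ts (k+m) ≤ ts k + m * B := by
    intro k m
    induction m with
    | zero => simp
    | succ m ih =>
      have h2 : ts (k+m+1) ≤ ts (k+m) + B := by
        have h3 := hbdd (k+m)
        have h4 := (htsmono (Nat.lt_succ_self (k+m))).le
        omega
      calc ts (k+(m+1)) = ts (k+m+1) := by ring_nf
      _ ≤ ts (k+m) + B := h2
      _ ≤ ts k + m*B + B := by omega
      _ = ts k + (m+1)*B := by ring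
  set δ : ℝ := γ ^ ((N-1) * B) with hδd
  have hδ0 : 0 < δ := pow_pos hγ0 _
  have hδ1 : δ ≤ 1 := pow_le_one₀ hγ0.le hγ1
  have key : ∀ k0, Mt (ts (k0 + (N-1))) - mt (ts (k0 + (N-1))) ≤
      (1 - δ) * (Mt (ts k0) - mt (ts k0)) := by
    intro k0
    set t1 := ts k0 with ht1
    have hΔ0 : 0 ≤ Mt t1 - mt t1 := sub_nonneg.mpr (hmM t1)
    obtain ⟨j0, -, hj0⟩ := Finset.exists_mem_eq_inf' hne (y t1)
    have hMle : ∀ n, Mt (t1 + n) ≤ Mt t1 := fun n => hManti (Nat.le_add_right _ _)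
    have I1 : ∀ n, ∀ i ∈ Dset A t1 j0 n,
        y (t1+n) i ≤ Mt t1 - γ^n * (Mt t1 - mt t1) := by
      intro n
      induction n with
      | zero =>
        intro i hi
        have : i = j0 := by simpa [Dset] using hi
        subst this
        have : y (t1+0) i = mt t1 := by rw [Nat.add_zero]; exact hj0.symm
        rw [this, pow_zero]
        ring_nf
        linarith
      | succ n ih =>
        intro i hi
        have hex : ∃ k ∈ Dset A t1 j0 n, A (t1+n) i k ≠ 0 := by
          classical
          rcases Finset.mem_union.mp hi with h | h
          · exact ⟨i, h, ne_of_gt (lt_of_lt_of_le hγ0 (hd _ i))⟩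
          · simpa using (Finset.mem_filter.mp h).2
        obtain ⟨k, hk, hAik⟩ := hex
        have hq : γ ≤ A (t1+n) i k := hlowA _ _ _ hAik
        have hq1 : A (t1+n) i k ≤ 1 := by
          have hsum := h1 (t1+n) i
          have : ∑ j ∈ Finset.univ.erase k, A (t1+n) i j ≥ 0 :=
            Finset.sum_nonneg fun j _ => h0 _ i j
          have h5 : A (t1+n) i k + ∑ j ∈ Finset.univ.erase k, A (t1+n) i j = 1 := by
            rw [Finset.add_sum_erase _ _ (Finset.mem_univ k)]; exact hsum
          linarith
        have hyk := ih k hk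
        have hsum : y (t1+n+1) i = ∑ j, A (t1+n) i j * y (t1+n) j := by
          rw [hy]; rfl
        have herase : ∑ j ∈ Finset.univ.erase k, A (t1+n) i j * y (t1+n) j
            ≤ (1 - A (t1+n) i k) * Mt t1 := by
          calc ∑ j ∈ Finset.univ.erase k, A (t1+n) i j * y (t1+n) j
              ≤ ∑ j ∈ Finset.univ.erase k, A (t1+n) i j * Mt t1 := by
                apply Finset.sum_le_sum
                intro j _
                exact mul_le_mul_of_nonneg_left ((hleM _ j).trans (hMle n)) (h0 _ i j)
            _ = (1 - A (t1+n) i k) * Mt t1 := by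
                rw [← Finset.sum_mul, Finset.sum_erase_eq_sub (Finset.mem_univ k), h1]
        have hsplit : y (t1+n+1) i = A (t1+n) i k * y (t1+n) k
            + ∑ j ∈ Finset.univ.erase k, A (t1+n) i j * y (t1+n) j := by
          rw [hsum, ← Finset.add_sum_erase _ _ (Finset.mem_univ k)]
        have h3 : A (t1+n) i k * y (t1+n) k ≤ A (t1+n) i k * (Mt t1 - γ^n * (Mt t1 - mt t1)) :=
          mul_le_mul_of_nonneg_left hyk (le_trans hγ0.le hq)
        have h4 : γ * (γ^n * (Mt t1 - mt t1)) ≤ A (t1+n) i k * (γ^n * (Mt t1 - mt t1)) :=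
          mul_le_mul_of_nonneg_right hq (by positivity)
        have heq : t1 + (n + 1) = t1 + n + 1 := rfl
        rw [heq]
        calc y (t1+n+1) i
            ≤ A (t1+n) i k * (Mt t1 - γ^n * (Mt t1 - mt t1)) + (1 - A (t1+n) i k) * Mt t1 := by
              rw [hsplit]; exact add_le_add h3 herase
          _ = Mt t1 - A (t1+n) i k * (γ^n * (Mt t1 - mt t1)) := by ring
          _ ≤ Mt t1 - γ^(n+1) * (Mt t1 - mt t1) := by
              have he2 : γ^(n+1) * (Mt t1 - mt t1) = γ * (γ^n * (Mt t1 - mt t1)) := by ring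
              rw [he2]; linarith
    have hj0mem : ∀ n, j0 ∈ Dset A t1 j0 n := fun n =>
      Dset_mono A t1 j0 (Nat.zero_le n) (by simp [Dset])
    have grow : ∀ j, N ≤ (Dset A t1 j0 (ts (k0+j) - t1)).card ∨
        j + 1 ≤ (Dset A t1 j0 (ts (k0+j) - t1)).card := by
      intro j
      induction j with
      | zero =>
        right
        have : ts (k0+0) - t1 = 0 := by rw [Nat.add_zero, ← ht1, Nat.sub_self]
        rw [this]
        simp [Dset]
      | succ j ih =>
        have hn01 : ts (k0+j) - t1 ≤ ts (k0+(j+1)) - t1 := by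
          have := (htsmono.monotone (show k0+j ≤ k0+(j+1) by omega))
          omega
        have hsub : Dset A t1 j0 (ts (k0+j) - t1) ⊆ Dset A t1 j0 (ts (k0+(j+1)) - t1) :=
          Dset_mono A t1 j0 hn01
        rcases ih with h | h
        · left; exact le_trans h (Finset.card_le_card hsub)
        · by_cases hu : Dset A t1 j0 (ts (k0+j) - t1) = Finset.univ
          · left
            have h6 : N ≤ (Dset A t1 j0 (ts (k0+j) - t1)).card := by
              rw [hu, Finset.card_univ, Fintype.card_fin]
            exact le_trans h6 (Finset.card_le_card hsub)
          · obtain ⟨b, hb⟩ : ∃ b, b ∉ Dset A t1 j0 (ts (k0+j) - t1) := by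
              by_contra hc
              push_neg at hc
              exact hu (Finset.eq_univ_iff_forall.mpr hc)
            have hpath := hjoint (k0+j) j0 b
            obtain ⟨k, hkS, i, hiS, s, hs1, hs2, hneq, hA⟩ :=
              cross (S := fun x => x ∈ Dset A t1 j0 (ts (k0+j) - t1)) hpath (hj0mem _) hb
            have ht1s : t1 ≤ s := le_trans (htsmono.monotone (Nat.le_add_right k0 j)) hs1
            have hkd : k ∈ Dset A t1 j0 (s - t1) :=
              Dset_mono A t1 j0 (by omega) hkS
            have hid : i ∈ Dset A t1 j0 (s - t1 + 1) := by
              apply Dset_step hkd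
              rwa [Nat.add_sub_cancel' ht1s]
            have hid2 : i ∈ Dset A t1 j0 (ts (k0+(j+1)) - t1) := by
              apply Dset_mono A t1 j0 _ hid
              have he : ts (k0+(j+1)) = ts (k0+j+1) := rfl
              omega
            right
            have hins : insert i (Dset A t1 j0 (ts (k0+j) - t1)) ⊆
                Dset A t1 j0 (ts (k0+(j+1)) - t1) := by
              intro x hx
              rcases Finset.mem_insert.mp hx with rfl | hx
              · exact hid2
              · exact hsub hx
            have h8 := Finset.card_le_card hins
            rw [Finset.card_insert_of_notMem hiS] at h8
            omega
    have hfull : Dset A t1 j0 (ts (k0+(N-1)) - t1) = Finset.univ := by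
      have hcard : N ≤ (Dset A t1 j0 (ts (k0+(N-1)) - t1)).card := by
        rcases grow (N-1) with h | h
        · exact h
        · omega
      apply Finset.eq_univ_of_card
      have h9 := Finset.card_le_univ (Dset A t1 j0 (ts (k0+(N-1)) - t1))
      rw [Fintype.card_fin] at h9 ⊢
      omega
    have ht1T : t1 ≤ ts (k0+(N-1)) := htsmono.monotone (Nat.le_add_right _ _)
    have hTB : ts (k0+(N-1)) - t1 ≤ (N-1) * B := by
      have := htslin k0 (N-1)
      omega
    have hδle : δ ≤ γ ^ (ts (k0+(N-1)) - t1) :=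
      pow_le_pow_of_le_one hγ0.le hγ1 hTB
    have hub : ∀ i, y (ts (k0+(N-1))) i ≤ Mt t1 - δ * (Mt t1 - mt t1) := by
      intro i
      have hi : i ∈ Dset A t1 j0 (ts (k0+(N-1)) - t1) := hfull ▸ Finset.mem_univ i
      have h10 := I1 (ts (k0+(N-1)) - t1) i hi
      rw [Nat.add_sub_cancel' ht1T] at h10
      have h11 : δ * (Mt t1 - mt t1) ≤ γ ^ (ts (k0+(N-1)) - t1) * (Mt t1 - mt t1) :=
        mul_le_mul_of_nonneg_right hδle hΔ0
      linarith
    have hMT : Mt (ts (k0+(N-1))) ≤ Mt t1 - δ * (Mt t1 - mt t1) :=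
      Finset.sup'_le _ _ fun i _ => hub i
    have hmT : mt t1 ≤ mt (ts (k0+(N-1))) := hmmono ht1T
    have hr : (1-δ) * (Mt t1 - mt t1) = Mt t1 - mt t1 - δ * (Mt t1 - mt t1) := by ring
    rw [hr]
    linarith
  -- global convergence
  have hdiffanti : Antitone (fun t => Mt t - mt t) := fun a b hab =>
    sub_le_sub (hManti hab) (hmmono hab)
  have hukey : ∀ k, Mt (ts ((k+1)*(N-1))) - mt (ts ((k+1)*(N-1))) ≤
      (1-δ) * (Mt (ts (k*(N-1))) - mt (ts (k*(N-1)))) := by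
    intro k
    have he : (k+1)*(N-1) = k*(N-1) + (N-1) := by ring
    rw [he]
    exact key _
  have hgeo : ∀ k, Mt (ts (k*(N-1))) - mt (ts (k*(N-1))) ≤
      (1-δ)^k * (Mt (ts 0) - mt (ts 0)) := by
    intro k
    induction k with
    | zero => simp
    | succ k ih =>
      calc Mt (ts ((k+1)*(N-1))) - mt (ts ((k+1)*(N-1)))
          ≤ (1-δ) * (Mt (ts (k*(N-1))) - mt (ts (k*(N-1)))) := hukey k
        _ ≤ (1-δ) * ((1-δ)^k * (Mt (ts 0) - mt (ts 0))) :=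
            mul_le_mul_of_nonneg_left ih (by linarith)
        _ = (1-δ)^(k+1) * (Mt (ts 0) - mt (ts 0)) := by ring
  have hlim0 : Tendsto (fun k => (1-δ)^k * (Mt (ts 0) - mt (ts 0))) atTop (nhds 0) := by
    have h12 := tendsto_pow_atTop_nhds_zero_of_lt_one (by linarith : (0:ℝ) ≤ 1-δ)
      (by linarith : (1:ℝ)-δ < 1)
    simpa using h12.mul_const (Mt (ts 0) - mt (ts 0))
  have hdu : Tendsto (fun k => Mt (ts (k*(N-1))) - mt (ts (k*(N-1)))) atTop (nhds 0) :=
    squeeze_zero (fun k => sub_nonneg.mpr (hmM _)) hgeo hlim0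
  have hbddb : BddBelow (Set.range fun t => Mt t - mt t) := by
    refine ⟨0, ?_⟩
    rintro x ⟨t, rfl⟩
    exact sub_nonneg.mpr (hmM t)
  have hdlim : Tendsto (fun t => Mt t - mt t) atTop (nhds (⨅ t, Mt t - mt t)) :=
    tendsto_atTop_ciInf hdiffanti hbddb
  have hustrict : StrictMono (fun k => ts (k*(N-1))) := by
    intro a b hab
    apply htsmono
    have hN1 : 0 < N - 1 := by omega
    exact Nat.mul_lt_mul_of_lt_of_le hab (le_refl (N-1)) hN1
  have huat : Tendsto (fun k => ts (k*(N-1))) atTop atTop := hustrict.tendsto_atTop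
  have hcomp : Tendsto (fun k => Mt (ts (k*(N-1))) - mt (ts (k*(N-1)))) atTop
      (nhds (⨅ t, Mt t - mt t)) := hdlim.comp huat
  have hinf0 : (⨅ t, Mt t - mt t) = 0 := tendsto_nhds_unique hcomp hdu
  rw [hinf0] at hdlim
  have hbdda : BddAbove (Set.range mt) := by
    refine ⟨Mt 0, ?_⟩
    rintro x ⟨t, rfl⟩
    exact (hmM t).trans (hManti (Nat.zero_le t))
  have hmlim : Tendsto mt atTop (nhds (⨆ t, mt t)) := tendsto_atTop_ciSup hmmono hbdda
  have hMlim : Tendsto Mt atTop (nhds (⨆ t, mt t)) := by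
    have h13 := hmlim.add hdlim
    simpa using h13
  refine ⟨⨆ t, mt t, fun i => ?_⟩
  exact tendsto_of_tendsto_of_tendsto_of_le_of_le hmlim hMlim (fun t => hgem t i)
    (fun t => hleM t i)

theorem stmt12 {N : ℕ} (P : ℕ → Matrix (Fin N) (Fin N) ℝ) (γ : ℝ)
    (hγ : 0 < γ ∧ γ < 1)
    (habs : ∀ t i, ∑ j, |P t i j| = 1) (hdiag : ∀ t i, 0 < P t i i)
    (hlow : ∀ t i j, P t i j ≠ 0 → γ ≤ |P t i j|)
    -- a fixed bipartition into two nonempty sets, valid for every G(P(t))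
    (f : Fin N → Bool)
    (hfne : (∃ i, f i = true) ∧ (∃ i, f i = false))
    (hbal : ∀ t i j, i ≠ j → P t i j ≠ 0 → (f i = f j ↔ 0 < P t i j))
    -- infinite sequence of uniformly bounded intervals with jointly strongly
    -- connected union graphs
    (ts : ℕ → ℕ) (B : ℕ) (hts0 : ts 0 = 0) (hmono : ∀ k, ts k < ts (k + 1))
    (hbdd : ∀ k, ts (k + 1) - ts k ≤ B)
    (hjoint : ∀ k, StronglyConnected (fun j i : Fin N =>
      ∃ s, ts k ≤ s ∧ s < ts (k + 1) ∧ i ≠ j ∧ P s i j ≠ 0)) :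
    -- polarization
    ∀ᵐ x0 : Fin N → ℝ ∂volume, ∃ a : ℝ, a ≠ 0 ∧
      ∀ i, Tendsto (fun t => traj P x0 t i) atTop
        (nhds (if f i then a else -a)) := by
  classical
  obtain ⟨hγ0, hγ1⟩ := hγ
  obtain ⟨⟨i₁, hi₁⟩, ⟨i₂, hi₂⟩⟩ := hfne
  have hi12 : i₁ ≠ i₂ := by
    intro h
    rw [h, hi₂] at hi₁
    exact Bool.noConfusion hi₁
  have hN : 2 ≤ N := by
    have h14 : 1 < Fintype.card (Fin N) :=
      Fintype.one_lt_card_iff_nontrivial.mpr ⟨i₁, i₂, hi12⟩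
    rwa [Fintype.card_fin] at h14
  set sg : Fin N → ℝ := fun i => if f i then 1 else -1 with hsgd
  have hsg2 : ∀ i, sg i * sg i = 1 := by
    intro i
    by_cases h : f i <;> simp [hsgd, h]
  set A : ℕ → Matrix (Fin N) (Fin N) ℝ := fun t => Matrix.of fun i j => |P t i j|
    with hAd
  have hAe : ∀ t i j, A t i j = |P t i j| := fun t i j => rfl
  have hsA : ∀ t i j, sg i * P t i j * sg j = A t i j := by
    intro t i j
    rw [hAe]
    by_cases hz : P t i j = 0
    · simp [hz]
    have hpos : f i = f j → sg i * P t i j * sg j = |P t i j| := by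
      intro hf
      have hP : 0 < P t i j := by
        by_cases hij : i = j
        · subst hij; exact hdiag t i
        · exact (hbal t i j hij hz).mp hf
      have hss : sg i = sg j := by rw [hsgd]; simp only; rw [hf]
      rw [abs_of_pos hP, hss]
      have := hsg2 j
      nlinarith [hsg2 j]
    by_cases hf : f i = f j
    · exact hpos hf
    · have hij : i ≠ j := fun h => hf (by rw [h])
      have hP : P t i j < 0 := by
        rcases lt_trichotomy (P t i j) 0 with h | h | h
        · exact h
        · exact absurd h hz
        · exact absurd ((hbal t i j hij hz).mpr h) hf
      have hss : sg i * sg j = -1 := by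
        rw [hsgd]
        simp only
        cases hfi : f i <;> cases hfj : f j <;> simp [hfi, hfj] at hf ⊢
      rw [abs_of_neg hP]
      nlinarith [hss]
  have h0 : ∀ t i j, 0 ≤ A t i j := fun t i j => abs_nonneg _
  have h1 : ∀ t i, ∑ j, A t i j = 1 := fun t i => habs t i
  have hdA : ∀ t i, γ ≤ A t i i := fun t i => hlow t i i (ne_of_gt (hdiag t i))
  have hlowA : ∀ t i j, A t i j ≠ 0 → γ ≤ A t i j := by
    intro t i j hne
    exact hlow t i j (fun h => hne (by rw [hAe, h, abs_zero]))
  have hjA : ∀ k, StronglyConnected (fun j i : Fin N =>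
      ∃ s, ts k ≤ s ∧ s < ts (k+1) ∧ i ≠ j ∧ A s i j ≠ 0) := by
    intro k
    have he : (fun j i : Fin N => ∃ s, ts k ≤ s ∧ s < ts (k+1) ∧ i ≠ j ∧ A s i j ≠ 0)
        = (fun j i : Fin N => ∃ s, ts k ≤ s ∧ s < ts (k+1) ∧ i ≠ j ∧ P s i j ≠ 0) := by
      funext j i
      apply propext
      constructor <;> rintro ⟨s, hs1, hs2, hs3, hs4⟩ <;>
        exact ⟨s, hs1, hs2, hs3, by simpa [hAe, abs_ne_zero] using hs4⟩
    rw [he]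
    exact hjoint k
  -- gauge-transformed trajectory
  have hyv : ∀ (x0 : Fin N → ℝ) t,
      (fun i => sg i * traj P x0 (t+1) i) = A t *ᵥ (fun i => sg i * traj P x0 t i) := by
    intro x0 t
    funext i
    show sg i * (P t *ᵥ traj P x0 t) i = _
    rw [Matrix.mulVec, dotProduct, Matrix.mulVec, dotProduct, Finset.mul_sum]
    apply Finset.sum_congr rfl
    intro j _
    rw [← hsA t i j]
    linear_combination (-(sg i * P t i j * traj P x0 t j)) * hsg2 j
  have hcon : ∀ x0 : Fin N → ℝ, ∃ c, ∀ i,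
      Tendsto (fun t => sg i * traj P x0 t i) atTop (nhds c) := by
    intro x0
    exact consensus hN A γ hγ0 hγ1.le h0 h1 hdA hlowA ts B hmono hbdd hjA
      (fun t i => sg i * traj P x0 t i) (hyv x0)
  choose g hg using hcon
  have hi0 : 0 < N := by omega
  set i0 : Fin N := ⟨0, hi0⟩ with hi0d
  have htadd : ∀ (x y : Fin N → ℝ) t, traj P (x + y) t = traj P x t + traj P y t := by
    intro x y t
    induction t with
    | zero => rfl
    | succ t ih =>
      show P t *ᵥ traj P (x+y) t = _
      rw [ih, Matrix.mulVec_add]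
      rfl
  have htsmul : ∀ (c : ℝ) (x : Fin N → ℝ) t, traj P (c • x) t = c • traj P x t := by
    intro c x t
    induction t with
    | zero => rfl
    | succ t ih =>
      show P t *ᵥ traj P (c • x) t = _
      rw [ih, Matrix.mulVec_smul]
      rfl
  have hgadd : ∀ x y : Fin N → ℝ, g (x + y) = g x + g y := by
    intro x y
    have h15 := (hg x i0).add (hg y i0)
    have heq : ∀ t, sg i0 * traj P (x+y) t i0
        = sg i0 * traj P x t i0 + sg i0 * traj P y t i0 := by
      intro t
      rw [htadd x y t, Pi.add_apply]
      ring
    have h19 := hg (x+y) i0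
    rw [show (fun t => sg i0 * traj P (x+y) t i0)
        = (fun t => sg i0 * traj P x t i0 + sg i0 * traj P y t i0) from funext heq] at h19
    exact tendsto_nhds_unique h19 h15
  have hgsmul : ∀ (c : ℝ) (x : Fin N → ℝ), g (c • x) = c * g x := by
    intro c x
    have h15 := (hg x i0).const_mul c
    have heq : ∀ t, sg i0 * traj P (c • x) t i0 = c * (sg i0 * traj P x t i0) := by
      intro t
      rw [htsmul c x t, Pi.smul_apply, smul_eq_mul]
      ring
    have h19 := hg (c • x) i0
    rw [show (fun t => sg i0 * traj P (c • x) t i0)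
        = (fun t => c * (sg i0 * traj P x t i0)) from funext heq] at h19
    exact tendsto_nhds_unique h19 h15
  let L : (Fin N → ℝ) →ₗ[ℝ] ℝ :=
    { toFun := g
      map_add' := hgadd
      map_smul' := by intro c x; simpa using hgsmul c x }
  have hgsg : g sg = 1 := by
    have hconst : ∀ t (j : Fin N), sg j * traj P sg t j = 1 := by
      intro t
      induction t with
      | zero => intro j; exact hsg2 j
      | succ t ih =>
        intro j
        show sg j * (P t *ᵥ traj P sg t) j = 1
        rw [Matrix.mulVec, dotProduct, Finset.mul_sum]
        have h16 : ∀ k ∈ Finset.univ, sg j * (P t j k * traj P sg t k) = A t j k := by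
          intro k _
          rw [← hsA t j k]
          linear_combination (sg j * P t j k * sg k) * ih k
            - (sg j * P t j k * traj P sg t k) * hsg2 k
        rw [Finset.sum_congr rfl h16, h1]
    have h17 : Tendsto (fun t => sg i0 * traj P sg t i0) atTop (nhds 1) := by
      rw [show (fun t => sg i0 * traj P sg t i0) = fun _ => (1:ℝ)
        from funext fun t => hconst t i0]
      exact tendsto_const_nhds
    exact tendsto_nhds_unique (hg sg i0) h17
  have hker : LinearMap.ker L ≠ ⊤ := by
    intro h
    have h18 : L sg = 0 := by
      rw [← LinearMap.mem_ker, h]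
      trivial
    rw [show L sg = g sg from rfl, hgsg] at h18
    exact one_ne_zero h18
  have hmeas0 : volume ((LinearMap.ker L : Submodule ℝ (Fin N → ℝ)) : Set (Fin N → ℝ)) = 0 :=
    Measure.addHaar_submodule _ _ hker
  rw [ae_iff]
  apply measure_mono_null _ hmeas0
  intro x0 hx0
  simp only [Set.mem_setOf_eq] at hx0
  show x0 ∈ (LinearMap.ker L : Submodule ℝ (Fin N → ℝ))
  by_contra hk
  have hgne : g x0 ≠ 0 := by simpa [L, LinearMap.mem_ker] using hk
  apply hx0
  refine ⟨g x0, hgne, fun i => ?_⟩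
  have h18 := (hg x0 i).const_mul (sg i)
  have heq : (fun t => sg i * (sg i * traj P x0 t i)) = fun t => traj P x0 t i := by
    funext t
    linear_combination (traj P x0 t i) * hsg2 i
  rw [heq] at h18
  have hval : sg i * g x0 = if f i then g x0 else -(g x0) := by
    by_cases hf : f i <;> simp [hsgd, hf]
  rw [hval] at h18
  exact h18
end

section
/- Let (P(t))_{t≥0} be matrices with positive diagonals, |P(t)| row-stochastic, and nonzero entries bounded below in modulus by γ > 0. Assume there exists an infinite sequence of uniformly bounded intervals [t_i, t_{i+1}) such that over each interval the union of the graphs G(P(t)) is strongly connected and there is NO bipartition of the vertex set (allowing one empty part) such that for each graph in the interval all edges between the parts are negative and all edges within parts are positive. Then every solution of x(t+1) = P(t)x(t) converges to the zero vector. -/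
open Matrix Filter

open scoped Classical

namespace Stmt13Aux

open Relation

variable {N : ℕ} (P : ℕ → Matrix (Fin N) (Fin N) ℝ)

noncomputable def Q (t : ℕ) (v w : Fin N × Bool) : ℝ :=
  if ((v.2 = w.2) ↔ 0 < P t v.1 w.1) then |P t v.1 w.1| else 0

noncomputable def lif (x0 : Fin N → ℝ) (t : ℕ) (v : Fin N × Bool) : ℝ :=
  if v.2 then traj P x0 t v.1 else -(traj P x0 t v.1)

lemma Q_nonneg (t : ℕ) (v w : Fin N × Bool) : 0 ≤ Q P t v w := by
  unfold Q; split
  · exact abs_nonneg _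
  · exact le_rfl

lemma Q_pair (t : ℕ) (v : Fin N × Bool) (j : Fin N) :
    Q P t v (j, true) + Q P t v (j, false) = |P t v.1 j| := by
  unfold Q
  by_cases hp : 0 < P t v.1 j <;> cases hb : v.2 <;> simp [hp, hb]

lemma Q_rowsum (habs : ∀ t i, ∑ j, |P t i j| = 1) (t : ℕ) (v : Fin N × Bool) :
    ∑ w, Q P t v w = 1 := by
  rw [Fintype.sum_prod_type]
  calc ∑ j : Fin N, ∑ b : Bool, Q P t v (j, b)
      = ∑ j : Fin N, |P t v.1 j| := by
        refine Finset.sum_congr rfl fun j _ => ?_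
        rw [Fintype.sum_bool, Q_pair]
    _ = 1 := habs t v.1

lemma lif_step (x0 : Fin N → ℝ) (t : ℕ) (v : Fin N × Bool) :
    lif P x0 (t + 1) v = ∑ j, P t v.1 j * lif P x0 t (j, v.2) := by
  cases hb : v.2 <;> simp [lif, hb, traj, Matrix.mulVec, dotProduct,
    Finset.sum_neg_distrib, mul_neg]

lemma Q_mul (x0 : Fin N → ℝ) (t : ℕ) (v : Fin N × Bool) (j : Fin N) :
    Q P t v (j, true) * lif P x0 t (j, true) + Q P t v (j, false) * lif P x0 t (j, false)
      = P t v.1 j * lif P x0 t (j, v.2) := by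
  rcases lt_trichotomy (P t v.1 j) 0 with hp | hp | hp
  · have h1 : ¬ (0 < P t v.1 j) := by linarith
    cases hb : v.2 <;>
      simp [Q, lif, hb, h1, abs_of_neg hp]
  · simp [Q, lif, hp]
  · cases hb : v.2 <;>
      simp [Q, lif, hb, hp, abs_of_pos hp]

lemma lif_rec (habs : ∀ t i, ∑ j, |P t i j| = 1) (x0 : Fin N → ℝ) (t : ℕ) (v : Fin N × Bool) :
    lif P x0 (t + 1) v = ∑ w, Q P t v w * lif P x0 t w := by
  rw [lif_step, Fintype.sum_prod_type]
  refine Finset.sum_congr rfl fun j _ => ?_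
  rw [Fintype.sum_bool, Q_mul]

lemma Q_ge {γ : ℝ} (hlow : ∀ t i j, P t i j ≠ 0 → γ ≤ |P t i j|) (t : ℕ)
    (v w : Fin N × Bool) (h : Q P t v w ≠ 0) : γ ≤ Q P t v w := by
  by_cases hc : ((v.2 = w.2) ↔ 0 < P t v.1 w.1)
  · rw [Q, if_pos hc] at h ⊢
    exact hlow _ _ _ (abs_ne_zero.mp h)
  · rw [Q, if_neg hc] at h
    exact absurd rfl h

lemma Q_diag (hdiag : ∀ t i, 0 < P t i i) (t : ℕ) (v : Fin N × Bool) :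
    Q P t v v = |P t v.1 v.1| := by
  rw [Q, if_pos]
  simp [hdiag t v.1]

/-- key inequality: propagation of a gap above a lower bound -/
lemma key_step {γ : ℝ} (hγ : 0 < γ) (habs : ∀ t i, ∑ j, |P t i j| = 1)
    (hlow : ∀ t i j, P t i j ≠ 0 → γ ≤ |P t i j|)
    (x0 : Fin N → ℝ) (t : ℕ) (v w : Fin N × Bool) (hQ : Q P t v w ≠ 0)
    (m d : ℝ) (hd : 0 ≤ d) (hm : ∀ u, m ≤ lif P x0 t u)
    (hw : m + d ≤ lif P x0 t w) :
    m + γ * d ≤ lif P x0 (t + 1) v := by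
  rw [lif_rec P habs]
  have hQγ : γ ≤ Q P t v w := Q_ge P hlow t v w hQ
  have h1 : ∑ u, Q P t v u * (m + if u = w then d else 0)
      ≤ ∑ u, Q P t v u * lif P x0 t u := by
    refine Finset.sum_le_sum fun u _ => mul_le_mul_of_nonneg_left ?_ (Q_nonneg P t v u)
    by_cases hu : u = w
    · subst hu; simpa using hw
    · simpa [hu] using hm u
  have h2 : ∑ u, Q P t v u * (m + if u = w then d else 0)
      = m + Q P t v w * d := by
    have : ∀ u : Fin N × Bool, Q P t v u * (m + if u = w then d else 0)
        = Q P t v u * m + (if u = w then Q P t v u * d else 0) := by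
      intro u; by_cases hu : u = w <;> simp [hu] <;> ring
    rw [Finset.sum_congr rfl fun u _ => this u, Finset.sum_add_distrib,
      ← Finset.sum_mul, Q_rowsum P habs, one_mul,
      Finset.sum_ite_eq' Finset.univ w (fun u => Q P t v u * d)]
    simp
  have h3 : γ * d ≤ Q P t v w * d := mul_le_mul_of_nonneg_right hQγ hd
  linarith [h1, h2.symm.trans_le h1]

/-- first exit edge from a set along a walk -/
lemma exists_exit {α : Type*} {r : α → α → Prop} {p : α → Prop} {a b : α}
    (h : ReflTransGen r a b) (ha : p a) : ¬ p b → ∃ u, p u ∧ ∃ v, ¬ p v ∧ r u v := by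
  induction h with
  | refl => exact fun hb => absurd ha hb
  | @tail m c _ e ih =>
    intro hc
    by_cases hm : p m
    · exact ⟨m, hm, c, hc, e⟩
    · exact ih hm

/-- lifted adjacency over a set of times -/
def ladj (A : ℕ → Prop) (w v : Fin N × Bool) : Prop :=
  ∃ s, A s ∧ v.1 ≠ w.1 ∧ P s v.1 w.1 ≠ 0 ∧ ((v.2 = w.2) ↔ 0 < P s v.1 w.1)

lemma ladj_flip {A : ℕ → Prop} {w v : Fin N × Bool} (h : ladj P A w v) :
    ladj P A (w.1, !w.2) (v.1, !v.2) := by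
  obtain ⟨s, hA, hne, h0, hiff⟩ := h
  exact ⟨s, hA, hne, h0, by simpa using hiff⟩

lemma rtg_flip {A : ℕ → Prop} {w v : Fin N × Bool}
    (h : ReflTransGen (ladj P A) w v) :
    ReflTransGen (ladj P A) (w.1, !w.2) (v.1, !v.2) :=
  ReflTransGen.lift (fun u : Fin N × Bool => (u.1, !u.2)) (fun _ _ hab => ladj_flip P hab) _ _ h

lemma walk_lift {A : ℕ → Prop} {a c : Fin N}
    (h : ReflTransGen (fun j i : Fin N => ∃ s, A s ∧ i ≠ j ∧ P s i j ≠ 0) a c) :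
    ∃ ε : Bool, ∀ b : Bool, ReflTransGen (ladj P A) (a, b) (c, xor b ε) := by
  induction h with
  | refl => exact ⟨false, fun b => by simpa using ReflTransGen.refl⟩
  | @tail m c' _ e ih =>
    obtain ⟨ε, hε⟩ := ih
    obtain ⟨s, hA, hne, h0⟩ := e
    by_cases hp : 0 < P s c' m
    · exact ⟨ε, fun b => (hε b).tail ⟨s, hA, hne, h0, by simp [hp]⟩⟩
    · refine ⟨!ε, fun b => (hε b).tail ⟨s, hA, hne, h0, ?_⟩⟩
      simp only [hp, iff_false]
      cases b <;> cases ε <;> simp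

theorem lifted_sc (A : ℕ → Prop)
    (hsc : StronglyConnected (fun j i : Fin N => ∃ s, A s ∧ i ≠ j ∧ P s i j ≠ 0))
    (hnb : ¬ ∃ f : Fin N → Bool, ∀ s, A s →
      ∀ i j, i ≠ j → P s i j ≠ 0 → (f i = f j ↔ 0 < P s i j)) :
    StronglyConnected (ladj P A) := by
  rcases isEmpty_or_nonempty (Fin N) with hE | hNE
  · exact absurd ⟨fun i => isEmptyElim i, fun s _ i => isEmptyElim i⟩ hnb
  by_cases hNeg : ∃ a : Fin N, ReflTransGen (ladj P A) (a, true) (a, false)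
  · obtain ⟨a, haa⟩ := hNeg
    have haa' : ReflTransGen (ladj P A) (a, false) (a, true) := by
      simpa using rtg_flip P haa
    have hboth : ∀ s s' : Bool, ReflTransGen (ladj P A) (a, s) (a, s') := by
      intro s s'; cases s <;> cases s'
      · exact ReflTransGen.refl
      · exact haa'
      · exact haa
      · exact ReflTransGen.refl
    rintro ⟨v1, v2⟩ ⟨w1, w2⟩
    obtain ⟨ε1, h1⟩ := walk_lift P (hsc v1 a)
    obtain ⟨ε2, h2⟩ := walk_lift P (hsc a w1)
    have h2' := h2 (xor w2 ε2)
    have : xor (xor w2 ε2) ε2 = w2 := by cases w2 <;> cases ε2 <;> rfl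
    rw [this] at h2'
    exact ((h1 v2).trans (hboth _ _)).trans h2'
  · exfalso
    push_neg at hNeg
    have hfix : ∀ (x : Fin N) (b d : Bool),
        ReflTransGen (ladj P A) (x, b) (x, d) → d = b := by
      intro x b d h
      by_contra hd
      have hd' : d = !b := by cases b <;> cases d <;> simp_all
      subst hd'
      cases b
      · exact hNeg x (by simpa using rtg_flip P h)
      · exact hNeg x h
    have huniq : ∀ (x : Fin N) (b : Bool) (y : Fin N) (c c' : Bool),
        ReflTransGen (ladj P A) (x, b) (y, c) →
        ReflTransGen (ladj P A) (x, b) (y, c') → c = c' := by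
      intro x b y c c' h h'
      obtain ⟨δ, hδ⟩ := walk_lift P (hsc y x)
      have e1 : xor c δ = b := hfix x b _ (h.trans (hδ c))
      have e2 : xor c' δ = b := hfix x b _ (h'.trans (hδ c'))
      have := e1.trans e2.symm
      cases δ <;> cases c <;> cases c' <;> simp_all
    obtain ⟨r⟩ := hNE
    have hex : ∀ i : Fin N, ∃ c : Bool, ReflTransGen (ladj P A) (r, true) (i, c) :=
      fun i => (walk_lift P (hsc r i)).elim (fun ε hε => ⟨_, hε true⟩)
    set f : Fin N → Bool := fun i => Classical.choose (hex i) with hf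
    have hreach : ∀ i, ReflTransGen (ladj P A) (r, true) (i, f i) :=
      fun i => Classical.choose_spec (hex i)
    refine hnb ⟨f, fun s hA i j hij h0 => ?_⟩
    by_cases hp : 0 < P s i j
    · have hre : ReflTransGen (ladj P A) (r, true) (i, f j) :=
        (hreach j).tail ⟨s, hA, hij, h0, by simp [hp]⟩
      have := huniq r true i (f i) (f j) (hreach i) hre
      simp [this, hp]
    · have hre : ReflTransGen (ladj P A) (r, true) (i, !(f j)) :=
        (hreach j).tail ⟨s, hA, hij, h0, by simp [hp]⟩
      have heq := huniq r true i (f i) (!(f j)) (hreach i) hre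
      constructor
      · intro hx; rw [heq] at hx; exact absurd hx (by cases f j <;> simp)
      · intro hx; exact absurd hx hp

end Stmt13Aux

open Stmt13Aux Relation in
theorem stmt13 {N : ℕ} (P : ℕ → Matrix (Fin N) (Fin N) ℝ) (γ : ℝ) (hγ : 0 < γ)
    (habs : ∀ t i, ∑ j, |P t i j| = 1) (hdiag : ∀ t i, 0 < P t i i)
    (hlow : ∀ t i j, P t i j ≠ 0 → γ ≤ |P t i j|)
    (ts : ℕ → ℕ) (B : ℕ) (hts0 : ts 0 = 0) (hmono : ∀ k, ts k < ts (k + 1))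
    (hbdd : ∀ k, ts (k + 1) - ts k ≤ B)
    -- over each interval the union graph is strongly connected
    (hjoint : ∀ k, StronglyConnected (fun j i : Fin N =>
      ∃ s, ts k ≤ s ∧ s < ts (k + 1) ∧ i ≠ j ∧ P s i j ≠ 0))
    -- no bipartition (one part possibly empty) works simultaneously for all
    -- graphs of the interval
    (hnobal : ∀ k, ¬ ∃ f : Fin N → Bool, ∀ s, ts k ≤ s → s < ts (k + 1) →
      ∀ i j, i ≠ j → P s i j ≠ 0 → (f i = f j ↔ 0 < P s i j)) :
    ∀ x0 : Fin N → ℝ, Tendsto (fun t => traj P x0 t) atTop (nhds 0) := by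
  intro x0
  rcases Nat.eq_zero_or_pos N with hN0 | hN
  · subst hN0
    exact absurd ⟨fun i => i.elim0, fun s _ _ i => i.elim0⟩ (hnobal 0)
  haveI : Nonempty (Fin N) := Fin.pos_iff_nonempty.mp hN
  -- lifted strong connectivity of each interval
  have hlsc : ∀ k, StronglyConnected
      (ladj P (fun s => ts k ≤ s ∧ s < ts (k + 1))) := by
    intro k
    refine lifted_sc P _ (fun a b => ?_) ?_
    · exact ReflTransGen.mono
        (fun x y ⟨s, h1, h2, h3, h4⟩ => ⟨s, ⟨h1, h2⟩, h3, h4⟩) _ _ (hjoint k a b)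
    · rintro ⟨f, hf⟩
      exact hnobal k ⟨f, fun s h1 h2 i j => hf s ⟨h1, h2⟩ i j⟩
  set y : ℕ → Fin N × Bool → ℝ := lif P x0 with hy
  have huniv : (Finset.univ : Finset (Fin N × Bool)).Nonempty := Finset.univ_nonempty
  set W : ℕ → ℝ := fun t => Finset.univ.sup' huniv (y t) with hWdef
  have hyW : ∀ t v, y t v ≤ W t := fun t v => Finset.le_sup' _ (Finset.mem_univ v)
  have hflip : ∀ t (v : Fin N × Bool), y t (v.1, !v.2) = - y t v := by
    rintro t ⟨i, b⟩; cases b <;> simp [hy, lif]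
  have hlb : ∀ t v, -(W t) ≤ y t v := by
    rintro t ⟨i, b⟩
    have h := hyW t (i, !b)
    have h2 : y t (i, !b) = - y t (i, b) := hflip t (i, b)
    rw [h2] at h
    linarith
  have hWnn : ∀ t, 0 ≤ W t := by
    intro t
    obtain ⟨v⟩ : Nonempty (Fin N × Bool) := inferInstance
    have h1 := hyW t v
    have h2 := hlb t v
    linarith
  have hQrs : ∀ t (v : Fin N × Bool), ∑ w, Q P t v w = 1 := Q_rowsum P habs
  have hstep_le : ∀ t v, y (t + 1) v ≤ W t := by
    intro t v
    rw [hy, lif_rec P habs]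
    calc ∑ w, Q P t v w * lif P x0 t w
        ≤ ∑ w, Q P t v w * W t :=
          Finset.sum_le_sum fun w _ =>
            mul_le_mul_of_nonneg_left (hyW t w) (Q_nonneg P t v w)
      _ = W t := by rw [← Finset.sum_mul, hQrs, one_mul]
  have hWanti : Antitone W := antitone_nat_of_succ_le fun t =>
    Finset.sup'_le _ _ fun v _ => hstep_le t v
  have hγ1 : γ ≤ 1 := by
    obtain ⟨v⟩ : Nonempty (Fin N × Bool) := inferInstance
    have h1 : γ ≤ Q P 0 v v := by
      rw [Q_diag P hdiag]
      exact hlow _ _ _ (ne_of_gt (hdiag 0 v.1))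
    have h2 : Q P 0 v v ≤ 1 := by
      rw [← hQrs 0 v]
      exact Finset.single_le_sum (fun w _ => Q_nonneg P 0 v w) (Finset.mem_univ v)
    linarith
  have hts_mono : StrictMono ts := strictMono_nat_of_lt_succ hmono
  have hts_le : ∀ k j, ts (k + j) ≤ ts k + j * B := by
    intro k j
    induction j with
    | zero => simp
    | succ j ih =>
      have h1 := hbdd (k + j)
      have h2 := hmono (k + j)
      have h3 : ts (k + (j + 1)) = ts (k + j + 1) := by ring_nf
      have h4 : (j + 1) * B = j * B + B := by ring
      omega
  set L : ℕ := (2 * N - 1) * B with hL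
  set ρ : ℝ := 1 - 2 * γ ^ L with hρ
  -- contraction over each window of 2N-1 intervals
  have hcontr : ∀ k0, W (ts (k0 + (2 * N - 1))) ≤ ρ * W (ts k0) := by
    intro k0
    set T0 := ts k0 with hT0
    set D : ℝ := 2 * W T0 with hD
    set m : ℝ := -(W T0) with hm
    set G : ℕ → Fin N × Bool → Prop :=
      fun t v => m + γ ^ (t - T0) * D ≤ y t v with hG
    have hmlb : ∀ t, T0 ≤ t → ∀ u, m ≤ y t u := by
      intro t ht u
      have h1 := hWanti ht
      have h2 := hlb t u
      rw [hm]; linarith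
    have hDnn : 0 ≤ D := by rw [hD]; have := hWnn T0; linarith
    have hGstep : ∀ t, T0 ≤ t → ∀ v w, Q P t v w ≠ 0 → G t w → G (t + 1) v := by
      intro t ht v w hQ hw
      have hd : 0 ≤ γ ^ (t - T0) * D := mul_nonneg (pow_nonneg hγ.le _) hDnn
      have hk := key_step P hγ habs hlow x0 t v w hQ m (γ ^ (t - T0) * D) hd
        (hmlb t ht) hw
      have he : t + 1 - T0 = (t - T0) + 1 := by omega
      show m + γ ^ (t + 1 - T0) * D ≤ y (t + 1) v
      rw [he, pow_succ]
      calc m + γ ^ (t - T0) * γ * D = m + γ * (γ ^ (t - T0) * D) := by ring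
        _ ≤ y (t + 1) v := hk
    have hGdiag : ∀ t (v : Fin N × Bool), Q P t v v ≠ 0 := by
      intro t v
      rw [Q_diag P hdiag]
      exact ne_of_gt (lt_of_lt_of_le hγ (hlow _ _ _ (ne_of_gt (hdiag t v.1))))
    have hGpersist : ∀ (v : Fin N × Bool) t1 t2, T0 ≤ t1 → t1 ≤ t2 →
        G t1 v → G t2 v := by
      intro v t1 t2 h1 h12 hGv
      induction t2, h12 using Nat.le_induction with
      | base => exact hGv
      | succ t2 h12 ih =>
        exact hGstep t2 (h1.trans h12) v v (hGdiag t2 v) ih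
    obtain ⟨vmax, -, hvmax⟩ := Finset.exists_mem_eq_sup' huniv (y T0)
    have hvmax' : W T0 = y T0 vmax := hvmax
    have hG0 : G T0 vmax := by
      show m + γ ^ (T0 - T0) * D ≤ y T0 vmax
      simp only [Nat.sub_self, pow_zero, one_mul]
      rw [hm, hD, ← hvmax']
      linarith
    set S : ℕ → Finset (Fin N × Bool) :=
      fun n => Finset.univ.filter (G (ts (k0 + n))) with hS
    have hT0le : ∀ n, T0 ≤ ts (k0 + n) := fun n =>
      hts_mono.monotone (Nat.le_add_right k0 n)
    have hSsub : ∀ n, S n ⊆ S (n + 1) := by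
      intro n v hv
      rw [hS] at hv ⊢
      rw [Finset.mem_filter] at hv ⊢
      exact ⟨Finset.mem_univ v,
        hGpersist v _ _ (hT0le n) (hts_mono.monotone (by omega)) hv.2⟩
    have hvS : ∀ n, vmax ∈ S n := by
      intro n
      induction n with
      | zero =>
        rw [hS, Finset.mem_filter]
        exact ⟨Finset.mem_univ _, by simpa using hG0⟩
      | succ n ih => exact hSsub n ih
    have hSgrow : ∀ n, S n ≠ Finset.univ → (S n).card + 1 ≤ (S (n + 1)).card := by
      intro n hne
      have hb : ∃ b, b ∉ S n := by
        by_contra hbb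
        push_neg at hbb
        exact hne (Finset.eq_univ_iff_forall.mpr hbb)
      obtain ⟨b, hbn⟩ := hb
      have hw := hlsc (k0 + n) vmax b
      obtain ⟨u, hu, v, hv, he⟩ := exists_exit hw (hvS n) hbn
      obtain ⟨s, ⟨hs1, hs2⟩, hne', h0, hiff⟩ := he
      have hQne : Q P s v u ≠ 0 := by
        rw [Q, if_pos hiff]
        exact abs_ne_zero.mpr h0
      have hGu : G (ts (k0 + n)) u := by
        have := hu; rw [hS, Finset.mem_filter] at this; exact this.2
      have hGv : G (ts (k0 + (n + 1))) v := by
        have g1 : G s u := hGpersist u _ s (hT0le n) hs1 hGu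
        have g2 : G (s + 1) v := hGstep s ((hT0le n).trans hs1) v u hQne g1
        have hE : ts (k0 + (n + 1)) = ts (k0 + n + 1) := rfl
        exact hGpersist v (s + 1) _ ((hT0le n).trans (by omega)) (by omega) g2
      have hvmem : v ∈ S (n + 1) := by
        rw [hS, Finset.mem_filter]; exact ⟨Finset.mem_univ _, hGv⟩
      have hss : S n ⊂ S (n + 1) :=
        (Finset.ssubset_iff_of_subset (hSsub n)).mpr ⟨v, hvmem, hv⟩
      exact Nat.succ_le_of_lt (Finset.card_lt_card hss)
    have hcard : ∀ n, S n = Finset.univ ∨ n + 1 ≤ (S n).card := by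
      intro n
      induction n with
      | zero => exact Or.inr (Finset.card_pos.mpr ⟨vmax, hvS 0⟩)
      | succ n ih =>
        by_cases hu : S n = Finset.univ
        · left
          exact Finset.univ_subset_iff.mp (hu ▸ hSsub n)
        · rcases ih with h | h
          · exact absurd h hu
          · have := hSgrow n hu
            exact Or.inr (by omega)
    have hfull : ∀ v : Fin N × Bool, G (ts (k0 + (2 * N - 1))) v := by
      have hSn : S (2 * N - 1) = Finset.univ := by
        rcases hcard (2 * N - 1) with h | h
        · exact h
        · apply Finset.eq_univ_of_card
          have hcu : Fintype.card (Fin N × Bool) = 2 * N := by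
            simp [mul_comm]
          have hle := Finset.card_le_univ (S (2 * N - 1))
          omega
      intro v
      have hv : v ∈ S (2 * N - 1) := hSn ▸ Finset.mem_univ v
      rw [hS, Finset.mem_filter] at hv
      exact hv.2
    obtain ⟨vm, -, hvm⟩ :=
      Finset.exists_mem_eq_sup' huniv (y (ts (k0 + (2 * N - 1))))
    set T1 := ts (k0 + (2 * N - 1)) with hT1
    have hvm' : W T1 = y T1 vm := hvm
    have hfv : m + γ ^ (T1 - T0) * D ≤ y T1 (vm.1, !vm.2) := hfull (vm.1, !vm.2)
    rw [hflip, ← hvm'] at hfv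
    have hpow : γ ^ L ≤ γ ^ (T1 - T0) := by
      apply pow_le_pow_of_le_one hγ.le hγ1
      have := hts_le k0 (2 * N - 1)
      omega
    have h2 : 2 * γ ^ L * W T0 ≤ 2 * γ ^ (T1 - T0) * W T0 := by
      have := hWnn T0
      nlinarith
    rw [hρ, hm, hD] at *
    nlinarith [hfv, h2]
  -- geometric decay along the subsequence, then squeeze
  set c : ℝ := max ρ 0 with hc
  have hc0 : 0 ≤ c := le_max_right ρ 0
  have hc1 : c < 1 := by
    apply max_lt _ one_pos
    rw [hρ]
    have : 0 < γ ^ L := pow_pos hγ L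
    linarith
  have hseq : ∀ n, W (ts ((2 * N - 1) * n)) ≤ c ^ n * W 0 := by
    intro n
    induction n with
    | zero => simp [hts0]
    | succ n ih =>
      have he : (2 * N - 1) * (n + 1) = (2 * N - 1) * n + (2 * N - 1) := by ring
      rw [he]
      calc W (ts ((2 * N - 1) * n + (2 * N - 1)))
          ≤ ρ * W (ts ((2 * N - 1) * n)) := hcontr _
        _ ≤ c * W (ts ((2 * N - 1) * n)) :=
            mul_le_mul_of_nonneg_right (le_max_left ρ 0) (hWnn _)
        _ ≤ c * (c ^ n * W 0) := mul_le_mul_of_nonneg_left ih hc0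
        _ = c ^ (n + 1) * W 0 := by ring
  have hWto0 : Tendsto W atTop (nhds 0) := by
    rw [Metric.tendsto_atTop]
    intro ε hε
    have hcpow : Tendsto (fun n => c ^ n * W 0) atTop (nhds 0) := by
      simpa using (tendsto_pow_atTop_nhds_zero_of_lt_one hc0 hc1).mul_const (W 0)
    obtain ⟨n, hn⟩ := (hcpow.eventually (gt_mem_nhds hε)).exists
    refine ⟨ts ((2 * N - 1) * n), fun t ht => ?_⟩
    rw [Real.dist_eq, sub_zero, abs_of_nonneg (hWnn t)]
    calc W t ≤ W (ts ((2 * N - 1) * n)) := hWanti ht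
      _ ≤ c ^ n * W 0 := hseq n
      _ < ε := hn
  rw [tendsto_pi_nhds]
  intro i
  simp only [Pi.zero_apply]
  have hb : ∀ t, ‖traj P x0 t i‖ ≤ W t := by
    intro t
    rw [Real.norm_eq_abs, abs_le]
    constructor
    · have h := hlb t (i, true); simpa [hy, lif] using h
    · have h := hyW t (i, true); simpa [hy, lif] using h
  exact squeeze_zero_norm hb hWto0
end
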